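/- arXiv:1707.05126 — 6 statements merged into one kernel-verified Lean document; each statement's English description precedes it below -/
import Mathlib

section
/- If f(z) = z + Σ_{n≥2} a_n z^n is analytic on the unit disk U and Σ_{n≥2} (1+(n-1)γ)(n-α-(n-1)αβ)|a_n| ≤ 1-α, then Re[ (z f'(z) + γ z² f''(z)) / (γ z (f'(z) + β z f''(z)) + (1-γ)(β z f'(z) + (1-β) f(z))) ] > α for all z ∈ U. -/
open Complex Topology Filter

private lemma sumgeo {ρ : ℝ} (hρ0 : 0 ≤ ρ) (hρ1 : ρ < 1) :
    Summable (fun n : ℕ => (((n : ℝ) + 2) * ((n : ℝ) + 1)) * ρ ^ n) := by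
  have hρ : ‖ρ‖ < 1 := by rwa [Real.norm_eq_abs, _root_.abs_of_nonneg hρ0]
  have h2 := summable_pow_mul_geometric_of_norm_lt_one (R := ℝ) 2 hρ
  have h1 := summable_pow_mul_geometric_of_norm_lt_one (R := ℝ) 1 hρ
  have h0 := summable_pow_mul_geometric_of_norm_lt_one (R := ℝ) 0 hρ
  have := (h2.add (h1.mul_left 3)).add (h0.mul_left 2)
  exact this.congr (fun n => by ring)

private lemma hasDerivAt_pow_series {c : ℕ → ℂ} {k : ℕ} {u : ℕ → ℝ}
    (hu : Summable u) {ρ : ℝ}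
    (hbd : ∀ n : ℕ, ((n : ℝ) + k + 1) * ‖c n‖ * ρ ^ (n + k) ≤ u n)
    {z : ℂ} (hz : ‖z‖ < ρ) :
    HasDerivAt (fun w : ℂ => ∑' n : ℕ, c n * w ^ (n + k + 1))
      (∑' n : ℕ, ((n : ℂ) + k + 1) * c n * z ^ (n + k)) z := by
  have hρ0 : 0 < ρ := lt_of_le_of_lt (norm_nonneg z) hz
  refine hasDerivAt_tsum_of_isPreconnected (u := u) hu
    (Metric.isOpen_ball (x := (0:ℂ)) (ε := ρ))
    ((convex_ball (0:ℂ) ρ).isPreconnected)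
    (g' := fun n y => ((n : ℂ) + k + 1) * c n * y ^ (n + k))
    (fun n y _ => ?_) (fun n y hy => ?_) (y₀ := 0) (by simpa using hρ0)
    (by simpa using summable_zero) ?_
  · have h := (hasDerivAt_pow (n + k + 1) y).const_mul (c n)
    refine h.congr_deriv ?_
    have : n + k + 1 - 1 = n + k := by omega
    rw [this]
    push_cast
    ring
  · rw [Metric.mem_ball, dist_zero_right] at hy
    have h1 : ‖((n : ℂ) + k + 1) * c n * y ^ (n + k)‖
        = ((n : ℝ) + k + 1) * ‖c n‖ * ‖y‖ ^ (n + k) := by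
      rw [norm_mul, norm_mul, norm_pow]
      congr 2
      have : ((n : ℂ) + k + 1) = (((n : ℝ) + k + 1 : ℝ) : ℂ) := by push_cast; ring
      rw [this, Complex.norm_real, Real.norm_eq_abs, _root_.abs_of_nonneg (by positivity)]
    rw [h1]
    refine le_trans ?_ (hbd n)
    exact mul_le_mul_of_nonneg_left (pow_le_pow_left₀ (norm_nonneg y) hy.le _) (by positivity)
  · rwa [Metric.mem_ball, dist_zero_right]

set_option maxHeartbeats 2000000 in
theorem stmt0 (α β γ : ℝ) (hα0 : 0 ≤ α) (hα1 : α < 1) (hβ0 : 0 ≤ β) (hβ1 : β < 1)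
    (hγ0 : 0 ≤ γ) (hγ1 : γ ≤ 1) (f : ℂ → ℂ) (a : ℕ → ℂ)
    (hf : ∀ z ∈ Metric.ball (0 : ℂ) 1,
      HasSum (fun n : ℕ => a (n + 2) * z ^ (n + 2)) (f z - z))
    (hsum : Summable (fun n : ℕ =>
      (1 + ((n : ℝ) + 1) * γ) * (((n : ℝ) + 2) - α - ((n : ℝ) + 1) * α * β) * ‖a (n + 2)‖))
    (hle : ∑' n : ℕ,
      (1 + ((n : ℝ) + 1) * γ) * (((n : ℝ) + 2) - α - ((n : ℝ) + 1) * α * β) * ‖a (n + 2)‖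
        ≤ 1 - α) :
    ∀ z ∈ Metric.ball (0 : ℂ) 1, z ≠ 0 →
      α < (((z * deriv f z + (γ : ℂ) * z ^ 2 * deriv (deriv f) z) /
        ((γ : ℂ) * z * (deriv f z + (β : ℂ) * z * deriv (deriv f) z) +
          (1 - (γ : ℂ)) * ((β : ℂ) * z * deriv f z + (1 - (β : ℂ)) * f z))).re) := by
  have h1α : (0:ℝ) < 1 - α := by linarith
  -- pointwise weight bound
  have hcast : ∀ n : ℕ, (0:ℝ) ≤ (n:ℝ) := fun n => Nat.cast_nonneg n
  have hTnn : ∀ n : ℕ, (1 - α) * (((n:ℝ)+2) * ‖a (n+2)‖) ≤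
      (1 + ((n : ℝ) + 1) * γ) * (((n : ℝ) + 2) - α - ((n : ℝ) + 1) * α * β) * ‖a (n + 2)‖ := by
    intro n
    have hn := hcast n
    have h0 : (0:ℝ) ≤ ‖a (n+2)‖ := norm_nonneg _
    have h2 : (1 - α) * ((n:ℝ)+2) ≤ ((n:ℝ)+2) - α - ((n:ℝ)+1)*α*β := by
      nlinarith [mul_nonneg (mul_nonneg (by linarith : (0:ℝ) ≤ (n:ℝ)+1) hα0)
        (by linarith : (0:ℝ) ≤ 1 - β)]
    have h3 : (0:ℝ) ≤ ((n:ℝ)+2) - α - ((n:ℝ)+1)*α*β := by nlinarith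
    nlinarith [mul_le_mul_of_nonneg_right h2 h0, mul_nonneg h3 h0, mul_nonneg (mul_nonneg h3 h0) (mul_nonneg (add_nonneg hn (by norm_num : (0:ℝ) ≤ 1)) hγ0)]
  have hTpos : ∀ n : ℕ, (0:ℝ) ≤
      (1 + ((n : ℝ) + 1) * γ) * (((n : ℝ) + 2) - α - ((n : ℝ) + 1) * α * β) * ‖a (n + 2)‖ := by
    intro n
    have := hTnn n
    have hn := hcast n
    have h0 : (0:ℝ) ≤ ‖a (n+2)‖ := norm_nonneg _
    nlinarith [mul_nonneg h1α.le (mul_nonneg (by linarith : (0:ℝ) ≤ (n:ℝ)+2) h0)]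
  have S1 : Summable (fun n : ℕ => ((n:ℝ)+2) * ‖a (n+2)‖) := by
    refine Summable.of_nonneg_of_le (fun n => by positivity) (fun n => ?_) (hsum.mul_left (1-α)⁻¹)
    rw [inv_mul_eq_div, le_div_iff₀ h1α]
    nlinarith [hTnn n]
  set M := ∑' n : ℕ, ((n:ℝ)+2) * ‖a (n+2)‖ with hMdef
  have hAM : ∀ n : ℕ, ‖a (n+2)‖ ≤ M := by
    intro n
    have h := S1.le_tsum n (fun m _ => by positivity)
    have h2 : ‖a (n+2)‖ ≤ ((n:ℝ)+2)*‖a (n+2)‖ := by nlinarith [norm_nonneg (a (n+2)), hcast n]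
    exact h2.trans h
  intro z hz hz0
  have hz1 : ‖z‖ < 1 := by rwa [Metric.mem_ball, dist_zero_right] at hz
  have hzpos : 0 < ‖z‖ := norm_pos_iff.mpr hz0
  -- helper for norms of real-cast multiples
  have hnr : ∀ (t : ℝ), 0 ≤ t → ∀ (w : ℂ), ‖(t:ℂ) * w‖ = t * ‖w‖ := by
    intro t ht w
    rw [norm_mul, Complex.norm_real, Real.norm_eq_abs, _root_.abs_of_nonneg ht]
  -- f equals its series on the ball
  have hfw : ∀ w ∈ Metric.ball (0:ℂ) 1, f w = w + ∑' n : ℕ, a (n+2) * w^(n+2) := by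
    intro w hw
    have h := (hf w hw).tsum_eq
    rw [h]; ring
  -- first derivative
  have hFd : ∀ w ∈ Metric.ball (0:ℂ) 1,
      HasDerivAt (fun w : ℂ => ∑' n : ℕ, a (n+2) * w^(n+2))
        (∑' n : ℕ, ((n:ℂ)+2) * a (n+2) * w^(n+1)) w := by
    intro w hw
    rw [Metric.mem_ball, dist_zero_right] at hw
    have h := hasDerivAt_pow_series (c := fun n => a (n+2)) (k := 1)
      (u := fun n => ((n:ℝ)+2)*‖a (n+2)‖) S1 (fun n => ?_) hw
    · convert h using 1
      exact tsum_congr fun n => by push_cast; ring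
    · have : (1:ℝ)^(n+1) = 1 := one_pow _
      rw [this]
      push_cast
      nlinarith [norm_nonneg (a (n+2))]
  have hf1 : ∀ w ∈ Metric.ball (0:ℂ) 1,
      HasDerivAt f (1 + ∑' n : ℕ, ((n:ℂ)+2) * a (n+2) * w^(n+1)) w := by
    intro w hw
    have h := (hasDerivAt_id w).add (hFd w hw)
    refine h.congr_of_eventuallyEq ?_
    exact Filter.eventuallyEq_of_mem (Metric.isOpen_ball.mem_nhds hw) hfw
  have hd1 : ∀ w ∈ Metric.ball (0:ℂ) 1,
      deriv f w = 1 + ∑' n : ℕ, ((n:ℂ)+2) * a (n+2) * w^(n+1) := fun w hw => (hf1 w hw).deriv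
  -- second derivative
  set ρ : ℝ := (1 + ‖z‖)/2 with hρdef
  have hρ0 : 0 ≤ ρ := by positivity
  have hρ1 : ρ < 1 := by rw [hρdef]; linarith
  have hzρ : ‖z‖ < ρ := by rw [hρdef]; linarith
  have Su2 : Summable (fun n : ℕ => ((n:ℝ)+2)*((n:ℝ)+1)*‖a (n+2)‖*ρ^n) := by
    refine Summable.of_nonneg_of_le (fun n => by positivity) (fun n => ?_)
      ((sumgeo hρ0 hρ1).mul_left M)
    have h1 : ((n:ℝ)+2)*((n:ℝ)+1)*‖a (n+2)‖*ρ^n = (((n:ℝ)+2)*((n:ℝ)+1)*ρ^n)*‖a (n+2)‖ := by ring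
    have h2 := mul_le_mul_of_nonneg_left (hAM n) (show (0:ℝ) ≤ ((n:ℝ)+2)*((n:ℝ)+1)*ρ^n by positivity)
    rw [h1]
    calc (((n:ℝ)+2)*((n:ℝ)+1)*ρ^n)*‖a (n+2)‖ ≤ (((n:ℝ)+2)*((n:ℝ)+1)*ρ^n)*M := h2
    _ = M * ((((n:ℝ)+2)*((n:ℝ)+1))*ρ^n) := by ring
  have hF1d : HasDerivAt (fun w : ℂ => ∑' n : ℕ, ((n:ℂ)+2) * a (n+2) * w^(n+1))
      (∑' n : ℕ, ((n:ℂ)+2)*((n:ℂ)+1) * a (n+2) * z^n) z := by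
    have h := hasDerivAt_pow_series (c := fun n => ((n:ℂ)+2) * a (n+2)) (k := 0)
      (u := fun n => ((n:ℝ)+2)*((n:ℝ)+1)*‖a (n+2)‖*ρ^n) Su2 (fun n => ?_) hzρ
    · convert h using 1
      exact tsum_congr fun n => by push_cast; ring
    · have h1 : ‖((n:ℂ)+2) * a (n+2)‖ = ((n:ℝ)+2) * ‖a (n+2)‖ := by
        have : ((n:ℂ)+2) = ((((n:ℝ)+2) : ℝ) : ℂ) := by push_cast; ring
        rw [this, hnr _ (by positivity)]
      rw [h1]
      have h2 : (n + 0) = n := by omega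
      rw [h2]
      push_cast
      apply le_of_eq
      ring
  have hd2 : deriv (deriv f) z = ∑' n : ℕ, ((n:ℂ)+2)*((n:ℂ)+1) * a (n+2) * z^n := by
    have hev : deriv f =ᶠ[𝓝 z] fun w => 1 + ∑' n : ℕ, ((n:ℂ)+2) * a (n+2) * w^(n+1) :=
      Filter.eventuallyEq_of_mem (Metric.isOpen_ball.mem_nhds hz) hd1
    rw [hev.deriv_eq]
    exact (hF1d.const_add 1).deriv
  -- complex summabilities at z
  have SR : Summable (fun n : ℕ => a (n+2) * z^(n+2)) := (hf z hz).summable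
  have SPn : Summable (fun n : ℕ => ‖((n:ℂ)+2) * a (n+2) * z^(n+2)‖) := by
    refine Summable.of_nonneg_of_le (fun n => norm_nonneg _) (fun n => ?_) S1
    have h1 : ((n:ℂ)+2) * a (n+2) * z^(n+2) = ((((n:ℝ)+2) : ℝ) : ℂ) * (a (n+2) * z^(n+2)) := by
      push_cast; ring
    rw [h1, hnr _ (by positivity), norm_mul, norm_pow]
    have h2 : ‖z‖^(n+2) ≤ 1 := pow_le_one₀ (norm_nonneg z) hz1.le
    have h3 := mul_le_mul_of_nonneg_left (mul_le_mul_of_nonneg_left h2 (norm_nonneg (a (n+2))))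
      (by positivity : (0:ℝ) ≤ (n:ℝ)+2)
    calc ((n:ℝ)+2) * (‖a (n+2)‖ * ‖z‖^(n+2)) ≤ ((n:ℝ)+2) * (‖a (n+2)‖ * 1) := h3
    _ = ((n:ℝ)+2) * ‖a (n+2)‖ := by ring
  have SP : Summable (fun n : ℕ => ((n:ℂ)+2) * a (n+2) * z^(n+2)) := SPn.of_norm
  have SQn : Summable (fun n : ℕ => ‖((n:ℂ)+2)*((n:ℂ)+1) * a (n+2) * z^(n+2)‖) := by
    refine Summable.of_nonneg_of_le (fun n => norm_nonneg _) (fun n => ?_) Su2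
    have h1 : ((n:ℂ)+2)*((n:ℂ)+1) * a (n+2) * z^(n+2)
        = (((((n:ℝ)+2)*((n:ℝ)+1)) : ℝ) : ℂ) * (a (n+2) * z^(n+2)) := by push_cast; ring
    rw [h1, hnr _ (by positivity), norm_mul, norm_pow]
    have h2 : ‖z‖^(n+2) ≤ ρ^n := by
      calc ‖z‖^(n+2) ≤ ‖z‖^n := pow_le_pow_of_le_one (norm_nonneg z) hz1.le (by omega)
      _ ≤ ρ^n := pow_le_pow_left₀ (norm_nonneg z) hzρ.le n
    have h3 := mul_le_mul_of_nonneg_left (mul_le_mul_of_nonneg_left h2 (norm_nonneg (a (n+2))))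
      (by positivity : (0:ℝ) ≤ ((n:ℝ)+2)*((n:ℝ)+1))
    calc (((n:ℝ)+2)*((n:ℝ)+1)) * (‖a (n+2)‖ * ‖z‖^(n+2))
        ≤ (((n:ℝ)+2)*((n:ℝ)+1)) * (‖a (n+2)‖ * ρ^n) := h3
    _ = ((n:ℝ)+2)*((n:ℝ)+1)*‖a (n+2)‖*ρ^n := by ring
  have SQ : Summable (fun n : ℕ => ((n:ℂ)+2)*((n:ℂ)+1) * a (n+2) * z^(n+2)) := SQn.of_norm
  -- the two key series representations
  have hN : z * deriv f z + (γ : ℂ) * z ^ 2 * deriv (deriv f) z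
      = z + ∑' n : ℕ, (((((n:ℝ)+2)*(1+((n:ℝ)+1)*γ)) : ℝ) : ℂ) * a (n+2) * z^(n+2) := by
    rw [hd1 z hz, hd2]
    have e1 : z * (∑' n : ℕ, ((n:ℂ)+2) * a (n+2) * z^(n+1))
        = ∑' n : ℕ, z * (((n:ℂ)+2) * a (n+2) * z^(n+1)) := tsum_mul_left.symm
    have e2 : (γ:ℂ) * z^2 * (∑' n : ℕ, ((n:ℂ)+2)*((n:ℂ)+1) * a (n+2) * z^n)
        = ∑' n : ℕ, (γ:ℂ) * z^2 * (((n:ℂ)+2)*((n:ℂ)+1) * a (n+2) * z^n) := tsum_mul_left.symm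
    have s1 : Summable (fun n : ℕ => z * (((n:ℂ)+2) * a (n+2) * z^(n+1))) :=
      SP.congr fun n => by ring
    have s2 : Summable (fun n : ℕ => (γ:ℂ) * z^2 * (((n:ℂ)+2)*((n:ℂ)+1) * a (n+2) * z^n)) :=
      (SQ.mul_left (γ:ℂ)).congr fun n => by ring
    calc z * (1 + ∑' n : ℕ, ((n:ℂ)+2) * a (n+2) * z^(n+1))
          + (γ:ℂ) * z^2 * (∑' n : ℕ, ((n:ℂ)+2)*((n:ℂ)+1) * a (n+2) * z^n)
        = z + (z * (∑' n : ℕ, ((n:ℂ)+2) * a (n+2) * z^(n+1))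
          + (γ:ℂ) * z^2 * (∑' n : ℕ, ((n:ℂ)+2)*((n:ℂ)+1) * a (n+2) * z^n)) := by ring
      _ = z + (∑' n : ℕ, z * (((n:ℂ)+2) * a (n+2) * z^(n+1))
          + ∑' n : ℕ, (γ:ℂ) * z^2 * (((n:ℂ)+2)*((n:ℂ)+1) * a (n+2) * z^n)) := by rw [e1, e2]
      _ = z + ∑' n : ℕ, (z * (((n:ℂ)+2) * a (n+2) * z^(n+1))
          + (γ:ℂ) * z^2 * (((n:ℂ)+2)*((n:ℂ)+1) * a (n+2) * z^n)) := by rw [Summable.tsum_add s1 s2]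
      _ = z + ∑' n : ℕ, (((((n:ℝ)+2)*(1+((n:ℝ)+1)*γ)) : ℝ) : ℂ) * a (n+2) * z^(n+2) := by
          congr 1
          exact tsum_congr fun n => by push_cast; ring
  have hD : (γ : ℂ) * z * (deriv f z + (β : ℂ) * z * deriv (deriv f) z) +
        (1 - (γ : ℂ)) * ((β : ℂ) * z * deriv f z + (1 - (β : ℂ)) * f z)
      = z + ∑' n : ℕ, ((((1+((n:ℝ)+1)*γ)*(1+((n:ℝ)+1)*β)) : ℝ) : ℂ) * a (n+2) * z^(n+2) := by
    rw [hd1 z hz, hd2, hfw z hz]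
    have e1 : (((γ:ℂ) + (1-(γ:ℂ))*(β:ℂ)) * z) * (∑' n : ℕ, ((n:ℂ)+2) * a (n+2) * z^(n+1))
        = ∑' n : ℕ, (((γ:ℂ) + (1-(γ:ℂ))*(β:ℂ)) * z) * (((n:ℂ)+2) * a (n+2) * z^(n+1)) :=
      tsum_mul_left.symm
    have e2 : ((γ:ℂ) * (β:ℂ) * z^2) * (∑' n : ℕ, ((n:ℂ)+2)*((n:ℂ)+1) * a (n+2) * z^n)
        = ∑' n : ℕ, ((γ:ℂ) * (β:ℂ) * z^2) * (((n:ℂ)+2)*((n:ℂ)+1) * a (n+2) * z^n) :=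
      tsum_mul_left.symm
    have e3 : ((1-(γ:ℂ)) * (1-(β:ℂ))) * (∑' n : ℕ, a (n+2) * z^(n+2))
        = ∑' n : ℕ, ((1-(γ:ℂ)) * (1-(β:ℂ))) * (a (n+2) * z^(n+2)) := tsum_mul_left.symm
    have s1 : Summable (fun n : ℕ => (((γ:ℂ) + (1-(γ:ℂ))*(β:ℂ)) * z) * (((n:ℂ)+2) * a (n+2) * z^(n+1))) := by
      have h : Summable (fun n : ℕ => ((γ:ℂ) + (1-(γ:ℂ))*(β:ℂ)) * (((n:ℂ)+2) * a (n+2) * z^(n+2))) :=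
        SP.mul_left _
      exact h.congr fun n => by ring
    have s2 : Summable (fun n : ℕ => ((γ:ℂ) * (β:ℂ) * z^2) * (((n:ℂ)+2)*((n:ℂ)+1) * a (n+2) * z^n)) := by
      have h : Summable (fun n : ℕ => ((γ:ℂ) * (β:ℂ)) * (((n:ℂ)+2)*((n:ℂ)+1) * a (n+2) * z^(n+2))) :=
        SQ.mul_left _
      exact h.congr fun n => by ring
    have s3 : Summable (fun n : ℕ => ((1-(γ:ℂ)) * (1-(β:ℂ))) * (a (n+2) * z^(n+2))) :=
      SR.mul_left _
    calc (γ:ℂ) * z * ((1 + ∑' n : ℕ, ((n:ℂ)+2) * a (n+2) * z^(n+1))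
            + (β:ℂ) * z * (∑' n : ℕ, ((n:ℂ)+2)*((n:ℂ)+1) * a (n+2) * z^n)) +
          (1 - (γ:ℂ)) * ((β:ℂ) * z * (1 + ∑' n : ℕ, ((n:ℂ)+2) * a (n+2) * z^(n+1))
            + (1 - (β:ℂ)) * (z + ∑' n : ℕ, a (n+2) * z^(n+2)))
        = z + ((((γ:ℂ) + (1-(γ:ℂ))*(β:ℂ)) * z) * (∑' n : ℕ, ((n:ℂ)+2) * a (n+2) * z^(n+1))
          + ((γ:ℂ) * (β:ℂ) * z^2) * (∑' n : ℕ, ((n:ℂ)+2)*((n:ℂ)+1) * a (n+2) * z^n)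
          + ((1-(γ:ℂ)) * (1-(β:ℂ))) * (∑' n : ℕ, a (n+2) * z^(n+2))) := by ring
      _ = z + (∑' n : ℕ, (((γ:ℂ) + (1-(γ:ℂ))*(β:ℂ)) * z) * (((n:ℂ)+2) * a (n+2) * z^(n+1))
          + ∑' n : ℕ, ((γ:ℂ) * (β:ℂ) * z^2) * (((n:ℂ)+2)*((n:ℂ)+1) * a (n+2) * z^n)
          + ∑' n : ℕ, ((1-(γ:ℂ)) * (1-(β:ℂ))) * (a (n+2) * z^(n+2))) := by rw [e1, e2, e3]
      _ = z + ∑' n : ℕ, ((((γ:ℂ) + (1-(γ:ℂ))*(β:ℂ)) * z) * (((n:ℂ)+2) * a (n+2) * z^(n+1))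
          + ((γ:ℂ) * (β:ℂ) * z^2) * (((n:ℂ)+2)*((n:ℂ)+1) * a (n+2) * z^n)
          + ((1-(γ:ℂ)) * (1-(β:ℂ))) * (a (n+2) * z^(n+2))) := by
            rw [Summable.tsum_add (s1.add s2) s3, Summable.tsum_add s1 s2]
      _ = z + ∑' n : ℕ, ((((1+((n:ℝ)+1)*γ)*(1+((n:ℝ)+1)*β)) : ℝ) : ℂ) * a (n+2) * z^(n+2) := by
          congr 1
          exact tsum_congr fun n => by push_cast; ring
  -- summability of the coefficient series
  have ScC : Summable (fun n : ℕ => (((((n:ℝ)+2)*(1+((n:ℝ)+1)*γ)) : ℝ) : ℂ) * a (n+2) * z^(n+2)) := by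
    have h1 : Summable (fun n : ℕ => (γ:ℂ) * (((n:ℂ)+2)*((n:ℂ)+1) * a (n+2) * z^(n+2))) :=
      SQ.mul_left _
    exact (SP.add h1).congr fun n => by push_cast; ring
  have SdC : Summable (fun n : ℕ => ((((1+((n:ℝ)+1)*γ)*(1+((n:ℝ)+1)*β)) : ℝ) : ℂ) * a (n+2) * z^(n+2)) := by
    have h1 : Summable (fun n : ℕ => ((γ:ℂ)+(1-(γ:ℂ))*(β:ℂ)) * (((n:ℂ)+2) * a (n+2) * z^(n+2))) :=
      SP.mul_left _
    have h2 : Summable (fun n : ℕ => ((γ:ℂ)*(β:ℂ)) * (((n:ℂ)+2)*((n:ℂ)+1) * a (n+2) * z^(n+2))) :=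
      SQ.mul_left _
    have h3 : Summable (fun n : ℕ => ((1-(γ:ℂ))*(1-(β:ℂ))) * (a (n+2) * z^(n+2))) :=
      SR.mul_left _
    exact ((h1.add h2).add h3).congr fun n => by push_cast; ring
  -- real coefficient bounds
  have hEnn : ∀ n : ℕ, (0:ℝ) ≤ (1+((n:ℝ)+1)*γ)*((n:ℝ)+1)*(1-β) := by
    intro n
    have hn := hcast n
    have h1 : (0:ℝ) ≤ 1 - β := by linarith
    have h2 : (0:ℝ) ≤ 1+((n:ℝ)+1)*γ := by positivity
    exact mul_nonneg (mul_nonneg h2 (by linarith)) h1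
  have hDnn : ∀ n : ℕ, (0:ℝ) ≤ (1+((n:ℝ)+1)*γ)*(1+((n:ℝ)+1)*β) := by
    intro n
    exact mul_nonneg (by positivity) (by positivity)
  -- term-norm identities
  have hterm1 : ∀ n : ℕ, ‖((((1+((n:ℝ)+1)*γ)*((n:ℝ)+1)*(1-β)) : ℝ) : ℂ) * (a (n+2) * z^(n+2))‖
      = (1+((n:ℝ)+1)*γ)*((n:ℝ)+1)*(1-β) * (‖a (n+2)‖ * ‖z‖^(n+2)) := by
    intro n
    rw [hnr _ (hEnn n), norm_mul, norm_pow]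
  have hterm2 : ∀ n : ℕ, ‖((((1+((n:ℝ)+1)*γ)*(1+((n:ℝ)+1)*β)) : ℝ) : ℂ) * (a (n+2) * z^(n+2))‖
      = (1+((n:ℝ)+1)*γ)*(1+((n:ℝ)+1)*β) * (‖a (n+2)‖ * ‖z‖^(n+2)) := by
    intro n
    rw [hnr _ (hDnn n), norm_mul, norm_pow]
  -- real series
  have SEe : Summable (fun n : ℕ => (1+((n:ℝ)+1)*γ)*((n:ℝ)+1)*(1-β) * (‖a (n+2)‖ * ‖z‖^(n+2))) := by
    refine Summable.of_nonneg_of_le (fun n => mul_nonneg (hEnn n) (by positivity)) (fun n => ?_) hsum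
    have hn := hcast n
    have hz2 : ‖z‖^(n+2) ≤ 1 := pow_le_one₀ (norm_nonneg z) hz1.le
    have hzp : (0:ℝ) ≤ ‖z‖^(n+2) := by positivity
    have h0 : (0:ℝ) ≤ ‖a (n+2)‖ := norm_nonneg _
    have hcoef : (1+((n:ℝ)+1)*γ)*((n:ℝ)+1)*(1-β) ≤
        (1 + ((n:ℝ)+1)*γ) * (((n:ℝ)+2) - α - ((n:ℝ)+1)*α*β) := by
      have h2 : (0:ℝ) ≤ 1+((n:ℝ)+1)*γ := by positivity
      have h3 : ((n:ℝ)+1)*(1-β) ≤ ((n:ℝ)+2) - α - ((n:ℝ)+1)*α*β := by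
        nlinarith [mul_nonneg (mul_nonneg (by linarith : (0:ℝ) ≤ (n:ℝ)+1) hβ0)
          (by linarith : (0:ℝ) ≤ 1-α)]
      nlinarith [mul_le_mul_of_nonneg_left h3 h2]
    calc (1+((n:ℝ)+1)*γ)*((n:ℝ)+1)*(1-β) * (‖a (n+2)‖ * ‖z‖^(n+2))
        ≤ (1+((n:ℝ)+1)*γ)*((n:ℝ)+1)*(1-β) * (‖a (n+2)‖ * 1) := by
          refine mul_le_mul_of_nonneg_left ?_ (hEnn n)
          exact mul_le_mul_of_nonneg_left hz2 h0
      _ ≤ (1 + ((n:ℝ)+1)*γ) * (((n:ℝ)+2) - α - ((n:ℝ)+1)*α*β) * ‖a (n+2)‖ := by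
          rw [mul_one]
          exact mul_le_mul_of_nonneg_right hcoef h0
  have SDd : Summable (fun n : ℕ => (1+((n:ℝ)+1)*γ)*(1+((n:ℝ)+1)*β) * (‖a (n+2)‖ * ‖z‖^(n+2))) := by
    refine Summable.of_nonneg_of_le (fun n => mul_nonneg (hDnn n) (by positivity)) (fun n => ?_)
      (hsum.mul_left (1-α)⁻¹)
    rw [inv_mul_eq_div, le_div_iff₀ h1α]
    have hn := hcast n
    have hz2 : ‖z‖^(n+2) ≤ 1 := pow_le_one₀ (norm_nonneg z) hz1.le
    have hzp : (0:ℝ) ≤ ‖z‖^(n+2) := by positivity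
    have h0 : (0:ℝ) ≤ ‖a (n+2)‖ := norm_nonneg _
    have hid : (1 + ((n:ℝ)+1)*γ) * (((n:ℝ)+2) - α - ((n:ℝ)+1)*α*β)
        = (1+((n:ℝ)+1)*γ)*((n:ℝ)+1)*(1-β)
          + (1-α)*((1+((n:ℝ)+1)*γ)*(1+((n:ℝ)+1)*β)) := by ring
    have hcoef : (1-α) * ((1+((n:ℝ)+1)*γ)*(1+((n:ℝ)+1)*β)) ≤
        (1 + ((n:ℝ)+1)*γ) * (((n:ℝ)+2) - α - ((n:ℝ)+1)*α*β) := by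
      linarith [hEnn n]
    have h4 := mul_le_mul_of_nonneg_right hcoef h0
    have h5 : (1+((n:ℝ)+1)*γ)*(1+((n:ℝ)+1)*β) * (‖a (n+2)‖ * ‖z‖^(n+2))
        ≤ (1+((n:ℝ)+1)*γ)*(1+((n:ℝ)+1)*β) * ‖a (n+2)‖ := by
      have h := mul_le_mul_of_nonneg_left (mul_le_mul_of_nonneg_left hz2 h0) (hDnn n)
      calc (1+((n:ℝ)+1)*γ)*(1+((n:ℝ)+1)*β) * (‖a (n+2)‖ * ‖z‖^(n+2))
          ≤ (1+((n:ℝ)+1)*γ)*(1+((n:ℝ)+1)*β) * (‖a (n+2)‖ * 1) := h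
      _ = (1+((n:ℝ)+1)*γ)*(1+((n:ℝ)+1)*β) * ‖a (n+2)‖ := by ring
    nlinarith [mul_le_mul_of_nonneg_right h5 h1α.le, h4]
  -- main strict bound
  have hmain : (∑' n : ℕ, (1+((n:ℝ)+1)*γ)*((n:ℝ)+1)*(1-β) * (‖a (n+2)‖ * ‖z‖^(n+2)))
      + (1-α) * (∑' n : ℕ, (1+((n:ℝ)+1)*γ)*(1+((n:ℝ)+1)*β) * (‖a (n+2)‖ * ‖z‖^(n+2)))
      < (1-α) * ‖z‖ := by
    have hcomb : (∑' n : ℕ, (1+((n:ℝ)+1)*γ)*((n:ℝ)+1)*(1-β) * (‖a (n+2)‖ * ‖z‖^(n+2)))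
        + (1-α) * (∑' n : ℕ, (1+((n:ℝ)+1)*γ)*(1+((n:ℝ)+1)*β) * (‖a (n+2)‖ * ‖z‖^(n+2)))
        = ∑' n : ℕ, ((1 + ((n : ℝ) + 1) * γ) * (((n : ℝ) + 2) - α - ((n : ℝ) + 1) * α * β) * ‖a (n + 2)‖)
            * ‖z‖^(n+2) := by
      rw [← tsum_mul_left, ← Summable.tsum_add SEe (SDd.mul_left (1-α))]
      exact tsum_congr fun n => by ring
    rw [hcomb]
    have hstep : ∑' n : ℕ, ((1 + ((n : ℝ) + 1) * γ) * (((n : ℝ) + 2) - α - ((n : ℝ) + 1) * α * β) * ‖a (n + 2)‖)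
            * ‖z‖^(n+2)
        ≤ ∑' n : ℕ, ((1 + ((n : ℝ) + 1) * γ) * (((n : ℝ) + 2) - α - ((n : ℝ) + 1) * α * β) * ‖a (n + 2)‖)
            * ‖z‖^2 := by
      refine Summable.tsum_le_tsum (fun n => ?_) (by
          refine Summable.of_nonneg_of_le (fun n => mul_nonneg (hTpos n) (by positivity)) (fun n => ?_) (hsum.mul_right (‖z‖^2))
          refine mul_le_mul_of_nonneg_left ?_ (hTpos n)
          calc ‖z‖^(n+2) ≤ ‖z‖^2 := pow_le_pow_of_le_one (norm_nonneg z) hz1.le (by omega)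
          _ = ‖z‖^2 := rfl) (hsum.mul_right (‖z‖^2))
      refine mul_le_mul_of_nonneg_left ?_ (hTpos n)
      exact pow_le_pow_of_le_one (norm_nonneg z) hz1.le (by omega)
    have hstep2 : ∑' n : ℕ, ((1 + ((n : ℝ) + 1) * γ) * (((n : ℝ) + 2) - α - ((n : ℝ) + 1) * α * β) * ‖a (n + 2)‖)
            * ‖z‖^2 ≤ (1-α) * ‖z‖^2 := by
      rw [tsum_mul_right]
      exact mul_le_mul_of_nonneg_right hle (by positivity)
    have hstep3 : (1-α) * ‖z‖^2 < (1-α) * ‖z‖ := by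
      nlinarith [mul_pos (mul_pos h1α hzpos) (show (0:ℝ) < 1 - ‖z‖ by linarith)]
    linarith
  -- norm bounds
  have SnE : Summable (fun n : ℕ => ‖((((1+((n:ℝ)+1)*γ)*((n:ℝ)+1)*(1-β)) : ℝ) : ℂ) * (a (n+2) * z^(n+2))‖) :=
    SEe.congr fun n => (hterm1 n).symm
  have SnD : Summable (fun n : ℕ => ‖((((1+((n:ℝ)+1)*γ)*(1+((n:ℝ)+1)*β)) : ℝ) : ℂ) * (a (n+2) * z^(n+2))‖) :=
    SDd.congr fun n => (hterm2 n).symm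
  have hdiff : (z + ∑' n : ℕ, (((((n:ℝ)+2)*(1+((n:ℝ)+1)*γ)) : ℝ) : ℂ) * a (n+2) * z^(n+2))
      - (z + ∑' n : ℕ, ((((1+((n:ℝ)+1)*γ)*(1+((n:ℝ)+1)*β)) : ℝ) : ℂ) * a (n+2) * z^(n+2))
      = ∑' n : ℕ, ((((1+((n:ℝ)+1)*γ)*((n:ℝ)+1)*(1-β)) : ℝ) : ℂ) * (a (n+2) * z^(n+2)) := by
    have h := Summable.tsum_sub ScC SdC
    calc (z + ∑' n : ℕ, (((((n:ℝ)+2)*(1+((n:ℝ)+1)*γ)) : ℝ) : ℂ) * a (n+2) * z^(n+2))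
        - (z + ∑' n : ℕ, ((((1+((n:ℝ)+1)*γ)*(1+((n:ℝ)+1)*β)) : ℝ) : ℂ) * a (n+2) * z^(n+2))
        = (∑' n : ℕ, (((((n:ℝ)+2)*(1+((n:ℝ)+1)*γ)) : ℝ) : ℂ) * a (n+2) * z^(n+2))
          - ∑' n : ℕ, ((((1+((n:ℝ)+1)*γ)*(1+((n:ℝ)+1)*β)) : ℝ) : ℂ) * a (n+2) * z^(n+2) := by ring
      _ = ∑' n : ℕ, ((((((n:ℝ)+2)*(1+((n:ℝ)+1)*γ)) : ℝ) : ℂ) * a (n+2) * z^(n+2)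
          - ((((1+((n:ℝ)+1)*γ)*(1+((n:ℝ)+1)*β)) : ℝ) : ℂ) * a (n+2) * z^(n+2)) := h.symm
      _ = ∑' n : ℕ, ((((1+((n:ℝ)+1)*γ)*((n:ℝ)+1)*(1-β)) : ℝ) : ℂ) * (a (n+2) * z^(n+2)) :=
          tsum_congr fun n => by push_cast; ring
  have hNDle : ‖(z + ∑' n : ℕ, (((((n:ℝ)+2)*(1+((n:ℝ)+1)*γ)) : ℝ) : ℂ) * a (n+2) * z^(n+2))
      - (z + ∑' n : ℕ, ((((1+((n:ℝ)+1)*γ)*(1+((n:ℝ)+1)*β)) : ℝ) : ℂ) * a (n+2) * z^(n+2))‖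
      ≤ ∑' n : ℕ, (1+((n:ℝ)+1)*γ)*((n:ℝ)+1)*(1-β) * (‖a (n+2)‖ * ‖z‖^(n+2)) := by
    rw [hdiff]
    calc ‖∑' n : ℕ, ((((1+((n:ℝ)+1)*γ)*((n:ℝ)+1)*(1-β)) : ℝ) : ℂ) * (a (n+2) * z^(n+2))‖
        ≤ ∑' n : ℕ, ‖((((1+((n:ℝ)+1)*γ)*((n:ℝ)+1)*(1-β)) : ℝ) : ℂ) * (a (n+2) * z^(n+2))‖ :=
          norm_tsum_le_tsum_norm SnE
      _ = ∑' n : ℕ, (1+((n:ℝ)+1)*γ)*((n:ℝ)+1)*(1-β) * (‖a (n+2)‖ * ‖z‖^(n+2)) :=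
          tsum_congr hterm1
  have hDge : ‖z‖ - (∑' n : ℕ, (1+((n:ℝ)+1)*γ)*(1+((n:ℝ)+1)*β) * (‖a (n+2)‖ * ‖z‖^(n+2)))
      ≤ ‖z + ∑' n : ℕ, ((((1+((n:ℝ)+1)*γ)*(1+((n:ℝ)+1)*β)) : ℝ) : ℂ) * a (n+2) * z^(n+2)‖ := by
    have hup : ‖∑' n : ℕ, ((((1+((n:ℝ)+1)*γ)*(1+((n:ℝ)+1)*β)) : ℝ) : ℂ) * a (n+2) * z^(n+2)‖
        ≤ ∑' n : ℕ, (1+((n:ℝ)+1)*γ)*(1+((n:ℝ)+1)*β) * (‖a (n+2)‖ * ‖z‖^(n+2)) := by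
      have hco : (∑' n : ℕ, ((((1+((n:ℝ)+1)*γ)*(1+((n:ℝ)+1)*β)) : ℝ) : ℂ) * a (n+2) * z^(n+2))
          = ∑' n : ℕ, ((((1+((n:ℝ)+1)*γ)*(1+((n:ℝ)+1)*β)) : ℝ) : ℂ) * (a (n+2) * z^(n+2)) :=
        tsum_congr fun n => by ring
      rw [hco]
      calc ‖∑' n : ℕ, ((((1+((n:ℝ)+1)*γ)*(1+((n:ℝ)+1)*β)) : ℝ) : ℂ) * (a (n+2) * z^(n+2))‖
          ≤ ∑' n : ℕ, ‖((((1+((n:ℝ)+1)*γ)*(1+((n:ℝ)+1)*β)) : ℝ) : ℂ) * (a (n+2) * z^(n+2))‖ :=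
            norm_tsum_le_tsum_norm SnD
        _ = ∑' n : ℕ, (1+((n:ℝ)+1)*γ)*(1+((n:ℝ)+1)*β) * (‖a (n+2)‖ * ‖z‖^(n+2)) :=
            tsum_congr hterm2
    have h := norm_add_le (z + ∑' n : ℕ, ((((1+((n:ℝ)+1)*γ)*(1+((n:ℝ)+1)*β)) : ℝ) : ℂ) * a (n+2) * z^(n+2))
      (-(∑' n : ℕ, ((((1+((n:ℝ)+1)*γ)*(1+((n:ℝ)+1)*β)) : ℝ) : ℂ) * a (n+2) * z^(n+2)))
    simp only [add_neg_cancel_right, norm_neg] at h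
    linarith
  -- finish
  rw [hN, hD]
  have hEnonneg : (0:ℝ) ≤ ∑' n : ℕ, (1+((n:ℝ)+1)*γ)*((n:ℝ)+1)*(1-β) * (‖a (n+2)‖ * ‖z‖^(n+2)) :=
    tsum_nonneg fun n => mul_nonneg (hEnn n) (by positivity)
  have hDsumlt : (∑' n : ℕ, (1+((n:ℝ)+1)*γ)*(1+((n:ℝ)+1)*β) * (‖a (n+2)‖ * ‖z‖^(n+2))) < ‖z‖ := by
    nlinarith
  have hDpos : 0 < ‖z + ∑' n : ℕ, ((((1+((n:ℝ)+1)*γ)*(1+((n:ℝ)+1)*β)) : ℝ) : ℂ) * a (n+2) * z^(n+2)‖ := by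
    linarith
  have hne : (z + ∑' n : ℕ, ((((1+((n:ℝ)+1)*γ)*(1+((n:ℝ)+1)*β)) : ℝ) : ℂ) * a (n+2) * z^(n+2)) ≠ 0 :=
    norm_pos_iff.mp hDpos
  have hNDlt : ‖(z + ∑' n : ℕ, (((((n:ℝ)+2)*(1+((n:ℝ)+1)*γ)) : ℝ) : ℂ) * a (n+2) * z^(n+2))
      - (z + ∑' n : ℕ, ((((1+((n:ℝ)+1)*γ)*(1+((n:ℝ)+1)*β)) : ℝ) : ℂ) * a (n+2) * z^(n+2))‖
      < (1-α) * ‖z + ∑' n : ℕ, ((((1+((n:ℝ)+1)*γ)*(1+((n:ℝ)+1)*β)) : ℝ) : ℂ) * a (n+2) * z^(n+2)‖ := by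
    have h1 := mul_le_mul_of_nonneg_left hDge h1α.le
    nlinarith
  set NN := z + ∑' n : ℕ, (((((n:ℝ)+2)*(1+((n:ℝ)+1)*γ)) : ℝ) : ℂ) * a (n+2) * z^(n+2) with hNN
  set DD := z + ∑' n : ℕ, ((((1+((n:ℝ)+1)*γ)*(1+((n:ℝ)+1)*β)) : ℝ) : ℂ) * a (n+2) * z^(n+2) with hDD
  have hquot : NN / DD = 1 + (NN - DD) / DD := by field_simp; ring
  rw [hquot, Complex.add_re, Complex.one_re]
  have hwlt : ‖(NN - DD) / DD‖ < 1 - α := by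
    rw [norm_div, div_lt_iff₀ hDpos]
    exact hNDlt
  have hre : -‖(NN - DD) / DD‖ ≤ ((NN - DD) / DD).re := by
    have h := abs_le.1 (Complex.abs_re_le_norm ((NN - DD) / DD))
    linarith [h.1]
  linarith
end

section
/- If f(z) = z - Σ_{n≥2} a_n z^n with a_n ≥ 0 is analytic on U and Re[ (z f'(z) + γ z² f''(z)) / (γ z (f'(z) + β z f''(z)) + (1-γ)(β z f'(z) + (1-β) f(z))) ] > α for all z ∈ U, then Σ_{n≥2} (1+(n-1)γ)(n-α-(n-1)αβ) a_n ≤ 1-α. -/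
open Complex FormalMultilinearSeries

noncomputable def e1 : (ℂ →L[ℂ] ℂ) →L[ℂ] ℂ := ContinuousLinearMap.apply ℂ ℂ 1

lemma aux_deriv_fps {g : ℂ → ℂ} {p : FormalMultilinearSeries ℂ ℂ ℂ}
    (h : HasFPowerSeriesOnBall g p 0 1) :
    HasFPowerSeriesOnBall (deriv g)
      (e1.compFormalMultilinearSeries p.derivSeries) 0 1 := by
  have h2 := e1.comp_hasFPowerSeriesOnBall h.fderiv
  have he : (e1 ∘ fderiv ℂ g) = deriv g := by
    funext z
    simp [e1, ContinuousLinearMap.apply, fderiv_apply_one_eq_deriv]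
  rwa [he] at h2

lemma clm_one_eq {L : ℂ →L[ℂ] ℂ} {y : ℂ} (hy : y ≠ 0) : L 1 = L y / y := by
  have h : L y = y * L 1 := by
    have : L (y • 1) = y • L 1 := L.map_smul y 1
    simpa using this
  rw [h]
  field_simp

lemma aux_hasSum_deriv {g : ℂ → ℂ} {p : FormalMultilinearSeries ℂ ℂ ℂ}
    (h : HasFPowerSeriesOnBall g p 0 1) {y : ℂ} (hy : ‖y‖ < 1) (hy0 : y ≠ 0) :
    HasSum (fun n : ℕ => ((n : ℂ) + 1) * (p (n + 1) fun _ => y) / y) (deriv g y) := by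
  have hq := aux_deriv_fps h
  have hmem : y ∈ EMetric.ball (0 : ℂ) 1 :=
    mem_emetric_ball_zero_iff.2 (by
      rw [enorm_eq_nnnorm, ← ENNReal.coe_one, ENNReal.coe_lt_coe, ← NNReal.coe_lt_coe]; exact hy)
  have hs := hq.hasSum hmem
  rw [zero_add] at hs
  convert hs using 2 with n
  case e'_3 => rfl
  rw [ContinuousLinearMap.compFormalMultilinearSeries_apply]
  show ((n : ℂ) + 1) * (p (n + 1) fun _ => y) / y = e1 (p.derivSeries n fun _ => y)
  have : e1 (p.derivSeries n fun _ => y) = (p.derivSeries n fun _ => y) 1 := rfl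
  rw [this, clm_one_eq hy0, p.derivSeries_apply_diag]
  push_cast [nsmul_eq_mul]
  ring

noncomputable def crC (a : ℕ → ℝ) : ℕ → ℝ
  | 0 => 0
  | 1 => 1
  | (k+2) => -(a (k+2))

lemma aux_hasFP (a : ℕ → ℝ) (f : ℂ → ℂ) (ha : ∀ n, 0 ≤ a n)
    (hf : ∀ z ∈ Metric.ball (0 : ℂ) 1,
      HasSum (fun n : ℕ => ((a (n + 2) : ℝ) : ℂ) * z ^ (n + 2)) (z - f z)) :
    HasFPowerSeriesOnBall f (ofScalars ℂ (fun n => ((crC a n : ℝ) : ℂ))) 0 1 := by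
  constructor
  · refine ENNReal.le_of_forall_nnreal_lt ?_
    intro r hr
    apply FormalMultilinearSeries.le_radius_of_summable_norm
    have hr1 : (r : ℝ) < 1 := by exact_mod_cast hr
    have hmem : (((r : ℝ) : ℂ)) ∈ Metric.ball (0 : ℂ) 1 := by
      rw [Metric.mem_ball, dist_zero_right]
      simpa using hr1
    have h1 := (Complex.reCLM.hasSum (hf _ hmem)).summable
    have h2 : Summable (fun n : ℕ =>
        ‖(ofScalars ℂ (fun n => ((crC a n : ℝ) : ℂ))) (n + 2)‖ * (r : ℝ) ^ (n + 2)) := by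
      refine h1.congr fun n => ?_
      rw [FormalMultilinearSeries.ofScalars_norm]
      have : ((a (n + 2) : ℝ) : ℂ) * (((r : ℝ) : ℂ)) ^ (n + 2)
          = ((a (n + 2) * (r : ℝ) ^ (n + 2) : ℝ) : ℂ) := by push_cast; ring
      rw [this]
      simp only [Complex.reCLM_apply, Complex.ofReal_re, crC, Complex.norm_real,
        norm_neg, Real.norm_eq_abs, _root_.abs_of_nonneg (ha (n + 2))]
    exact (summable_nat_add_iff 2).1 h2
  · exact one_pos
  · intro y hy
    rw [zero_add]
    have hy' : y ∈ Metric.ball (0 : ℂ) 1 := by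
      rw [Metric.mem_ball, dist_zero_right]
      have hy2 := mem_emetric_ball_zero_iff.1 hy
      rw [enorm_eq_nnnorm, ← ENNReal.coe_one, ENNReal.coe_lt_coe, ← NNReal.coe_lt_coe] at hy2
      exact hy2
    have h := (hf y hy').neg
    rw [show -(y - f y) = f y - y by ring] at h
    have h2 : HasSum (fun n : ℕ => ((crC a (n + 2) : ℝ) : ℂ) * y ^ (n + 2)) (f y - y) := by
      refine h.congr_fun fun n => ?_
      simp [crC]
    have h3 := (hasSum_nat_add_iff (f := fun n : ℕ => ((crC a n : ℝ) : ℂ) * y ^ n) 2).1 h2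
    have hsum : f y - y + ∑ i ∈ Finset.range 2, ((crC a i : ℝ) : ℂ) * y ^ i = f y := by
      simp [Finset.sum_range_succ, crC]
    rw [hsum] at h3
    refine h3.congr_fun fun n => ?_
    rw [FormalMultilinearSeries.ofScalars_apply_eq]
    simp [smul_eq_mul]

lemma aux_ofReal_hasSum {u : ℕ → ℝ} {w : ℂ} (h : HasSum (fun n => ((u n : ℝ) : ℂ)) w) :
    HasSum u w.re ∧ w = ((w.re : ℝ) : ℂ) := by
  have hre := Complex.reCLM.hasSum h
  have him := Complex.imCLM.hasSum h
  simp only [Complex.reCLM_apply, Complex.ofReal_re] at hre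
  simp only [Complex.imCLM_apply, Complex.ofReal_im] at him
  have him0 : w.im = 0 := (him.unique hasSum_zero)
  exact ⟨hre, by apply Complex.ext <;> simp [him0]⟩

lemma aux_sums (a : ℕ → ℝ) (f : ℂ → ℂ) (ha : ∀ n, 0 ≤ a n)
    (hf : ∀ z ∈ Metric.ball (0 : ℂ) 1,
      HasSum (fun n : ℕ => ((a (n + 2) : ℝ) : ℂ) * z ^ (n + 2)) (z - f z))
    {r : ℝ} (hr0 : 0 < r) (hr1 : r < 1) :
    ∃ F F' F'' : ℝ,
      f r = (F : ℂ) ∧ deriv f r = (F' : ℂ) ∧ deriv (deriv f) r = (F'' : ℂ) ∧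
      HasSum (fun n : ℕ => crC a n * r ^ n) F ∧
      HasSum (fun n : ℕ => ((n : ℝ) + 1) * crC a (n + 1) * r ^ n) F' ∧
      HasSum (fun n : ℕ => ((n : ℝ) + 1) * ((n : ℝ) + 2) * crC a (n + 2) * r ^ n) F'' := by
  have p_eq : True := trivial
  have hp := aux_hasFP a f ha hf
  have hq := aux_deriv_fps hp
  have hnorm : ‖((r : ℝ) : ℂ)‖ < 1 := by simpa using (abs_lt.2 ⟨by linarith, hr1⟩)
  have hz0 : ((r : ℝ) : ℂ) ≠ 0 := by exact_mod_cast hr0.ne'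
  have hmem : ((r : ℝ) : ℂ) ∈ EMetric.ball (0 : ℂ) 1 :=
    mem_emetric_ball_zero_iff.2 (by
      rw [enorm_eq_nnnorm, ← ENNReal.coe_one, ENNReal.coe_lt_coe, ← NNReal.coe_lt_coe]; exact hnorm)
  -- f
  have h0 := hp.hasSum hmem
  rw [zero_add] at h0
  have h0' : HasSum (fun n : ℕ => ((crC a n * r ^ n : ℝ) : ℂ)) (f r) := by
    refine h0.congr_fun fun n => ?_
    rw [FormalMultilinearSeries.ofScalars_apply_eq, smul_eq_mul]
    push_cast
    ring
  obtain ⟨hF, hFv⟩ := aux_ofReal_hasSum h0'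
  -- deriv f
  have h1 := aux_hasSum_deriv hp hnorm hz0
  have h1' : HasSum (fun n : ℕ => ((((n : ℝ) + 1) * crC a (n + 1) * r ^ n : ℝ) : ℂ))
      (deriv f r) := by
    refine h1.congr_fun fun n => ?_
    rw [FormalMultilinearSeries.ofScalars_apply_eq]
    have : (((crC a (n + 1) : ℝ) : ℂ)) • ((r : ℂ)) ^ (n + 1)
        = ((crC a (n + 1) : ℝ) : ℂ) * (r : ℂ) ^ (n + 1) := by simp [smul_eq_mul]
    rw [this]
    field_simp
    push_cast
    ring
  obtain ⟨hF', hF'v⟩ := aux_ofReal_hasSum h1'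
  -- deriv deriv f
  have h2 := aux_hasSum_deriv hq hnorm hz0
  have h2' : HasSum (fun n : ℕ =>
      ((((n : ℝ) + 1) * ((n : ℝ) + 2) * crC a (n + 2) * r ^ n : ℝ) : ℂ))
      (deriv (deriv f) r) := by
    refine h2.congr_fun fun n => ?_
    have hqv : (e1.compFormalMultilinearSeries
        (ofScalars ℂ (fun n => ((crC a n : ℝ) : ℂ))).derivSeries) (n + 1) (fun _ => ((r : ℝ) : ℂ))
        = ((n : ℂ) + 2) * ((crC a (n + 2) : ℝ) : ℂ) * (r : ℂ) ^ (n + 2) / (r : ℂ) := by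
      rw [ContinuousLinearMap.compFormalMultilinearSeries_apply]
      show ((ofScalars ℂ (fun n => ((crC a n : ℝ) : ℂ))).derivSeries (n + 1)
        fun _ => ((r : ℝ) : ℂ)) 1 = _
      rw [clm_one_eq hz0, FormalMultilinearSeries.derivSeries_apply_diag,
        FormalMultilinearSeries.ofScalars_apply_eq]
      push_cast [nsmul_eq_mul, smul_eq_mul]
      ring
    rw [hqv]
    field_simp
    push_cast
    ring
  obtain ⟨hF'', hF''v⟩ := aux_ofReal_hasSum h2'
  exact ⟨_, _, _, hFv, hF'v, hF''v, hF, hF', hF''⟩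

theorem stmt2 (α β γ : ℝ) (hα0 : 0 ≤ α) (hα1 : α < 1) (hβ0 : 0 ≤ β) (hβ1 : β < 1)
    (hγ0 : 0 ≤ γ) (hγ1 : γ ≤ 1) (f : ℂ → ℂ) (a : ℕ → ℝ) (ha : ∀ n, 0 ≤ a n)
    (hf : ∀ z ∈ Metric.ball (0 : ℂ) 1,
      HasSum (fun n : ℕ => ((a (n + 2) : ℝ) : ℂ) * z ^ (n + 2)) (z - f z))
    (hre : ∀ z ∈ Metric.ball (0 : ℂ) 1, z ≠ 0 →
      α < (((z * deriv f z + (γ : ℂ) * z ^ 2 * deriv (deriv f) z) /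
        ((γ : ℂ) * z * (deriv f z + (β : ℂ) * z * deriv (deriv f) z) +
          (1 - (γ : ℂ)) * ((β : ℂ) * z * deriv f z + (1 - (β : ℂ)) * f z))).re)) :
    Summable (fun n : ℕ =>
      (1 + ((n : ℝ) + 1) * γ) * (((n : ℝ) + 2) - α - ((n : ℝ) + 1) * α * β) * a (n + 2)) ∧
    ∑' n : ℕ,
      (1 + ((n : ℝ) + 1) * γ) * (((n : ℝ) + 2) - α - ((n : ℝ) + 1) * α * β) * a (n + 2)
        ≤ 1 - α := by
  set Kt : ℕ → ℝ :=
    fun n => (1 + ((n : ℝ) + 1) * γ) * (((n : ℝ) + 2) - α - ((n : ℝ) + 1) * α * β) with hKt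
  set Dt : ℕ → ℝ := fun n => (1 + β * ((n : ℝ) + 1)) * (1 + γ * ((n : ℝ) + 1)) with hDt
  set Ncomp : ℂ → ℂ :=
    fun z => z * deriv f z + (γ : ℂ) * z ^ 2 * deriv (deriv f) z with hNc
  set Dcomp : ℂ → ℂ := fun z => (γ : ℂ) * z * (deriv f z + (β : ℂ) * z * deriv (deriv f) z) +
    (1 - (γ : ℂ)) * ((β : ℂ) * z * deriv f z + (1 - (β : ℂ)) * f z) with hDc
  -- key per-radius computation
  have keymain : ∀ r : ℝ, 0 < r → r < 1 → ∃ Nr Dr : ℝ,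
      Ncomp r = (Nr : ℂ) ∧ Dcomp r = (Dr : ℂ) ∧
      HasSum (fun n : ℕ => Dt n * a (n + 2) * r ^ (n + 2)) (r - Dr) ∧
      HasSum (fun n : ℕ => Kt n * a (n + 2) * r ^ (n + 2)) ((1 - α) * r - (Nr - α * Dr)) := by
    intro r hr0 hr1
    obtain ⟨F, F', F'', hFv, hF'v, hF''v, hF, hF', hF''⟩ := aux_sums a f ha hf hr0 hr1
    set um : ℕ → ℝ := fun m => crC a m * r ^ m with hum
    set vm : ℕ → ℝ := fun m => (m : ℝ) * crC a m * r ^ m with hvm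
    set wm : ℕ → ℝ := fun m => ((m : ℝ) - 1) * (m : ℝ) * crC a m * r ^ m with hwm
    have hu : HasSum um F := hF
    have hv : HasSum vm (r * F') := by
      have h1 : HasSum (fun n : ℕ => vm (n + 1)) (r * F') := by
        refine (hF'.mul_left r).congr_fun fun n => ?_
        simp only [hvm]
        push_cast
        ring
      have := (hasSum_nat_add_iff (f := vm) 1).1 h1
      simpa [hvm] using this
    have hw : HasSum wm (r ^ 2 * F'') := by
      have h1 : HasSum (fun n : ℕ => wm (n + 2)) (r ^ 2 * F'') := by
        refine (hF''.mul_left (r ^ 2)).congr_fun fun n => ?_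
        simp only [hwm]
        push_cast
        ring
      have := (hasSum_nat_add_iff (f := wm) 2).1 h1
      simpa [hwm, Finset.sum_range_succ] using this
    set Nrv : ℝ := r * F' + γ * (r ^ 2 * F'') with hNrv
    set Drv : ℝ := γ * (r * F' + β * (r ^ 2 * F'')) +
      (1 - γ) * (β * (r * F') + (1 - β) * F) with hDrv
    have hNval : Ncomp r = (Nrv : ℂ) := by
      rw [hNc]
      simp only [hFv, hF'v, hF''v, hNrv]
      push_cast
      ring
    have hDval : Dcomp r = (Drv : ℂ) := by
      rw [hDc]
      simp only [hFv, hF'v, hF''v, hDrv]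
      push_cast
      ring
    have hD : HasSum (fun m => γ * (vm m + β * wm m) +
        (1 - γ) * (β * vm m + (1 - β) * um m)) Drv :=
      ((hv.add (hw.mul_left β)).mul_left γ).add
        (((hv.mul_left β).add (hu.mul_left (1 - β))).mul_left (1 - γ))
    have hN : HasSum (fun m => (vm m + γ * wm m) - α * (γ * (vm m + β * wm m) +
        (1 - γ) * (β * vm m + (1 - β) * um m))) (Nrv - α * Drv) :=
      (hv.add (hw.mul_left γ)).sub (hD.mul_left α)
    refine ⟨Nrv, Drv, hNval, hDval, ?_, ?_⟩
    · -- D series shifted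
      have hsum2 : (Drv - r) + ∑ i ∈ Finset.range 2, (γ * (vm i + β * wm i) +
          (1 - γ) * (β * vm i + (1 - β) * um i)) = Drv := by
        simp only [Finset.sum_range_succ, Finset.sum_range_zero, hum, hvm, hwm, crC]
        push_cast
        ring
      have h2 : HasSum (fun m => γ * (vm m + β * wm m) +
          (1 - γ) * (β * vm m + (1 - β) * um m)) ((Drv - r) +
          ∑ i ∈ Finset.range 2, (γ * (vm i + β * wm i) +
            (1 - γ) * (β * vm i + (1 - β) * um i))) := by rw [hsum2]; exact hD
      have h3 := (hasSum_nat_add_iff 2).2 h2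
      have h4 := h3.neg
      have h5 : HasSum (fun n : ℕ => Dt n * a (n + 2) * r ^ (n + 2)) (-(Drv - r)) := by
        refine h4.congr_fun fun n => ?_
        simp only [hum, hvm, hwm, hDt, crC]
        push_cast
        ring
      simpa [neg_sub] using h5
    · -- K series shifted
      have hsum2 : (((Nrv - α * Drv) - (1 - α) * r) +
          ∑ i ∈ Finset.range 2, ((vm i + γ * wm i) - α * (γ * (vm i + β * wm i) +
            (1 - γ) * (β * vm i + (1 - β) * um i)))) = Nrv - α * Drv := by
        simp only [Finset.sum_range_succ, Finset.sum_range_zero, hum, hvm, hwm, crC]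
        push_cast
        ring
      have h2 : HasSum (fun m => (vm m + γ * wm m) - α * (γ * (vm m + β * wm m) +
          (1 - γ) * (β * vm m + (1 - β) * um m))) (((Nrv - α * Drv) - (1 - α) * r) +
          ∑ i ∈ Finset.range 2, ((vm i + γ * wm i) - α * (γ * (vm i + β * wm i) +
            (1 - γ) * (β * vm i + (1 - β) * um i)))) := by rw [hsum2]; exact hN
      have h3 := (hasSum_nat_add_iff 2).2 h2
      have h4 := h3.neg
      have h5 : HasSum (fun n : ℕ => Kt n * a (n + 2) * r ^ (n + 2))
          (-((Nrv - α * Drv) - (1 - α) * r)) := by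
        refine h4.congr_fun fun n => ?_
        simp only [hum, hvm, hwm, hKt, crC]
        push_cast
        ring
      have h6 : -((Nrv - α * Drv) - (1 - α) * r) = (1 - α) * r - (Nrv - α * Drv) := by ring
      rwa [h6] at h5
    -- basic facts
  have hmemball : ∀ r : ℝ, 0 < r → r < 1 →
      ((r : ℝ) : ℂ) ∈ Metric.ball (0 : ℂ) 1 ∧ ((r : ℝ) : ℂ) ≠ 0 := by
    intro r hr0 hr1
    constructor
    · rw [Metric.mem_ball, dist_zero_right]
      have : |r| < 1 := abs_lt.2 ⟨by linarith, hr1⟩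
      simpa using this
    · exact_mod_cast hr0.ne'
  have hrel : ∀ r : ℝ, 0 < r → r < 1 → ∀ Nr Dr : ℝ, Ncomp r = (Nr : ℂ) → Dcomp r = (Dr : ℂ) →
      α < Nr / Dr := by
    intro r hr0 hr1 Nr Dr hNv hDv
    obtain ⟨hmem, hne⟩ := hmemball r hr0 hr1
    have h := hre _ hmem hne
    have he : ((Ncomp ((r : ℝ) : ℂ)) / (Dcomp ((r : ℝ) : ℂ))).re = Nr / Dr := by
      rw [hNv, hDv, ← Complex.ofReal_div, Complex.ofReal_re]
    rw [hNc, hDc] at he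
    simp only at he
    rwa [he] at h
  have hDne : ∀ r : ℝ, 0 < r → r < 1 → ∀ Nr Dr : ℝ,
      Ncomp r = (Nr : ℂ) → Dcomp r = (Dr : ℂ) → Dr ≠ 0 := by
    intro r hr0 hr1 Nr Dr hNv hDv h0
    have := hrel r hr0 hr1 Nr Dr hNv hDv
    rw [h0, div_zero] at this
    linarith
  have hDtnn : ∀ n : ℕ, 0 ≤ Dt n := by
    intro n
    have hn : (0 : ℝ) ≤ (n : ℝ) := Nat.cast_nonneg n
    simp only [hDt]
    have h1 : (0 : ℝ) ≤ 1 + β * ((n : ℝ) + 1) := by nlinarith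
    have h2 : (0 : ℝ) ≤ 1 + γ * ((n : ℝ) + 1) := by nlinarith
    exact mul_nonneg h1 h2
  have hKtnn : ∀ n : ℕ, 0 ≤ Kt n := by
    intro n
    have hn : (0 : ℝ) ≤ (n : ℝ) := Nat.cast_nonneg n
    simp only [hKt]
    have h1 : (0 : ℝ) ≤ 1 + ((n : ℝ) + 1) * γ := by nlinarith
    have h2 : (0 : ℝ) ≤ ((n : ℝ) + 2) - α - ((n : ℝ) + 1) * α * β := by
      nlinarith [mul_nonneg hα0 hβ0, mul_nonneg hn (mul_nonneg hα0 (sub_nonneg.2 hβ1.le)),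
        mul_nonneg hn (sub_nonneg.2 hα1.le), mul_nonneg hα0 (sub_nonneg.2 hβ1.le)]
    exact mul_nonneg h1 h2
  -- continuity of Dcomp
  have hp := aux_hasFP a f ha hf
  have hq := aux_deriv_fps hp
  have hq2 := aux_deriv_fps hq
  have hcD : ContinuousOn Dcomp (EMetric.ball (0 : ℂ) 1) := by
    have hcf : ContinuousOn f (EMetric.ball (0 : ℂ) 1) := hp.continuousOn
    have hcd : ContinuousOn (deriv f) (EMetric.ball (0 : ℂ) 1) := hq.continuousOn
    have hcd2 : ContinuousOn (deriv (deriv f)) (EMetric.ball (0 : ℂ) 1) := hq2.continuousOn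
    rw [hDc]
    apply ContinuousOn.add
    · exact (continuousOn_const.mul continuousOn_id).mul
        (hcd.add ((continuousOn_const.mul continuousOn_id).mul hcd2))
    · exact continuousOn_const.mul
        (((continuousOn_const.mul continuousOn_id).mul hcd).add (continuousOn_const.mul hcf))
  -- positivity of the denominator
  have hDpos : ∀ r : ℝ, 0 < r → r < 1 → ∀ Nr Dr : ℝ,
      Ncomp r = (Nr : ℂ) → Dcomp r = (Dr : ℂ) → 0 < Dr := by
    intro r hr0 hr1 Nr Dr hNv hDv
    obtain ⟨Nr', Dr', hNv', hDv', hDsum', _⟩ := keymain r hr0 hr1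
    have hDD : Dr' = Dr := by
      have := hDv'.symm.trans hDv
      exact_mod_cast this
    rw [hDD] at hDsum'
    set SD := r - Dr with hSDdef
    have hSDnn : 0 ≤ SD := by
      refine hasSum_le (fun n => ?_) hasSum_zero hDsum'
      exact mul_nonneg (mul_nonneg (hDtnn n) (ha _)) (pow_nonneg hr0.le _)
    have hSD1 : (0 : ℝ) < SD + 1 := by linarith
    set s := min (r / 2) (r ^ 2 / (2 * (SD + 1))) with hsdef
    have hs0 : 0 < s := lt_min (by linarith) (by positivity)
    have hsr2 : s ≤ r / 2 := min_le_left _ _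
    have hsr : s < r := by linarith
    have hs1 : s < 1 := by linarith
    obtain ⟨Ns, Ds, hNsv, hDsv, hDsum_s, _⟩ := keymain s hs0 hs1
    have hcomp : s - Ds ≤ s ^ 2 / r ^ 2 * SD := by
      refine hasSum_le (fun n => ?_) hDsum_s (hDsum'.mul_left (s ^ 2 / r ^ 2))
      have hsn : s ^ n ≤ r ^ n := pow_le_pow_left₀ hs0.le hsr.le n
      have key2 : s ^ (n + 2) ≤ s ^ 2 / r ^ 2 * r ^ (n + 2) := by
        have e : s ^ 2 / r ^ 2 * r ^ (n + 2) = s ^ 2 * r ^ n := by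
          field_simp
          ring
        rw [e]
        calc s ^ (n + 2) = s ^ 2 * s ^ n := by ring
          _ ≤ s ^ 2 * r ^ n := by nlinarith [sq_nonneg s]
      calc Dt n * a (n + 2) * s ^ (n + 2) ≤ Dt n * a (n + 2) * (s ^ 2 / r ^ 2 * r ^ (n + 2)) :=
            mul_le_mul_of_nonneg_left key2 (mul_nonneg (hDtnn n) (ha _))
        _ = s ^ 2 / r ^ 2 * (Dt n * a (n + 2) * r ^ (n + 2)) := by ring
    have hDs_pos : 0 < Ds := by
      have hsle : s ≤ r ^ 2 / (2 * (SD + 1)) := min_le_right _ _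
      have hr2 : (0 : ℝ) < r ^ 2 := by positivity
      have h0' : s * (2 * (SD + 1)) ≤ r ^ 2 := (le_div_iff₀ (by linarith)).1 hsle
      have h1 : s ^ 2 * SD * 2 ≤ s * r ^ 2 := by
        nlinarith [mul_le_mul_of_nonneg_left h0' hs0.le, sq_nonneg s]
      have h2 : s ^ 2 / r ^ 2 * SD ≤ s / 2 := by
        rw [div_mul_eq_mul_div, div_le_div_iff₀ hr2 two_pos]
        linarith
      linarith
    by_contra hDr_nonpos
    push_neg at hDr_nonpos
    have hDrne : Dr ≠ 0 := hDne r hr0 hr1 Nr Dr hNv hDv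
    have hDrneg : Dr < 0 := lt_of_le_of_ne hDr_nonpos hDrne
    have hmaps : Set.MapsTo (fun t : ℝ => ((t : ℝ) : ℂ)) (Set.Icc s r)
        (EMetric.ball (0 : ℂ) 1) := by
      intro t ht
      apply mem_emetric_ball_zero_iff.2
      have habs : ‖((t : ℝ) : ℂ)‖ = |t| := by simp
      have : |t| < 1 := by
        rw [abs_lt]
        constructor <;> [linarith [ht.1]; linarith [ht.2]]
      rw [show ((1 : ENNReal)) = ((1 : NNReal) : ENNReal) by simp]
      rw [enorm_eq_nnnorm, ENNReal.coe_lt_coe]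
      rw [← NNReal.coe_lt_coe]
      simpa [habs] using this
    have hcont : ContinuousOn (fun t : ℝ => (Dcomp ((t : ℝ) : ℂ)).re) (Set.Icc s r) :=
      Complex.continuous_re.comp_continuousOn
        (hcD.comp Complex.continuous_ofReal.continuousOn hmaps)
    have hfr : (Dcomp ((r : ℝ) : ℂ)).re = Dr := by rw [hDv]; simp
    have hfs : (Dcomp ((s : ℝ) : ℂ)).re = Ds := by rw [hDsv]; simp
    have hsub := intermediate_value_Icc' hsr.le hcont
    have h0mem : (0 : ℝ) ∈ Set.Icc ((fun t : ℝ => (Dcomp ((t : ℝ) : ℂ)).re) r)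
        ((fun t : ℝ => (Dcomp ((t : ℝ) : ℂ)).re) s) := by
      simp only [hfr, hfs]
      exact ⟨hDrneg.le, hDs_pos.le⟩
    obtain ⟨t, ht, hDt0⟩ := hsub h0mem
    have ht0 : 0 < t := lt_of_lt_of_le hs0 ht.1
    have ht1 : t < 1 := lt_of_le_of_lt ht.2 hr1
    obtain ⟨Nt, Dtv, hNtv, hDtv, _, _⟩ := keymain t ht0 ht1
    have hDtv0 : Dtv = 0 := by
      have : (Dcomp ((t : ℝ) : ℂ)).re = Dtv := by rw [hDtv]; simp
      rw [← this]
      exact hDt0.symm ▸ rfl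
    exact hDne t ht0 ht1 Nt Dtv hNtv hDtv hDtv0
  -- the partial sums are bounded
  have hbound : ∀ r : ℝ, 0 < r → r < 1 → ∀ m : ℕ,
      ∑ n ∈ Finset.range m, Kt n * a (n + 2) * r ^ (n + 2) ≤ (1 - α) * r := by
    intro r hr0 hr1 m
    obtain ⟨Nr, Dr, hNv, hDv, hDsum, hKsum⟩ := keymain r hr0 hr1
    have hDpos' := hDpos r hr0 hr1 Nr Dr hNv hDv
    have hlt := hrel r hr0 hr1 Nr Dr hNv hDv
    have h1 : α * Dr < Nr := by rwa [lt_div_iff₀ hDpos'] at hlt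
    have h3 := sum_le_hasSum (Finset.range m)
      (fun n _ => mul_nonneg (mul_nonneg (hKtnn n) (ha _)) (pow_nonneg hr0.le _)) hKsum
    linarith
  have hfin : ∀ m : ℕ, ∑ n ∈ Finset.range m, Kt n * a (n + 2) ≤ 1 - α := by
    intro m
    have hc : Continuous (fun r : ℝ => ∑ n ∈ Finset.range m, Kt n * a (n + 2) * r ^ (n + 2)) :=
      continuous_finset_sum _ fun i _ => continuous_const.mul (continuous_pow _)
    have htend := (hc.tendsto 1).mono_left (nhdsWithin_le_nhds (s := Set.Iio (1 : ℝ)))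
    simp only [one_pow, mul_one] at htend
    refine le_of_tendsto htend ?_
    filter_upwards [Ioo_mem_nhdsLT_of_mem (show (1 : ℝ) ∈ Set.Ioc 0 1 from ⟨one_pos, le_refl 1⟩)]
      with r hr
    calc ∑ n ∈ Finset.range m, Kt n * a (n + 2) * r ^ (n + 2) ≤ (1 - α) * r :=
          hbound r hr.1 hr.2 m
      _ ≤ 1 - α := by nlinarith [hr.1, hr.2]
  have hKann : ∀ n : ℕ, 0 ≤ Kt n * a (n + 2) := fun n => mul_nonneg (hKtnn n) (ha _)
  have hsumm : Summable (fun n : ℕ => Kt n * a (n + 2)) := summable_of_sum_range_le hKann hfin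
  refine ⟨hsumm, ?_⟩
  exact le_of_tendsto hsumm.hasSum.tendsto_sum_nat (Filter.Eventually.of_forall hfin)
end

section
/- A function f(z) = z - Σ_{n≥2} a_n z^n with a_n ≥ 0 belongs to TS*C(α,β;γ) if and only if Σ_{n≥2} (1+(n-1)γ)(n-α-(n-1)αβ) a_n ≤ 1-α. -/
open Complex Topology Filter

private lemma aux_geom (k : ℕ) {x : ℝ} (hx : 0 ≤ x) (h1 : x < 1) :
    Summable (fun n : ℕ => ((n : ℝ) + 2) ^ k * x ^ n) := by
  have h3 : Summable (fun n : ℕ => (3:ℝ)^k * ((n:ℝ) ^ k * x ^ n)) := by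
    exact (summable_pow_mul_geometric_of_norm_lt_one (R := ℝ) k
      (by rwa [Real.norm_eq_abs, _root_.abs_of_nonneg hx])).mul_left ((3:ℝ)^k)
  refine Summable.of_norm_bounded_eventually_nat h3 ?_
  filter_upwards [Filter.eventually_ge_atTop 1] with n hn
  have h2 : ((n:ℝ) + 2) ≤ 3 * (n:ℝ) := by
    have : (1:ℝ) ≤ (n:ℝ) := by exact_mod_cast hn
    linarith
  have hxp : (0:ℝ) ≤ x ^ n := pow_nonneg hx n
  rw [Real.norm_eq_abs, _root_.abs_of_nonneg (by positivity)]
  calc ((n:ℝ) + 2) ^ k * x ^ n ≤ (3 * (n:ℝ)) ^ k * x ^ n := by gcongr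
    _ = 3 ^ k * ((n:ℝ) ^ k * x ^ n) := by ring

private lemma aux_master {A : ℕ → ℝ} (hA : ∀ n, 0 ≤ A n)
    (hbase : ∀ r : ℝ, 0 < r → r < 1 → Summable (fun n : ℕ => A n * r ^ (n + 2)))
    (k : ℕ) {t : ℝ} (ht : 0 ≤ t) (ht1 : t < 1) :
    Summable (fun n : ℕ => ((n : ℝ) + 2) ^ k * A n * t ^ n) := by
  set r : ℝ := (t + 1) / 2 with hr
  have hr0 : 0 < r := by rw [hr]; linarith
  have hr1 : r < 1 := by rw [hr]; linarith
  have htr : t < r := by rw [hr]; linarith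
  have hs := hbase r hr0 hr1
  set C : ℝ := ∑' n, A n * r ^ (n + 2) with hC
  have hbd : ∀ n, A n * r ^ (n + 2) ≤ C := by
    intro n
    exact Summable.le_tsum hs n fun m _ => mul_nonneg (hA m) (by positivity)
  clear_value r C
  have hsum : Summable (fun n : ℕ => (C / r ^ 2) * (((n:ℝ) + 2) ^ k * (t / r) ^ n)) :=
    (aux_geom k (by positivity) (by rw [div_lt_one hr0]; exact htr)).mul_left _
  refine Summable.of_nonneg_of_le (fun n => mul_nonneg (mul_nonneg (by positivity) (hA n)) (by positivity)) (fun n => ?_) hsum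
  have hAn : A n ≤ C / r ^ (n + 2) := by
    rw [le_div_iff₀ (by positivity)]
    linarith [hbd n]
  calc ((n:ℝ) + 2) ^ k * A n * t ^ n ≤ ((n:ℝ) + 2) ^ k * (C / r ^ (n + 2)) * t ^ n := by gcongr
    _ = C / r ^ 2 * (((n:ℝ) + 2) ^ k * (t / r) ^ n) := by
        rw [div_pow, pow_add]
        field_simp

private lemma aux_normsum {A : ℕ → ℝ} (hA : ∀ n, 0 ≤ A n)
    (hbase : ∀ r : ℝ, 0 < r → r < 1 → Summable (fun n : ℕ => A n * r ^ (n + 2)))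
    {w : ℕ → ℝ} (hw : ∀ n, |w n| ≤ ((n : ℝ) + 2) ^ 2) (m : ℕ) {t : ℝ} (h0 : 0 ≤ t) (ht : t < 1) :
    Summable (fun n : ℕ => |w n| * A n * t ^ (n + m)) := by
  refine Summable.of_nonneg_of_le
    (fun n => mul_nonneg (mul_nonneg (abs_nonneg _) (hA n)) (by positivity))
    (fun n => ?_) (aux_master hA hbase 2 h0 ht)
  calc |w n| * A n * t ^ (n + m)
      ≤ ((n:ℝ) + 2) ^ 2 * A n * t ^ (n + m) :=
        mul_le_mul_of_nonneg_right (mul_le_mul_of_nonneg_right (hw n) (hA n)) (by positivity)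
    _ ≤ ((n:ℝ) + 2) ^ 2 * A n * t ^ n :=
        mul_le_mul_of_nonneg_left (pow_le_pow_of_le_one h0 ht.le (Nat.le_add_right n m))
          (mul_nonneg (by positivity) (hA n))

private lemma aux_normsumC {A : ℕ → ℝ} (hA : ∀ n, 0 ≤ A n)
    (hbase : ∀ r : ℝ, 0 < r → r < 1 → Summable (fun n : ℕ => A n * r ^ (n + 2)))
    {w : ℕ → ℝ} (hw : ∀ n, |w n| ≤ ((n : ℝ) + 2) ^ 2) (m : ℕ) {z : ℂ} (hz : ‖z‖ < 1) :
    Summable (fun n : ℕ => ‖((w n * A n : ℝ) : ℂ) * z ^ (n + m)‖) := by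
  have := aux_normsum hA hbase hw m (norm_nonneg z) hz
  refine this.congr fun n => ?_
  rw [norm_mul, norm_pow, Complex.norm_real, Real.norm_eq_abs, abs_mul,
    _root_.abs_of_nonneg (hA n)]

private lemma aux_sumR {A : ℕ → ℝ} (hA : ∀ n, 0 ≤ A n)
    (hbase : ∀ r : ℝ, 0 < r → r < 1 → Summable (fun n : ℕ => A n * r ^ (n + 2)))
    {w : ℕ → ℝ} (hw : ∀ n, |w n| ≤ ((n : ℝ) + 2) ^ 2) {t : ℝ} (h0 : 0 ≤ t) (ht : t < 1) :
    Summable (fun n : ℕ => w n * A n * t ^ (n + 2)) := by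
  refine summable_abs_iff.mp (((aux_normsum hA hbase hw 2 h0 ht).congr fun n => ?_))
  rw [abs_mul, abs_mul, _root_.abs_of_nonneg (hA n), _root_.abs_of_nonneg (pow_nonneg h0 _)]

private lemma aux_sumC {A : ℕ → ℝ} (hA : ∀ n, 0 ≤ A n)
    (hbase : ∀ r : ℝ, 0 < r → r < 1 → Summable (fun n : ℕ => A n * r ^ (n + 2)))
    {w : ℕ → ℝ} (hw : ∀ n, |w n| ≤ ((n : ℝ) + 2) ^ 2) {z : ℂ} (hz : ‖z‖ < 1) :
    Summable (fun n : ℕ => ((w n * A n : ℝ) : ℂ) * z ^ (n + 2)) :=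
  (aux_normsumC hA hbase hw 2 hz).of_norm

private lemma aux_hasDeriv {A : ℕ → ℝ} (hA : ∀ n, 0 ≤ A n)
    (hbase : ∀ r : ℝ, 0 < r → r < 1 → Summable (fun n : ℕ => A n * r ^ (n + 2)))
    {w : ℕ → ℝ} (hw : ∀ n, |w n| ≤ ((n : ℝ) + 2) ^ 2) (m : ℕ) {z : ℂ} (hz : ‖z‖ < 1) :
    HasDerivAt (fun y : ℂ => ∑' n : ℕ, ((w n * A n : ℝ) : ℂ) * y ^ (n + m + 1))
      (∑' n : ℕ, ((((n : ℝ) + (m : ℝ) + 1) * w n * A n : ℝ) : ℂ) * z ^ (n + m)) z := by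
  set r : ℝ := (‖z‖ + 1) / 2 with hrdef
  have h0 : 0 ≤ ‖z‖ := norm_nonneg z
  have hr0 : 0 < r := by rw [hrdef]; linarith
  have hr1 : r < 1 := by rw [hrdef]; linarith
  have hzr : ‖z‖ < r := by rw [hrdef]; linarith
  have key := hasDerivAt_tsum_of_isPreconnected
    (u := fun n : ℕ => ((m : ℝ) + 1) * r ^ m * (((n:ℝ) + 2) ^ 3 * A n * r ^ n))
    (g := fun n : ℕ => fun y : ℂ => ((w n * A n : ℝ) : ℂ) * y ^ (n + m + 1))
    (g' := fun n : ℕ => fun y : ℂ => ((w n * A n : ℝ) : ℂ) * (((n + m + 1 : ℕ) : ℂ) * y ^ (n + m)))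
    (t := Metric.ball (0 : ℂ) r) (y₀ := 0) (y := z)
    (((aux_master hA hbase 3 hr0.le hr1).mul_left _))
    Metric.isOpen_ball (convex_ball _ _).isPreconnected
    (fun n y _ => ((hasDerivAt_pow (n + m + 1) y).const_mul _).congr_deriv (by
      simp [Nat.add_sub_cancel]))
    (fun n y hy => ?_) (by simpa using hr0) (by
      refine summable_zero.congr fun n => ?_
      simp [zero_pow (Nat.succ_ne_zero (n + m))])
    (by simpa [Metric.mem_ball, dist_zero_right] using hzr)
  · refine key.congr_deriv ?_
    refine tsum_congr fun n => ?_
    push_cast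
    ring
  · rw [Metric.mem_ball, dist_zero_right] at hy
    rw [norm_mul, norm_mul, norm_pow, Complex.norm_real, Complex.norm_natCast]
    have h1 : |w n * A n| ≤ ((n:ℝ) + 2) ^ 2 * A n := by
      rw [abs_mul, _root_.abs_of_nonneg (hA n)]
      exact mul_le_mul_of_nonneg_right (hw n) (hA n)
    have h2 : ((n + m + 1 : ℕ) : ℝ) ≤ ((n : ℝ) + 2) * ((m : ℝ) + 1) := by
      push_cast
      nlinarith [Nat.cast_nonneg (α := ℝ) n, Nat.cast_nonneg (α := ℝ) m]
    have h3 : ‖y‖ ^ (n + m) ≤ r ^ (n + m) := by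
      exact pow_le_pow_left₀ (norm_nonneg y) hy.le _
    calc ‖(w n * A n : ℝ)‖ * (((n + m + 1 : ℕ) : ℝ) * ‖y‖ ^ (n + m))
        ≤ (((n:ℝ) + 2) ^ 2 * A n) * ((((n : ℝ) + 2) * ((m : ℝ) + 1)) * r ^ (n + m)) := by
          rw [Real.norm_eq_abs]
          exact mul_le_mul h1 (mul_le_mul h2 h3 (by positivity) (by positivity))
            (by positivity) (mul_nonneg (by positivity) (hA n))
      _ = ((m : ℝ) + 1) * r ^ m * (((n:ℝ) + 2) ^ 3 * A n * r ^ n) := by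
          rw [pow_add]
          ring

private lemma derivA {A : ℕ → ℝ} (hA : ∀ n, 0 ≤ A n)
    (hbase : ∀ r : ℝ, 0 < r → r < 1 → Summable (fun n : ℕ => A n * r ^ (n + 2)))
    {z : ℂ} (hz : ‖z‖ < 1) :
    HasDerivAt (fun y : ℂ => ∑' n : ℕ, ((A n : ℝ) : ℂ) * y ^ (n + 2))
      (∑' n : ℕ, ((((n : ℝ) + 2) * A n : ℝ) : ℂ) * z ^ (n + 1)) z := by
  have hw : ∀ n : ℕ, |(1:ℝ)| ≤ ((n : ℝ) + 2) ^ 2 := by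
    intro n
    rw [abs_one]
    nlinarith [Nat.cast_nonneg (α := ℝ) n]
  have h := aux_hasDeriv hA hbase (w := fun _ => (1:ℝ)) hw 1 hz
  exact (h.congr_deriv (tsum_congr fun n => by push_cast; ring)).congr_of_eventuallyEq
    (Filter.Eventually.of_forall fun y => tsum_congr fun n => by push_cast; ring)

private lemma derivB {A : ℕ → ℝ} (hA : ∀ n, 0 ≤ A n)
    (hbase : ∀ r : ℝ, 0 < r → r < 1 → Summable (fun n : ℕ => A n * r ^ (n + 2)))
    {z : ℂ} (hz : ‖z‖ < 1) :
    HasDerivAt (fun y : ℂ => ∑' n : ℕ, ((((n : ℝ) + 2) * A n : ℝ) : ℂ) * y ^ (n + 1))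
      (∑' n : ℕ, ((((n : ℝ) + 1) * ((n : ℝ) + 2) * A n : ℝ) : ℂ) * z ^ n) z := by
  have hw : ∀ n : ℕ, |((n : ℝ) + 2)| ≤ ((n : ℝ) + 2) ^ 2 := by
    intro n
    rw [_root_.abs_of_nonneg (by positivity)]
    nlinarith [Nat.cast_nonneg (α := ℝ) n]
  have h := aux_hasDeriv hA hbase (w := fun n => ((n : ℝ) + 2)) hw 0 hz
  exact (h.congr_deriv (tsum_congr fun n => by push_cast; ring)).congr_of_eventuallyEq
    (Filter.Eventually.of_forall fun y => tsum_congr fun n => by push_cast; ring)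

private lemma derivW {A : ℕ → ℝ} (hA : ∀ n, 0 ≤ A n)
    (hbase : ∀ r : ℝ, 0 < r → r < 1 → Summable (fun n : ℕ => A n * r ^ (n + 2)))
    {w : ℕ → ℝ} (hw : ∀ n, |w n| ≤ ((n : ℝ) + 2) ^ 2) {z : ℂ} (hz : ‖z‖ < 1) :
    HasDerivAt (fun y : ℂ => ∑' n : ℕ, ((w n * A n : ℝ) : ℂ) * y ^ (n + 2))
      (∑' n : ℕ, ((((n : ℝ) + 2) * w n * A n : ℝ) : ℂ) * z ^ (n + 1)) z := by
  have h := aux_hasDeriv hA hbase hw 1 hz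
  exact (h.congr_deriv (tsum_congr fun n => by push_cast; ring)).congr_of_eventuallyEq
    (Filter.Eventually.of_forall fun y => tsum_congr fun n => by push_cast; ring)

private lemma sum0C {A : ℕ → ℝ} (hA : ∀ n, 0 ≤ A n)
    (hbase : ∀ r : ℝ, 0 < r → r < 1 → Summable (fun n : ℕ => A n * r ^ (n + 2)))
    {z : ℂ} (hz : ‖z‖ < 1) :
    Summable (fun n : ℕ => ((((n : ℝ) + 1) * ((n : ℝ) + 2) * A n : ℝ) : ℂ) * z ^ n) := by
  have hw : ∀ n : ℕ, |((n : ℝ) + 1) * ((n : ℝ) + 2)| ≤ ((n : ℝ) + 2) ^ 2 := by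
    intro n
    rw [_root_.abs_of_nonneg (by positivity)]
    nlinarith [Nat.cast_nonneg (α := ℝ) n]
  refine ((aux_normsumC hA hbase hw 0 hz).of_norm).congr fun n => ?_
  push_cast
  ring

private lemma sum1C {A : ℕ → ℝ} (hA : ∀ n, 0 ≤ A n)
    (hbase : ∀ r : ℝ, 0 < r → r < 1 → Summable (fun n : ℕ => A n * r ^ (n + 2)))
    {z : ℂ} (hz : ‖z‖ < 1) :
    Summable (fun n : ℕ => ((((n : ℝ) + 2) * A n : ℝ) : ℂ) * z ^ (n + 1)) := by
  have hw : ∀ n : ℕ, |((n : ℝ) + 2)| ≤ ((n : ℝ) + 2) ^ 2 := by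
    intro n
    rw [_root_.abs_of_nonneg (by positivity)]
    nlinarith [Nat.cast_nonneg (α := ℝ) n]
  exact (aux_normsumC hA hbase hw 1 hz).of_norm

private lemma sum2C {A : ℕ → ℝ} (hA : ∀ n, 0 ≤ A n)
    (hbase : ∀ r : ℝ, 0 < r → r < 1 → Summable (fun n : ℕ => A n * r ^ (n + 2)))
    {z : ℂ} (hz : ‖z‖ < 1) :
    Summable (fun n : ℕ => ((A n : ℝ) : ℂ) * z ^ (n + 2)) := by
  have hw : ∀ n : ℕ, |(1:ℝ)| ≤ ((n : ℝ) + 2) ^ 2 := by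
    intro n
    rw [abs_one]
    nlinarith [Nat.cast_nonneg (α := ℝ) n]
  refine ((aux_normsumC hA hbase hw 2 hz).of_norm).congr fun n => ?_
  push_cast
  ring

private def wc (γ : ℝ) (n : ℕ) : ℝ := ((n : ℝ) + 2) * (1 + ((n : ℝ) + 1) * γ)
private def wd (β γ : ℝ) (n : ℕ) : ℝ := (1 + ((n : ℝ) + 1) * γ) * (1 + ((n : ℝ) + 1) * β)
private def we (α β γ : ℝ) (n : ℕ) : ℝ :=
  (1 + ((n : ℝ) + 1) * γ) * (((n : ℝ) + 2) - α - ((n : ℝ) + 1) * α * β)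

theorem stmt3 (α β γ : ℝ) (hα0 : 0 ≤ α) (hα1 : α < 1) (hβ0 : 0 ≤ β) (hβ1 : β < 1)
    (hγ0 : 0 ≤ γ) (hγ1 : γ ≤ 1) (f : ℂ → ℂ) (a : ℕ → ℝ) (ha : ∀ n, 0 ≤ a n)
    (hf : ∀ z ∈ Metric.ball (0 : ℂ) 1,
      HasSum (fun n : ℕ => ((a (n + 2) : ℝ) : ℂ) * z ^ (n + 2)) (z - f z)) :
    (∀ z ∈ Metric.ball (0 : ℂ) 1, z ≠ 0 →
      α < (((z * deriv f z + (γ : ℂ) * z ^ 2 * deriv (deriv f) z) /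
        ((γ : ℂ) * z * (deriv f z + (β : ℂ) * z * deriv (deriv f) z) +
          (1 - (γ : ℂ)) * ((β : ℂ) * z * deriv f z + (1 - (β : ℂ)) * f z))).re)) ↔
    (Summable (fun n : ℕ =>
      (1 + ((n : ℝ) + 1) * γ) * (((n : ℝ) + 2) - α - ((n : ℝ) + 1) * α * β) * a (n + 2)) ∧
    ∑' n : ℕ,
      (1 + ((n : ℝ) + 1) * γ) * (((n : ℝ) + 2) - α - ((n : ℝ) + 1) * α * β) * a (n + 2)
        ≤ 1 - α) := by
  have h1α : (0:ℝ) < 1 - α := by linarith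
  have hA : ∀ n : ℕ, 0 ≤ a (n + 2) := fun n => ha _
  have hbase : ∀ r : ℝ, 0 < r → r < 1 → Summable (fun n : ℕ => a (n + 2) * r ^ (n + 2)) := by
    intro r hr0 hr1
    have hmem : (r : ℂ) ∈ Metric.ball (0 : ℂ) 1 := by
      rw [Metric.mem_ball, dist_zero_right, Complex.norm_real, Real.norm_eq_abs,
        _root_.abs_of_pos hr0]
      exact hr1
    have hs := (hf _ hmem).summable
    rw [← Complex.summable_ofReal]
    exact hs.congr fun n => by push_cast; ring
  have hnn : ∀ n : ℕ, (0:ℝ) ≤ (n : ℝ) := fun n => Nat.cast_nonneg n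
  have hg1 : ∀ n : ℕ, 0 ≤ 1 + ((n : ℝ) + 1) * γ ∧ 1 + ((n : ℝ) + 1) * γ ≤ (n : ℝ) + 2 := by
    intro n
    have h0 := hnn n
    have h1 : 0 ≤ ((n : ℝ) + 1) * γ := mul_nonneg (by linarith) hγ0
    have h2 : ((n : ℝ) + 1) * γ ≤ ((n : ℝ) + 1) * 1 :=
      mul_le_mul_of_nonneg_left hγ1 (by linarith)
    constructor <;> nlinarith
  have hb1 : ∀ n : ℕ, 0 ≤ 1 + ((n : ℝ) + 1) * β ∧ 1 + ((n : ℝ) + 1) * β ≤ (n : ℝ) + 2 := by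
    intro n
    have h0 := hnn n
    have h1 : 0 ≤ ((n : ℝ) + 1) * β := mul_nonneg (by linarith) hβ0
    have h2 : ((n : ℝ) + 1) * β ≤ ((n : ℝ) + 1) * 1 :=
      mul_le_mul_of_nonneg_left hβ1.le (by linarith)
    constructor <;> nlinarith
  have hbc : ∀ n, |wc γ n| ≤ ((n : ℝ) + 2) ^ 2 := by
    intro n
    have h0 := hnn n
    simp only [wc]
    rw [_root_.abs_of_nonneg (mul_nonneg (by linarith) (hg1 n).1)]
    calc ((n : ℝ) + 2) * (1 + ((n : ℝ) + 1) * γ) ≤ ((n : ℝ) + 2) * ((n : ℝ) + 2) :=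
          mul_le_mul_of_nonneg_left (hg1 n).2 (by linarith)
      _ = ((n : ℝ) + 2) ^ 2 := (sq _).symm
  have hdnn : ∀ n, 0 ≤ wd β γ n := by
    intro n
    exact mul_nonneg (hg1 n).1 (hb1 n).1
  have hbd : ∀ n, |wd β γ n| ≤ ((n : ℝ) + 2) ^ 2 := by
    intro n
    have h0 := hnn n
    rw [_root_.abs_of_nonneg (hdnn n)]
    simp only [wd]
    calc (1 + ((n : ℝ) + 1) * γ) * (1 + ((n : ℝ) + 1) * β)
        ≤ ((n : ℝ) + 2) * ((n : ℝ) + 2) :=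
          mul_le_mul (hg1 n).2 (hb1 n).2 (hb1 n).1 (by linarith)
      _ = ((n : ℝ) + 2) ^ 2 := (sq _).symm
  have henn : ∀ n, 0 ≤ we α β γ n := by
    intro n
    have h0 := hnn n
    have hab : α * β ≤ α := by nlinarith
    have h2f : 0 ≤ ((n : ℝ) + 1) * (1 - α * β) := mul_nonneg (by linarith) (by nlinarith)
    refine mul_nonneg (hg1 n).1 ?_
    nlinarith
  have hecd : ∀ n, we α β γ n = wc γ n - α * wd β γ n := by
    intro n
    simp only [wc, wd, we]
    ring
  have hdc : ∀ n, wd β γ n ≤ wc γ n := by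
    intro n
    have h0 := hnn n
    simp only [wc, wd]
    calc (1 + ((n : ℝ) + 1) * γ) * (1 + ((n : ℝ) + 1) * β)
        ≤ (1 + ((n : ℝ) + 1) * γ) * ((n : ℝ) + 2) :=
          mul_le_mul_of_nonneg_left (hb1 n).2 (hg1 n).1
      _ = ((n : ℝ) + 2) * (1 + ((n : ℝ) + 1) * γ) := mul_comm _ _
  have hbe : ∀ n, |we α β γ n| ≤ ((n : ℝ) + 2) ^ 2 := by
    intro n
    rw [_root_.abs_of_nonneg (henn n)]
    calc we α β γ n ≤ wc γ n := by
          rw [hecd n]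
          nlinarith [hdnn n, mul_nonneg hα0 (hdnn n)]
      _ ≤ ((n : ℝ) + 2) ^ 2 := le_trans (le_abs_self _) (hbc n)
  have hegd : ∀ n, (1 - α) * wd β γ n ≤ we α β γ n := by
    intro n
    rw [hecd n]
    nlinarith [hdc n, hdnn n]
  have hbcd : ∀ n, |wc γ n - wd β γ n| ≤ ((n : ℝ) + 2) ^ 2 := by
    intro n
    rw [_root_.abs_of_nonneg (sub_nonneg.mpr (hdc n))]
    calc wc γ n - wd β γ n ≤ wc γ n := by linarith [hdnn n]
      _ ≤ ((n : ℝ) + 2) ^ 2 := le_trans (le_abs_self _) (hbc n)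
  -- formulas for f and its derivatives on the ball
  have hfz : ∀ z : ℂ, ‖z‖ < 1 → f z = z - ∑' n : ℕ, ((a (n + 2) : ℝ) : ℂ) * z ^ (n + 2) := by
    intro z hz
    have h := (hf z (by rwa [Metric.mem_ball, dist_zero_right])).tsum_eq
    rw [h]
    ring
  have hd1 : ∀ z : ℂ, ‖z‖ < 1 →
      deriv f z = 1 - ∑' n : ℕ, ((((n : ℝ) + 2) * a (n + 2) : ℝ) : ℂ) * z ^ (n + 1) := by
    intro z hz
    have hball : Metric.ball (0 : ℂ) 1 ∈ 𝓝 z :=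
      Metric.isOpen_ball.mem_nhds (by rwa [Metric.mem_ball, dist_zero_right])
    have heq : f =ᶠ[𝓝 z] (fun y => y - ∑' n : ℕ, ((a (n + 2) : ℝ) : ℂ) * y ^ (n + 2)) :=
      Filter.eventuallyEq_of_mem hball fun y hy =>
        hfz y (by rwa [Metric.mem_ball, dist_zero_right] at hy)
    have H : HasDerivAt (fun y : ℂ => y - ∑' n : ℕ, ((a (n + 2) : ℝ) : ℂ) * y ^ (n + 2))
        (1 - ∑' n : ℕ, ((((n : ℝ) + 2) * a (n + 2) : ℝ) : ℂ) * z ^ (n + 1)) z :=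
      (hasDerivAt_id z).sub (derivA hA hbase hz)
    exact (H.congr_of_eventuallyEq heq).deriv
  have hd2 : ∀ z : ℂ, ‖z‖ < 1 →
      deriv (deriv f) z
        = -∑' n : ℕ, ((((n : ℝ) + 1) * ((n : ℝ) + 2) * a (n + 2) : ℝ) : ℂ) * z ^ n := by
    intro z hz
    have hball : Metric.ball (0 : ℂ) 1 ∈ 𝓝 z :=
      Metric.isOpen_ball.mem_nhds (by rwa [Metric.mem_ball, dist_zero_right])
    have heq : deriv f =ᶠ[𝓝 z]
        (fun y => 1 - ∑' n : ℕ, ((((n : ℝ) + 2) * a (n + 2) : ℝ) : ℂ) * y ^ (n + 1)) :=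
      Filter.eventuallyEq_of_mem hball fun y hy =>
        hd1 y (by rwa [Metric.mem_ball, dist_zero_right] at hy)
    have H : HasDerivAt
        (fun y : ℂ => 1 - ∑' n : ℕ, ((((n : ℝ) + 2) * a (n + 2) : ℝ) : ℂ) * y ^ (n + 1))
        (0 - ∑' n : ℕ, ((((n : ℝ) + 1) * ((n : ℝ) + 2) * a (n + 2) : ℝ) : ℂ) * z ^ n) z :=
      (hasDerivAt_const z 1).sub (derivB hA hbase hz)
    have := (H.congr_of_eventuallyEq heq).deriv
    rw [this]
    ring
  -- the key HasSum identities
  have key : ∀ z : ℂ, ‖z‖ < 1 →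
      HasSum (fun n : ℕ => ((wc γ n * a (n + 2) : ℝ) : ℂ) * z ^ (n + 2))
        (z - (z * deriv f z + (γ : ℂ) * z ^ 2 * deriv (deriv f) z)) ∧
      HasSum (fun n : ℕ => ((wd β γ n * a (n + 2) : ℝ) : ℂ) * z ^ (n + 2))
        (z - ((γ : ℂ) * z * (deriv f z + (β : ℂ) * z * deriv (deriv f) z) +
          (1 - (γ : ℂ)) * ((β : ℂ) * z * deriv f z + (1 - (β : ℂ)) * f z))) := by
    intro z hz
    have H0 : HasSum (fun n : ℕ => ((a (n + 2) : ℝ) : ℂ) * z ^ (n + 2))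
        (∑' n : ℕ, ((a (n + 2) : ℝ) : ℂ) * z ^ (n + 2)) := (sum2C hA hbase hz).hasSum
    have H1 : HasSum (fun n : ℕ => ((((n : ℝ) + 2) * a (n + 2) : ℝ) : ℂ) * z ^ (n + 1))
        (∑' n : ℕ, ((((n : ℝ) + 2) * a (n + 2) : ℝ) : ℂ) * z ^ (n + 1)) :=
      (sum1C hA hbase hz).hasSum
    have H2 : HasSum (fun n : ℕ => ((((n : ℝ) + 1) * ((n : ℝ) + 2) * a (n + 2) : ℝ) : ℂ) * z ^ n)
        (∑' n : ℕ, ((((n : ℝ) + 1) * ((n : ℝ) + 2) * a (n + 2) : ℝ) : ℂ) * z ^ n) :=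
      (sum0C hA hbase hz).hasSum
    constructor
    · have Hc := (H1.mul_left z).add (H2.mul_left ((γ : ℂ) * z ^ 2))
      have hfun : (fun n : ℕ => ((wc γ n * a (n + 2) : ℝ) : ℂ) * z ^ (n + 2))
          = fun n : ℕ => z * (((((n : ℝ) + 2) * a (n + 2) : ℝ) : ℂ) * z ^ (n + 1))
            + ((γ : ℂ) * z ^ 2) * (((((n : ℝ) + 1) * ((n : ℝ) + 2) * a (n + 2) : ℝ) : ℂ) * z ^ n) := by
        funext n
        simp only [wc]
        push_cast
        ring
      have hval : z - (z * deriv f z + (γ : ℂ) * z ^ 2 * deriv (deriv f) z)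
          = z * (∑' n : ℕ, ((((n : ℝ) + 2) * a (n + 2) : ℝ) : ℂ) * z ^ (n + 1))
            + ((γ : ℂ) * z ^ 2) *
              (∑' n : ℕ, ((((n : ℝ) + 1) * ((n : ℝ) + 2) * a (n + 2) : ℝ) : ℂ) * z ^ n) := by
        rw [hd1 z hz, hd2 z hz]
        ring
      rw [hfun, hval]
      exact Hc
    · have Hd := (((H1.mul_left ((γ : ℂ) * z)).add
        (H2.mul_left ((γ : ℂ) * (β : ℂ) * z ^ 2))).add
          (H1.mul_left ((1 - (γ : ℂ)) * (β : ℂ) * z))).add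
            (H0.mul_left ((1 - (γ : ℂ)) * (1 - (β : ℂ))))
      have hfun : (fun n : ℕ => ((wd β γ n * a (n + 2) : ℝ) : ℂ) * z ^ (n + 2))
          = fun n : ℕ =>
            ((γ : ℂ) * z * (((((n : ℝ) + 2) * a (n + 2) : ℝ) : ℂ) * z ^ (n + 1))
              + ((γ : ℂ) * (β : ℂ) * z ^ 2) *
                (((((n : ℝ) + 1) * ((n : ℝ) + 2) * a (n + 2) : ℝ) : ℂ) * z ^ n)
              + ((1 - (γ : ℂ)) * (β : ℂ) * z) *
                (((((n : ℝ) + 2) * a (n + 2) : ℝ) : ℂ) * z ^ (n + 1)))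
              + ((1 - (γ : ℂ)) * (1 - (β : ℂ))) * (((a (n + 2) : ℝ) : ℂ) * z ^ (n + 2)) := by
        funext n
        simp only [wd]
        push_cast
        ring
      have hval : z - ((γ : ℂ) * z * (deriv f z + (β : ℂ) * z * deriv (deriv f) z) +
            (1 - (γ : ℂ)) * ((β : ℂ) * z * deriv f z + (1 - (β : ℂ)) * f z))
          = ((γ : ℂ) * z * (∑' n : ℕ, ((((n : ℝ) + 2) * a (n + 2) : ℝ) : ℂ) * z ^ (n + 1))
              + ((γ : ℂ) * (β : ℂ) * z ^ 2) *
                (∑' n : ℕ, ((((n : ℝ) + 1) * ((n : ℝ) + 2) * a (n + 2) : ℝ) : ℂ) * z ^ n)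
              + ((1 - (γ : ℂ)) * (β : ℂ) * z) *
                (∑' n : ℕ, ((((n : ℝ) + 2) * a (n + 2) : ℝ) : ℂ) * z ^ (n + 1)))
              + ((1 - (γ : ℂ)) * (1 - (β : ℂ))) *
                (∑' n : ℕ, ((a (n + 2) : ℝ) : ℂ) * z ^ (n + 2)) := by
        rw [hd1 z hz, hd2 z hz, hfz z hz]
        ring
      rw [hfun, hval]
      exact Hd
  constructor
  · intro h
    set Nr : ℝ → ℝ := fun t => t - ∑' n : ℕ, wc γ n * a (n + 2) * t ^ (n + 2) with hNrdef
    set Dr : ℝ → ℝ := fun t => t - ∑' n : ℕ, wd β γ n * a (n + 2) * t ^ (n + 2) with hDrdef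
    have hfrac : ∀ t : ℝ, t ∈ Set.Ioo (0:ℝ) 1 → α < Nr t / Dr t := by
      rintro t ⟨ht0, ht1⟩
      have hz : ‖((t : ℝ) : ℂ)‖ < 1 := by
        rw [Complex.norm_real, Real.norm_eq_abs, _root_.abs_of_pos ht0]
        exact ht1
      obtain ⟨Hc, Hd⟩ := key ((t : ℝ) : ℂ) hz
      have HcR := (aux_sumR hA hbase hbc ht0.le ht1).hasSum
      have HdR := (aux_sumR hA hbase hbd ht0.le ht1).hasSum
      have HcC : HasSum (fun n : ℕ => ((wc γ n * a (n + 2) : ℝ) : ℂ) * ((t : ℝ) : ℂ) ^ (n + 2))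
          (((∑' n : ℕ, wc γ n * a (n + 2) * t ^ (n + 2) : ℝ)) : ℂ) := by
        have hfe : (fun n : ℕ => ((wc γ n * a (n + 2) * t ^ (n + 2) : ℝ) : ℂ))
            = (fun n : ℕ => ((wc γ n * a (n + 2) : ℝ) : ℂ) * ((t : ℝ) : ℂ) ^ (n + 2)) :=
          funext fun n => by push_cast; ring
        rw [← hfe]
        exact Complex.hasSum_ofReal.mpr HcR
      have HdC : HasSum (fun n : ℕ => ((wd β γ n * a (n + 2) : ℝ) : ℂ) * ((t : ℝ) : ℂ) ^ (n + 2))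
          (((∑' n : ℕ, wd β γ n * a (n + 2) * t ^ (n + 2) : ℝ)) : ℂ) := by
        have hfe : (fun n : ℕ => ((wd β γ n * a (n + 2) * t ^ (n + 2) : ℝ) : ℂ))
            = (fun n : ℕ => ((wd β γ n * a (n + 2) : ℝ) : ℂ) * ((t : ℝ) : ℂ) ^ (n + 2)) :=
          funext fun n => by push_cast; ring
        rw [← hfe]
        exact Complex.hasSum_ofReal.mpr HdR
      have hNum := Hc.unique HcC
      have hDen := Hd.unique HdC
      have hN2 : ((t : ℝ) : ℂ) * deriv f ((t : ℝ) : ℂ)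
            + (γ : ℂ) * ((t : ℝ) : ℂ) ^ 2 * deriv (deriv f) ((t : ℝ) : ℂ)
          = ((Nr t : ℝ) : ℂ) := by
        simp only [hNrdef]
        rw [Complex.ofReal_sub]
        linear_combination -hNum
      have hD2 : (γ : ℂ) * ((t : ℝ) : ℂ) * (deriv f ((t : ℝ) : ℂ)
            + (β : ℂ) * ((t : ℝ) : ℂ) * deriv (deriv f) ((t : ℝ) : ℂ))
            + (1 - (γ : ℂ)) * ((β : ℂ) * ((t : ℝ) : ℂ) * deriv f ((t : ℝ) : ℂ)
            + (1 - (β : ℂ)) * f ((t : ℝ) : ℂ))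
          = ((Dr t : ℝ) : ℂ) := by
        simp only [hDrdef]
        rw [Complex.ofReal_sub]
        linear_combination -hDen
      have hmem : ((t : ℝ) : ℂ) ∈ Metric.ball (0 : ℂ) 1 := by
        rw [Metric.mem_ball, dist_zero_right]
        exact hz
      have hh := h _ hmem (by exact_mod_cast ht0.ne')
      rw [hN2, hD2, ← Complex.ofReal_div, Complex.ofReal_re] at hh
      exact hh
    have hDne : ∀ t ∈ Set.Ioo (0:ℝ) 1, Dr t ≠ 0 := by
      intro t ht h0
      have := hfrac t ht
      rw [h0, div_zero] at this
      linarith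
    have hDcont : ContinuousOn Dr (Set.Ioo (0:ℝ) 1) := by
      have heq : ∀ t ∈ Set.Ioo (0:ℝ) 1,
          t - (∑' n : ℕ, ((wd β γ n * a (n + 2) : ℝ) : ℂ) * ((t : ℝ) : ℂ) ^ (n + 2)).re
            = Dr t := by
        intro t ht
        simp only [hDrdef]
        congr 1
        rw [show (∑' n : ℕ, ((wd β γ n * a (n + 2) : ℝ) : ℂ) * ((t : ℝ) : ℂ) ^ (n + 2))
            = (((∑' n : ℕ, wd β γ n * a (n + 2) * t ^ (n + 2) : ℝ)) : ℂ) from ?_,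
          Complex.ofReal_re]
        rw [Complex.ofReal_tsum]
        exact tsum_congr fun n => by push_cast; ring
      refine ContinuousOn.congr ?_ fun t ht => (heq t ht).symm
      refine ContinuousOn.sub continuousOn_id ?_
      intro t ht
      have hz : ‖((t : ℝ) : ℂ)‖ < 1 := by
        rw [Complex.norm_real, Real.norm_eq_abs, abs_lt]
        constructor <;> [linarith [ht.1]; exact ht.2]
      have hca : ContinuousAt
          (fun y : ℂ => ∑' n : ℕ, ((wd β γ n * a (n + 2) : ℝ) : ℂ) * y ^ (n + 2)) ((t : ℝ) : ℂ) :=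
        (derivW hA hbase hbd hz).continuousAt
      exact (Complex.continuous_re.continuousAt.comp
        (hca.comp Complex.continuous_ofReal.continuousAt)).continuousWithinAt
    have hMsum : Summable (fun n : ℕ => ((n : ℝ) + 2) ^ 2 * a (n + 2) * (2⁻¹ : ℝ) ^ n) :=
      aux_master hA hbase 2 (by norm_num) (by norm_num)
    set M : ℝ := ∑' n : ℕ, ((n : ℝ) + 2) ^ 2 * a (n + 2) * (2⁻¹ : ℝ) ^ n with hMdef
    have hM0 : 0 ≤ M :=
      tsum_nonneg fun n => mul_nonneg (mul_nonneg (by positivity) (hA n)) (by positivity)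
    have hsmall : ∀ t : ℝ, 0 < t → t ≤ 2⁻¹ → t ≤ (M + 1)⁻¹ → 0 < Dr t := by
      intro t h0 h2 hM1
      have ht1 : t < 1 := lt_of_le_of_lt h2 (by norm_num)
      have hb : ∑' n : ℕ, wd β γ n * a (n + 2) * t ^ (n + 2) ≤ t ^ 2 * M := by
        rw [hMdef, ← tsum_mul_left]
        refine Summable.tsum_le_tsum (fun n => ?_) (aux_sumR hA hbase hbd h0.le ht1)
          (hMsum.mul_left _)
        have hpow : t ^ (n + 2) ≤ t ^ 2 * (2⁻¹ : ℝ) ^ n := by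
          calc t ^ (n + 2) = t ^ n * t ^ 2 := by rw [pow_add]
            _ ≤ (2⁻¹ : ℝ) ^ n * t ^ 2 :=
              mul_le_mul_of_nonneg_right (pow_le_pow_left₀ h0.le h2 n) (by positivity)
            _ = t ^ 2 * (2⁻¹ : ℝ) ^ n := mul_comm _ _
        calc wd β γ n * a (n + 2) * t ^ (n + 2)
            ≤ ((n : ℝ) + 2) ^ 2 * a (n + 2) * (t ^ 2 * (2⁻¹ : ℝ) ^ n) :=
              mul_le_mul (mul_le_mul_of_nonneg_right (le_trans (le_abs_self _) (hbd n)) (hA n))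
                hpow (by positivity) (mul_nonneg (by positivity) (hA n))
          _ = t ^ 2 * (((n : ℝ) + 2) ^ 2 * a (n + 2) * (2⁻¹ : ℝ) ^ n) := by ring
      have hDge : t - t ^ 2 * M ≤ Dr t := by
        simp only [hDrdef]
        linarith
      have htM : t * M < 1 := by
        rcases eq_or_lt_of_le hM0 with hM | hM
        · rw [← hM]; norm_num
        · have : t * (M + 1) ≤ 1 := by
            rw [← le_div_iff₀ (by linarith)]
            simpa [div_eq_inv_mul, one_div] using hM1
          nlinarith
      nlinarith
    have hDpos : ∀ t ∈ Set.Ioo (0:ℝ) 1, 0 < Dr t := by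
      intro t ht
      by_contra hneg
      push_neg at hneg
      have hlt : Dr t < 0 := lt_of_le_of_ne hneg (hDne t ht)
      set s : ℝ := min (min 2⁻¹ (M + 1)⁻¹) t with hsdef
      have hs0 : 0 < s := lt_min (lt_min (by norm_num) (inv_pos.mpr (by linarith))) ht.1
      have hst : s ≤ t := min_le_right _ _
      have hDs : 0 < Dr s := hsmall s hs0 (le_trans (min_le_left _ _) (min_le_left _ _))
        (le_trans (min_le_left _ _) (min_le_right _ _))
      have hsub : Set.Icc s t ⊆ Set.Ioo (0:ℝ) 1 := fun u hu =>
        ⟨lt_of_lt_of_le hs0 hu.1, lt_of_le_of_lt hu.2 ht.2⟩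
      obtain ⟨u, huI, hu0⟩ := intermediate_value_Icc' hst (hDcont.mono hsub)
        (Set.mem_Icc.mpr ⟨hlt.le, hDs.le⟩)
      exact hDne u (hsub huI) hu0
    have hElt : ∀ t ∈ Set.Ioo (0:ℝ) 1,
        ∑' n : ℕ, we α β γ n * a (n + 2) * t ^ (n + 2) < (1 - α) * t := by
      intro t ht
      have h1 := hfrac t ht
      have h2 := hDpos t ht
      rw [lt_div_iff₀ h2] at h1
      have HcR := (aux_sumR hA hbase hbc ht.1.le ht.2).hasSum
      have HdR := (aux_sumR hA hbase hbd ht.1.le ht.2).hasSum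
      have HeR : HasSum (fun n : ℕ => we α β γ n * a (n + 2) * t ^ (n + 2))
          ((∑' n : ℕ, wc γ n * a (n + 2) * t ^ (n + 2))
            - α * ∑' n : ℕ, wd β γ n * a (n + 2) * t ^ (n + 2)) := by
        have h3 := HcR.sub (HdR.mul_left α)
        have hfe : (fun n : ℕ => we α β γ n * a (n + 2) * t ^ (n + 2))
            = fun n : ℕ => wc γ n * a (n + 2) * t ^ (n + 2)
              - α * (wd β γ n * a (n + 2) * t ^ (n + 2)) :=
          funext fun n => by rw [hecd n]; ring
        rw [hfe]
        exact h3
      have h4 := HeR.tsum_eq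
      simp only [hNrdef, hDrdef] at h1
      linarith
    have hpart : ∀ F : Finset ℕ, ∑ n ∈ F, we α β γ n * a (n + 2) ≤ 1 - α := by
      intro F
      have hcont : Continuous (fun t : ℝ => ∑ n ∈ F, we α β γ n * a (n + 2) * t ^ (n + 2)) :=
        continuous_finset_sum F fun n _ => continuous_const.mul (continuous_pow (n + 2))
      have hT1 : Filter.Tendsto (fun t : ℝ => ∑ n ∈ F, we α β γ n * a (n + 2) * t ^ (n + 2))
          (𝓝[<] (1:ℝ)) (𝓝 (∑ n ∈ F, we α β γ n * a (n + 2))) := by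
        have h5 := (hcont.tendsto 1).mono_left (nhdsWithin_le_nhds (s := Set.Iio (1:ℝ)))
        simpa using h5
      have hT2 : Filter.Tendsto (fun t : ℝ => (1 - α) * t) (𝓝[<] (1:ℝ)) (𝓝 (1 - α)) := by
        have hc : Continuous (fun t : ℝ => (1 - α) * t) := continuous_const.mul continuous_id
        have h5 := (hc.tendsto (1:ℝ)).mono_left (nhdsWithin_le_nhds (s := Set.Iio (1:ℝ)))
        simpa using h5
      refine le_of_tendsto_of_tendsto hT1 hT2 ?_
      filter_upwards [Ioo_mem_nhdsLT_of_mem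
        (Set.mem_Ioc.mpr ⟨zero_lt_one, le_refl (1:ℝ)⟩)] with t htI
      calc ∑ n ∈ F, we α β γ n * a (n + 2) * t ^ (n + 2)
          ≤ ∑' n : ℕ, we α β γ n * a (n + 2) * t ^ (n + 2) :=
            Summable.sum_le_tsum F (fun n _ => mul_nonneg (mul_nonneg (henn n) (hA n)) (pow_nonneg htI.1.le _))
              (aux_sumR hA hbase hbe htI.1.le htI.2)
        _ ≤ (1 - α) * t := (hElt t htI).le
    have hnonneg : (0 : ℕ → ℝ) ≤ fun n => we α β γ n * a (n + 2) :=
      fun n => mul_nonneg (henn n) (hA n)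
    have hS := summable_of_sum_le hnonneg hpart
    have hT := Summable.tsum_le_of_sum_le hS hpart
    constructor
    · refine hS.congr fun n => ?_
      simp only [we]
    · have hfe : (fun n : ℕ => (1 + ((n : ℝ) + 1) * γ)
          * (((n : ℝ) + 2) - α - ((n : ℝ) + 1) * α * β) * a (n + 2))
          = fun n : ℕ => we α β γ n * a (n + 2) := funext fun n => by simp only [we]
      rw [hfe]
      exact hT
  · rintro ⟨hsum0, hle0⟩
    have hfe : (fun n : ℕ => (1 + ((n : ℝ) + 1) * γ)
        * (((n : ℝ) + 2) - α - ((n : ℝ) + 1) * α * β) * a (n + 2))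
        = fun n : ℕ => we α β γ n * a (n + 2) := funext fun n => by simp only [we]
    rw [hfe] at hsum0 hle0
    intro z hzball hz0
    have hz : ‖z‖ < 1 := by rwa [Metric.mem_ball, dist_zero_right] at hzball
    have ht0 : 0 < ‖z‖ := norm_pos_iff.mpr hz0
    obtain ⟨Hc, Hd⟩ := key z hz
    -- real summability facts
    have hSd : Summable (fun n : ℕ => wd β γ n * a (n + 2)) := by
      refine Summable.of_nonneg_of_le (fun n => mul_nonneg (hdnn n) (hA n)) (fun n => ?_)
        (hsum0.mul_left (1 - α)⁻¹)
      rw [le_inv_mul_iff₀ h1α]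
      calc (1 - α) * (wd β γ n * a (n + 2)) = ((1 - α) * wd β γ n) * a (n + 2) := by ring
        _ ≤ we α β γ n * a (n + 2) := mul_le_mul_of_nonneg_right (hegd n) (hA n)
    have hSdle : (∑' n : ℕ, wd β γ n * a (n + 2)) ≤ 1 := by
      have h6 : (1 - α) * ∑' n : ℕ, wd β γ n * a (n + 2)
          = ∑' n : ℕ, (1 - α) * (wd β γ n * a (n + 2)) := tsum_mul_left.symm
      have h7 : ∑' n : ℕ, (1 - α) * (wd β γ n * a (n + 2))
          ≤ ∑' n : ℕ, we α β γ n * a (n + 2) := by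
        refine Summable.tsum_le_tsum (fun n => ?_) (hSd.mul_left _) hsum0
        calc (1 - α) * (wd β γ n * a (n + 2)) = ((1 - α) * wd β γ n) * a (n + 2) := by ring
          _ ≤ we α β γ n * a (n + 2) := mul_le_mul_of_nonneg_right (hegd n) (hA n)
      nlinarith
    -- real sums at t = ‖z‖
    have hpow2 : ∀ n : ℕ, ‖z‖ ^ (n + 2) ≤ ‖z‖ ^ 2 := by
      intro n
      calc ‖z‖ ^ (n + 2) = ‖z‖ ^ n * ‖z‖ ^ 2 := by rw [pow_add]
        _ ≤ 1 * ‖z‖ ^ 2 :=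
          mul_le_mul_of_nonneg_right (pow_le_one₀ ht0.le hz.le) (by positivity)
        _ = ‖z‖ ^ 2 := one_mul _
    have hSdT := aux_sumR hA hbase hbd ht0.le hz
    have hSeT := aux_sumR hA hbase hbe ht0.le hz
    have hScdT := aux_sumR hA hbase hbcd ht0.le hz
    have hRd_le : ∑' n : ℕ, wd β γ n * a (n + 2) * ‖z‖ ^ (n + 2) ≤ ‖z‖ ^ 2 := by
      calc ∑' n : ℕ, wd β γ n * a (n + 2) * ‖z‖ ^ (n + 2)
          ≤ ∑' n : ℕ, wd β γ n * a (n + 2) * ‖z‖ ^ 2 :=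
            Summable.tsum_le_tsum (fun n => mul_le_mul_of_nonneg_left (hpow2 n)
              (mul_nonneg (hdnn n) (hA n))) hSdT (hSd.mul_right _)
        _ = (∑' n : ℕ, wd β γ n * a (n + 2)) * ‖z‖ ^ 2 := tsum_mul_right
        _ ≤ 1 * ‖z‖ ^ 2 := mul_le_mul_of_nonneg_right hSdle (by positivity)
        _ = ‖z‖ ^ 2 := one_mul _
    have hRe_le : ∑' n : ℕ, we α β γ n * a (n + 2) * ‖z‖ ^ (n + 2) ≤ (1 - α) * ‖z‖ ^ 2 := by
      calc ∑' n : ℕ, we α β γ n * a (n + 2) * ‖z‖ ^ (n + 2)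
          ≤ ∑' n : ℕ, we α β γ n * a (n + 2) * ‖z‖ ^ 2 :=
            Summable.tsum_le_tsum (fun n => mul_le_mul_of_nonneg_left (hpow2 n)
              (mul_nonneg (henn n) (hA n))) hSeT (hsum0.mul_right _)
        _ = (∑' n : ℕ, we α β γ n * a (n + 2)) * ‖z‖ ^ 2 := tsum_mul_right
        _ ≤ (1 - α) * ‖z‖ ^ 2 := mul_le_mul_of_nonneg_right hle0 (by positivity)
    have hRcd : ∑' n : ℕ, (wc γ n - wd β γ n) * a (n + 2) * ‖z‖ ^ (n + 2)
        = (∑' n : ℕ, we α β γ n * a (n + 2) * ‖z‖ ^ (n + 2))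
          - (1 - α) * ∑' n : ℕ, wd β γ n * a (n + 2) * ‖z‖ ^ (n + 2) := by
      rw [← tsum_mul_left, ← Summable.tsum_sub hSeT ((hSdT).mul_left (1 - α))]
      exact tsum_congr fun n => by rw [hecd n]; ring
    have hRcd_nonneg : (0:ℝ) ≤ ∑' n : ℕ, wd β γ n * a (n + 2) * ‖z‖ ^ (n + 2) :=
      tsum_nonneg fun n => mul_nonneg (mul_nonneg (hdnn n) (hA n)) (by positivity)
    have htt : ‖z‖ ^ 2 < ‖z‖ := by nlinarith
    -- complex estimates
    have hDen_eq : (γ : ℂ) * z * (deriv f z + (β : ℂ) * z * deriv (deriv f) z) +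
          (1 - (γ : ℂ)) * ((β : ℂ) * z * deriv f z + (1 - (β : ℂ)) * f z)
        = z - ∑' n : ℕ, ((wd β γ n * a (n + 2) : ℝ) : ℂ) * z ^ (n + 2) := by
      have h8 := Hd.tsum_eq
      linear_combination h8
    have hnormS : ‖∑' n : ℕ, ((wd β γ n * a (n + 2) : ℝ) : ℂ) * z ^ (n + 2)‖
        ≤ ∑' n : ℕ, wd β γ n * a (n + 2) * ‖z‖ ^ (n + 2) := by
      refine le_trans (norm_tsum_le_tsum_norm (aux_normsumC hA hbase hbd 2 hz)) ?_
      refine le_of_eq (tsum_congr fun n => ?_)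
      rw [norm_mul, norm_pow, Complex.norm_real, Real.norm_eq_abs, abs_mul,
        _root_.abs_of_nonneg (hA n), _root_.abs_of_nonneg (hdnn n)]
    have hDlow : ‖z‖ - ∑' n : ℕ, wd β γ n * a (n + 2) * ‖z‖ ^ (n + 2)
        ≤ ‖(γ : ℂ) * z * (deriv f z + (β : ℂ) * z * deriv (deriv f) z) +
          (1 - (γ : ℂ)) * ((β : ℂ) * z * deriv f z + (1 - (β : ℂ)) * f z)‖ := by
      rw [hDen_eq]
      calc ‖z‖ - ∑' n : ℕ, wd β γ n * a (n + 2) * ‖z‖ ^ (n + 2)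
          ≤ ‖z‖ - ‖∑' n : ℕ, ((wd β γ n * a (n + 2) : ℝ) : ℂ) * z ^ (n + 2)‖ := by
            linarith
        _ ≤ ‖z - ∑' n : ℕ, ((wd β γ n * a (n + 2) : ℝ) : ℂ) * z ^ (n + 2)‖ :=
            norm_sub_norm_le _ _
    have hdiff_eq : ((γ : ℂ) * z * (deriv f z + (β : ℂ) * z * deriv (deriv f) z) +
          (1 - (γ : ℂ)) * ((β : ℂ) * z * deriv f z + (1 - (β : ℂ)) * f z))
          - (z * deriv f z + (γ : ℂ) * z ^ 2 * deriv (deriv f) z)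
        = ∑' n : ℕ, (((wc γ n - wd β γ n) * a (n + 2) : ℝ) : ℂ) * z ^ (n + 2) := by
      have h8 := Hc.sub Hd
      have h9 : (fun n : ℕ => ((wc γ n * a (n + 2) : ℝ) : ℂ) * z ^ (n + 2)
          - ((wd β γ n * a (n + 2) : ℝ) : ℂ) * z ^ (n + 2))
          = fun n : ℕ => (((wc γ n - wd β γ n) * a (n + 2) : ℝ) : ℂ) * z ^ (n + 2) :=
        funext fun n => by push_cast; ring
      rw [h9] at h8
      have h10 := h8.tsum_eq
      linear_combination -h10
    have hnd : ‖((γ : ℂ) * z * (deriv f z + (β : ℂ) * z * deriv (deriv f) z) +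
          (1 - (γ : ℂ)) * ((β : ℂ) * z * deriv f z + (1 - (β : ℂ)) * f z))
          - (z * deriv f z + (γ : ℂ) * z ^ 2 * deriv (deriv f) z)‖
        ≤ ∑' n : ℕ, (wc γ n - wd β γ n) * a (n + 2) * ‖z‖ ^ (n + 2) := by
      rw [hdiff_eq]
      refine le_trans (norm_tsum_le_tsum_norm (aux_normsumC hA hbase hbcd 2 hz)) ?_
      refine le_of_eq (tsum_congr fun n => ?_)
      rw [norm_mul, norm_pow, Complex.norm_real, Real.norm_eq_abs, abs_mul,
        _root_.abs_of_nonneg (hA n), _root_.abs_of_nonneg (sub_nonneg.mpr (hdc n))]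
    -- the strict chain
    have hQ : ∑' n : ℕ, (wc γ n - wd β γ n) * a (n + 2) * ‖z‖ ^ (n + 2)
        < (1 - α) * (‖z‖ - ∑' n : ℕ, wd β γ n * a (n + 2) * ‖z‖ ^ (n + 2)) := by
      rw [hRcd]
      linarith [hRe_le, mul_lt_mul_of_pos_left htt h1α]
    set NUM := z * deriv f z + (γ : ℂ) * z ^ 2 * deriv (deriv f) z with hNUM
    set DEN := (γ : ℂ) * z * (deriv f z + (β : ℂ) * z * deriv (deriv f) z) +
      (1 - (γ : ℂ)) * ((β : ℂ) * z * deriv f z + (1 - (β : ℂ)) * f z) with hDEN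
    have hDpos : 0 < ‖DEN‖ := by
      have h10 : 0 < ‖z‖ - ∑' n : ℕ, wd β γ n * a (n + 2) * ‖z‖ ^ (n + 2) := by
        linarith [hRd_le, htt]
      linarith [hDlow]
    have hDne : DEN ≠ 0 := by
      intro h0
      rw [h0, norm_zero] at hDpos
      exact lt_irrefl 0 hDpos
    have hlt : ‖NUM - DEN‖ < (1 - α) * ‖DEN‖ := by
      rw [norm_sub_rev]
      calc ‖DEN - NUM‖ ≤ ∑' n : ℕ, (wc γ n - wd β γ n) * a (n + 2) * ‖z‖ ^ (n + 2) := hnd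
        _ < (1 - α) * (‖z‖ - ∑' n : ℕ, wd β γ n * a (n + 2) * ‖z‖ ^ (n + 2)) := hQ
        _ ≤ (1 - α) * ‖DEN‖ := mul_le_mul_of_nonneg_left hDlow h1α.le
    have hsplit : NUM / DEN = 1 + (NUM - DEN) / DEN := by
      field_simp
      ring
    rw [hsplit, Complex.add_re, Complex.one_re]
    have hre : |((NUM - DEN) / DEN).re| ≤ ‖(NUM - DEN) / DEN‖ := by
      exact Complex.abs_re_le_norm _
    have hnorm_lt : ‖(NUM - DEN) / DEN‖ < 1 - α := by
      rw [norm_div, div_lt_iff₀ hDpos]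
      exact hlt
    have h11 := neg_abs_le (((NUM - DEN) / DEN).re)
    linarith
end

section
/- If f(z) = z - Σ_{n≥2} a_n z^n (a_n ≥ 0) belongs to TS*C(α,β;γ), then for every n ≥ 2, a_n ≤ (1-α)/[(1+(n-1)γ)(n-α-(n-1)αβ)]. -/
open Complex

namespace Stmt4Aux

open Metric Filter

noncomputable def P (b : ℕ → ℝ) (z : ℂ) : ℂ := ∑' n, (b n : ℂ) * z ^ n

noncomputable def db (b : ℕ → ℝ) : ℕ → ℝ := fun n => ((n : ℝ) + 1) * b (n + 1)

lemma db_nonneg {b : ℕ → ℝ} (hb : ∀ n, 0 ≤ b n) (n : ℕ) : 0 ≤ db b n := by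
  unfold db; have := hb (n + 1); positivity

/-- summability of the derived series -/
lemma sum_db {b : ℕ → ℝ} (hb : ∀ n, 0 ≤ b n)
    (hsum : ∀ s : ℝ, 0 ≤ s → s < 1 → Summable fun n => b n * s ^ n) :
    ∀ s : ℝ, 0 ≤ s → s < 1 → Summable fun n => db b n * s ^ n := by
  intro s hs0 hs1
  obtain ⟨s', hss', hs'1⟩ : ∃ s', s < s' ∧ s' < 1 := ⟨(s+1)/2, by linarith, by linarith⟩
  have hs'0 : 0 < s' := lt_of_le_of_lt hs0 hss'
  have hS := hsum s' hs'0.le hs'1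
  set C : ℝ := ∑' n, b n * s' ^ n with hC
  have hC0 : 0 ≤ C := tsum_nonneg fun n => mul_nonneg (hb n) (pow_nonneg hs'0.le n)
  have hbound : ∀ n, b n * s' ^ n ≤ C := fun n =>
    Summable.le_tsum hS n fun m _ => mul_nonneg (hb m) (pow_nonneg hs'0.le m)
  set q : ℝ := s / s' with hq
  have hq0 : 0 ≤ q := div_nonneg hs0 hs'0.le
  have hq1 : q < 1 := by rw [hq, div_lt_one hs'0]; linarith
  have hgeom : Summable fun n : ℕ => ((n : ℝ) + 1) * q ^ n := by
    have h1 : Summable fun n : ℕ => (n : ℝ) ^ 1 * q ^ n :=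
      summable_pow_mul_geometric_of_norm_lt_one 1
        (by rwa [Real.norm_eq_abs, _root_.abs_of_nonneg hq0])
    have h2 : Summable fun n : ℕ => q ^ n := summable_geometric_of_lt_one hq0 hq1
    exact (h1.add h2).congr fun n => by ring
  refine Summable.of_nonneg_of_le
    (fun n => mul_nonneg (db_nonneg hb n) (pow_nonneg hs0 n))
    (fun n => ?_) (hgeom.mul_left (C / s'))
  unfold db
  have h1 : b (n + 1) ≤ C / s' ^ (n + 1) :=
    (le_div_iff₀ (by positivity)).mpr (hbound (n+1))
  have h2 : ((n : ℝ) + 1) * b (n + 1) * s ^ n ≤ ((n : ℝ) + 1) * (C / s' ^ (n + 1)) * s ^ n := by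
    apply mul_le_mul_of_nonneg_right _ (pow_nonneg hs0 n)
    exact mul_le_mul_of_nonneg_left h1 (by positivity)
  refine h2.trans_eq ?_
  rw [hq, div_pow, pow_succ]
  ring

lemma summable_P {b : ℕ → ℝ} (hb : ∀ n, 0 ≤ b n)
    (hsum : ∀ s : ℝ, 0 ≤ s → s < 1 → Summable fun n => b n * s ^ n)
    {z : ℂ} (hz : ‖z‖ < 1) : Summable fun n => (b n : ℂ) * z ^ n := by
  refine Summable.of_norm ?_
  refine ((hsum ‖z‖ (norm_nonneg z) hz).congr fun n => ?_)
  rw [norm_mul, norm_pow, Complex.norm_real, Real.norm_eq_abs, _root_.abs_of_nonneg (hb n)]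

lemma hasDerivAt_P {b : ℕ → ℝ} (hb : ∀ n, 0 ≤ b n)
    (hsum : ∀ s : ℝ, 0 ≤ s → s < 1 → Summable fun n => b n * s ^ n)
    {z : ℂ} (hz : ‖z‖ < 1) : HasDerivAt (P b) (P (db b) z) z := by
  set s : ℝ := (‖z‖ + 1) / 2 with hs
  have hzs : ‖z‖ < s := by rw [hs]; linarith
  have hs0 : 0 < s := lt_of_le_of_lt (norm_nonneg z) hzs
  have hs1 : s < 1 := by rw [hs]; linarith
  -- summable bound for the derivatives
  have hu : Summable fun n : ℕ => (n : ℝ) * b n * s ^ (n - 1) := by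
    have hd := sum_db hb hsum s hs0.le hs1
    refine (Function.Injective.summable_iff Nat.succ_injective ?_).mp (hd.congr fun n => ?_)
    · intro m hm
      have : m = 0 := by
        rcases m with - | m
        · rfl
        · exact absurd ⟨m, rfl⟩ hm
      simp [this]
    · simp only [Function.comp_apply, Nat.succ_sub_one, db]
      push_cast
      ring
  have hg : ∀ (n : ℕ) (y : ℂ), y ∈ Metric.ball (0 : ℂ) s →
      HasDerivAt (fun w => (b n : ℂ) * w ^ n) ((b n : ℂ) * ((n : ℂ) * y ^ (n - 1))) y :=
    fun n y _ => (hasDerivAt_pow n y).const_mul _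
  have hg' : ∀ (n : ℕ) (y : ℂ), y ∈ Metric.ball (0 : ℂ) s →
      ‖(b n : ℂ) * ((n : ℂ) * y ^ (n - 1))‖ ≤ (n : ℝ) * b n * s ^ (n - 1) := by
    intro n y hy
    rw [mem_ball_zero_iff] at hy
    rw [norm_mul, norm_mul, norm_pow, Complex.norm_real, Complex.norm_natCast,
      Real.norm_eq_abs, _root_.abs_of_nonneg (hb n)]
    calc b n * ((n : ℝ) * ‖y‖ ^ (n - 1)) ≤ b n * ((n : ℝ) * s ^ (n - 1)) := by
          apply mul_le_mul_of_nonneg_left _ (hb n)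
          exact mul_le_mul_of_nonneg_left (pow_le_pow_left₀ (norm_nonneg y) hy.le _) (by positivity)
      _ = (n : ℝ) * b n * s ^ (n - 1) := by ring
  have hg0 : Summable fun n => (b n : ℂ) * (0 : ℂ) ^ n :=
    summable_P hb hsum (by simp)
  have hder := hasDerivAt_tsum_of_isPreconnected hu Metric.isOpen_ball
    (convex_ball (0 : ℂ) s).isPreconnected hg hg' (mem_ball_self hs0)
    hg0 (mem_ball_zero_iff.mpr hzs)
  have hkey : (∑' n, (b n : ℂ) * ((n : ℂ) * z ^ (n - 1))) = P (db b) z := by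
    have hsumm : Summable fun n => (b n : ℂ) * ((n : ℂ) * z ^ (n - 1)) :=
      Summable.of_norm_bounded hu fun n => hg' n z (mem_ball_zero_iff.mpr hzs)
    rw [Summable.tsum_eq_zero_add hsumm]
    simp only [Nat.cast_zero, zero_mul, mul_zero, zero_add, Nat.add_sub_cancel]
    refine tsum_congr fun n => ?_
    unfold db
    push_cast
    ring
  rw [hkey] at hder
  exact hder

noncomputable def F (b : ℕ → ℝ) (r : ℝ) : ℝ := ∑' n, b n * r ^ n

lemma P_real (c : ℕ → ℝ) (x : ℝ) : P c (x : ℂ) = ((F c x : ℝ) : ℂ) := by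
  rw [F, Complex.ofReal_tsum]
  exact tsum_congr fun n => by push_cast; ring

lemma continuousAt_F {b : ℕ → ℝ} (hb : ∀ n, 0 ≤ b n)
    (hsum : ∀ s : ℝ, 0 ≤ s → s < 1 → Summable fun n => b n * s ^ n)
    {x : ℝ} (hx : |x| < 1) : ContinuousAt (F b) x := by
  have h1 : F b = fun y : ℝ => (P b (↑y : ℂ)).re := by
    funext y; rw [P_real, Complex.ofReal_re]
  rw [h1]
  have hz : ‖(x : ℂ)‖ < 1 := by rwa [Complex.norm_real, Real.norm_eq_abs]
  exact Complex.continuous_re.continuousAt.comp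
    (((hasDerivAt_P hb hsum hz).differentiableAt.continuousAt).comp
      Complex.continuous_ofReal.continuousAt)

lemma hasSum_A {b : ℕ → ℝ} (hb : ∀ n, 0 ≤ b n)
    (hsum : ∀ s : ℝ, 0 ≤ s → s < 1 → Summable fun n => b n * s ^ n)
    {r : ℝ} (h0 : 0 ≤ r) (h1 : r < 1) :
    HasSum (fun n : ℕ => (n : ℝ) * b n * r ^ n) (r * F (db b) r) := by
  have h := ((sum_db hb hsum r h0 h1).hasSum).mul_left r
  have he : ((fun n : ℕ => (n : ℝ) * b n * r ^ n) ∘ Nat.succ) =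
      fun n : ℕ => r * (db b n * r ^ n) := by
    funext n
    simp only [Function.comp_apply, db, Nat.succ_eq_add_one]
    push_cast
    first
      | ring
      | (simp only [Nat.add_comm 1 n]; ring)
  refine (Function.Injective.hasSum_iff Nat.succ_injective ?_).mp (he ▸ h)
  intro m hm
  have hm0 : m = 0 := by
    rcases m with - | m
    · rfl
    · exact absurd ⟨m, rfl⟩ hm
  simp [hm0]

lemma hasSum_B {b : ℕ → ℝ} (hb : ∀ n, 0 ≤ b n)
    (hsum : ∀ s : ℝ, 0 ≤ s → s < 1 → Summable fun n => b n * s ^ n)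
    {r : ℝ} (h0 : 0 ≤ r) (h1 : r < 1) :
    HasSum (fun n : ℕ => (n : ℝ) * ((n : ℝ) - 1) * b n * r ^ n)
      (r ^ 2 * F (db (db b)) r) := by
  have h := ((sum_db (db_nonneg hb) (sum_db hb hsum) r h0 h1).hasSum).mul_left (r ^ 2)
  have he : ((fun n : ℕ => (n : ℝ) * ((n : ℝ) - 1) * b n * r ^ n) ∘ (fun n => n + 2)) =
      fun n : ℕ => r ^ 2 * (db (db b) n * r ^ n) := by
    funext n
    simp only [Function.comp_apply, db]
    push_cast
    ring
  refine (Function.Injective.hasSum_iff (add_left_injective 2) ?_).mp (he ▸ h)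
  intro m hm
  have hm2 : m < 2 := by
    by_contra hc
    push_neg at hc
    exact hm ⟨m - 2, show m - 2 + 2 = m by omega⟩
  interval_cases m <;> simp

lemma hasSum_comb {b : ℕ → ℝ} (hb : ∀ n, 0 ≤ b n)
    (hsum : ∀ s : ℝ, 0 ≤ s → s < 1 → Summable fun n => b n * s ^ n)
    {r : ℝ} (h0 : 0 ≤ r) (h1 : r < 1) (e1 e2 e3 : ℝ) :
    HasSum (fun n : ℕ => (e1 * (n : ℝ) + e2 * ((n : ℝ) * ((n : ℝ) - 1)) + e3) * (b n * r ^ n))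
      (e1 * (r * F (db b) r) + e2 * (r ^ 2 * F (db (db b)) r) + e3 * F b r) := by
  have hA := (hasSum_A hb hsum h0 h1).mul_left e1
  have hB := (hasSum_B hb hsum h0 h1).mul_left e2
  have hC := ((hsum r h0 h1).hasSum).mul_left e3
  have := (hA.add hB).add hC
  exact this.congr_fun fun n => by ring


end Stmt4Aux

open Stmt4Aux Metric Filter

set_option maxHeartbeats 2000000 in
theorem stmt4 (α β γ : ℝ) (hα0 : 0 ≤ α) (hα1 : α < 1) (hβ0 : 0 ≤ β) (hβ1 : β < 1)
    (hγ0 : 0 ≤ γ) (hγ1 : γ ≤ 1) (f : ℂ → ℂ) (a : ℕ → ℝ) (ha : ∀ n, 0 ≤ a n)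
    (hf : ∀ z ∈ Metric.ball (0 : ℂ) 1,
      HasSum (fun n : ℕ => ((a (n + 2) : ℝ) : ℂ) * z ^ (n + 2)) (z - f z))
    (hre : ∀ z ∈ Metric.ball (0 : ℂ) 1, z ≠ 0 →
      α < (((z * deriv f z + (γ : ℂ) * z ^ 2 * deriv (deriv f) z) /
        ((γ : ℂ) * z * (deriv f z + (β : ℂ) * z * deriv (deriv f) z) +
          (1 - (γ : ℂ)) * ((β : ℂ) * z * deriv f z + (1 - (β : ℂ)) * f z))).re)) :
    ∀ n : ℕ, 2 ≤ n →
      a n ≤ (1 - α) /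
        ((1 + ((n : ℝ) - 1) * γ) * ((n : ℝ) - α - ((n : ℝ) - 1) * α * β)) := by
  intro n₀ hn₀
  -- the coefficient sequence, padded with zeros
  set b : ℕ → ℝ := fun n => if 2 ≤ n then a n else 0 with hbdef
  have hb : ∀ n, 0 ≤ b n := by
    intro n
    by_cases h : 2 ≤ n <;> simp [hbdef, h, ha n]
  have hb01 : b 0 = 0 ∧ b 1 = 0 := by constructor <;> simp [hbdef]
  have hi2 : Function.Injective (fun n : ℕ => n + 2) := add_left_injective 2
  have hb_off : ∀ m, m ∉ Set.range (fun n : ℕ => n + 2) → b m = 0 := by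
    intro m hm
    have hm2 : m < 2 := by
      by_contra h
      push_neg at h
      exact hm ⟨m - 2, show m - 2 + 2 = m by omega⟩
    simp only [hbdef]
    rw [if_neg (by omega)]
  -- summability of the base series on [0,1)
  have hsum : ∀ s : ℝ, 0 ≤ s → s < 1 → Summable fun n => b n * s ^ n := by
    intro s hs0 hs1
    have hball : (s : ℂ) ∈ Metric.ball (0 : ℂ) 1 := by
      rw [mem_ball_zero_iff, Complex.norm_real, Real.norm_eq_abs, _root_.abs_of_nonneg hs0]
      exact hs1
    have h1 := (hf (s : ℂ) hball).summable
    have h2 : Summable fun n => a (n + 2) * s ^ (n + 2) := by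
      rw [← Complex.summable_ofReal]
      refine h1.congr fun n => ?_
      push_cast
      ring
    refine (Function.Injective.summable_iff hi2 (fun m hm => by rw [hb_off m hm]; ring)).mp (h2.congr fun n => ?_)
    simp only [Function.comp_apply, hbdef]
    rw [if_pos (by omega)]
  -- f and its derivatives on the unit ball
  have hfP : ∀ z ∈ Metric.ball (0 : ℂ) 1, f z = z - P b z := by
    intro z hz
    have h1 := hf z hz
    have he : (fun n : ℕ => ((a (n + 2) : ℝ) : ℂ) * z ^ (n + 2)) =
        ((fun n : ℕ => (b n : ℂ) * z ^ n) ∘ fun n => n + 2) := by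
      funext n
      simp only [Function.comp_apply, hbdef]
      rw [if_pos (by omega)]
    rw [he] at h1
    have h2 : HasSum (fun n : ℕ => (b n : ℂ) * z ^ n) (z - f z) :=
      (Function.Injective.hasSum_iff hi2 (fun m hm => by rw [hb_off m hm]; simp)).mp h1
    have := h2.tsum_eq
    rw [P, this]
    ring
  have hsum1 := Stmt4Aux.sum_db hb hsum
  have hb1 := Stmt4Aux.db_nonneg hb
  have hD1 : ∀ z ∈ Metric.ball (0 : ℂ) 1, deriv f z = 1 - P (db b) z := by
    intro z hz
    have hzn : ‖z‖ < 1 := mem_ball_zero_iff.mp hz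
    have heq : f =ᶠ[nhds z] fun w => w - P b w :=
      Filter.eventuallyEq_of_mem (Metric.isOpen_ball.mem_nhds hz) hfP
    exact (((hasDerivAt_id z).sub (hasDerivAt_P hb hsum hzn)).congr_of_eventuallyEq heq).deriv
  have hD2 : ∀ z ∈ Metric.ball (0 : ℂ) 1, deriv (deriv f) z = -P (db (db b)) z := by
    intro z hz
    have hzn : ‖z‖ < 1 := mem_ball_zero_iff.mp hz
    have heq : deriv f =ᶠ[nhds z] fun w => (1 : ℂ) - P (db b) w :=
      Filter.eventuallyEq_of_mem (Metric.isOpen_ball.mem_nhds hz) hD1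
    have h3 : HasDerivAt (fun w => (1 : ℂ) - P (db b) w) (-P (db (db b)) z) z := by
      have := (hasDerivAt_const z (1 : ℂ)).sub (hasDerivAt_P hb1 hsum1 hzn)
      rwa [zero_sub] at this
    exact (h3.congr_of_eventuallyEq heq).deriv
  -- key fraction inequality on the real interval (0,1)
  set F0 : ℝ → ℝ := F b with hF0
  set F1 : ℝ → ℝ := F (db b) with hF1
  set F2 : ℝ → ℝ := F (db (db b)) with hF2
  set NN : ℝ → ℝ := fun r => r * (1 - F1 r) - γ * r ^ 2 * F2 r with hNN
  set DD : ℝ → ℝ := fun r =>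
    γ * r * ((1 - F1 r) - β * r * F2 r) +
      (1 - γ) * (β * r * (1 - F1 r) + (1 - β) * (r - F0 r)) with hDD
  have hfrac : ∀ r : ℝ, 0 < r → r < 1 → α < NN r / DD r := by
    intro r h0 h1
    have hzn : ‖(r : ℂ)‖ < 1 := by
      rw [Complex.norm_real, Real.norm_eq_abs, _root_.abs_of_nonneg h0.le]
      exact h1
    have hzb : (r : ℂ) ∈ Metric.ball (0 : ℂ) 1 := mem_ball_zero_iff.mpr hzn
    have h := hre (r : ℂ) hzb (by exact_mod_cast h0.ne')
    rw [hD1 _ hzb, hD2 _ hzb, hfP _ hzb, P_real, P_real, P_real] at h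
    have e4 : ((r : ℂ) * (1 - ((F (db b) r : ℝ) : ℂ)) +
        (γ : ℂ) * (r : ℂ) ^ 2 * -((F (db (db b)) r : ℝ) : ℂ)) = ((NN r : ℝ) : ℂ) := by
      rw [hNN]
      push_cast
      ring
    have e5 : ((γ : ℂ) * (r : ℂ) * ((1 - ((F (db b) r : ℝ) : ℂ)) +
          (β : ℂ) * (r : ℂ) * -((F (db (db b)) r : ℝ) : ℂ)) +
        (1 - (γ : ℂ)) * ((β : ℂ) * (r : ℂ) * (1 - ((F (db b) r : ℝ) : ℂ)) +
          (1 - (β : ℂ)) * ((r : ℂ) - ((F b r : ℝ) : ℂ)))) = ((DD r : ℝ) : ℂ) := by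
      rw [hDD]
      push_cast
      ring
    rw [e4, e5, ← Complex.ofReal_div, Complex.ofReal_re] at h
    exact h
  -- combined HasSum for the denominator series
  have hUsum : ∀ r : ℝ, 0 ≤ r → r < 1 →
      HasSum (fun n : ℕ => ((γ + (1 - γ) * β) * (n : ℝ) + (γ * β) * ((n : ℝ) * ((n : ℝ) - 1)) +
        (1 - γ) * (1 - β)) * (b n * r ^ n)) (r - DD r) := by
    intro r h0 h1
    have h := hasSum_comb hb hsum h0 h1 (γ + (1 - γ) * β) (γ * β) ((1 - γ) * (1 - β))
    convert h using 1
    rw [hDD, hF0, hF1, hF2]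
    ring
  have hnn1 : ∀ n : ℕ, (0 : ℝ) ≤ (n : ℝ) * ((n : ℝ) - 1) := by
    intro n
    rcases Nat.eq_zero_or_pos n with h | h
    · simp [h]
    · have : (1 : ℝ) ≤ (n : ℝ) := by exact_mod_cast h
      nlinarith
  have htermU : ∀ (r : ℝ), 0 ≤ r → ∀ n : ℕ,
      0 ≤ ((γ + (1 - γ) * β) * (n : ℝ) + (γ * β) * ((n : ℝ) * ((n : ℝ) - 1)) +
        (1 - γ) * (1 - β)) * (b n * r ^ n) := by
    intro r hr n
    have h1 := hnn1 n
    have h2 : (0 : ℝ) ≤ (n : ℝ) := Nat.cast_nonneg n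
    apply mul_nonneg _ (mul_nonneg (hb n) (pow_nonneg hr n))
    nlinarith [mul_nonneg hγ0 h2, mul_nonneg (mul_nonneg (show (0:ℝ) ≤ 1 - γ by linarith) hβ0) h2,
      mul_nonneg (mul_nonneg hγ0 hβ0) h1,
      mul_nonneg (show (0:ℝ) ≤ 1 - γ by linarith) (show (0:ℝ) ≤ 1 - β by linarith)]
  -- the auxiliary constant W = sum of the denominator series at 1/2
  set W : ℝ := 1 / 2 - DD (1 / 2) with hWdef
  have hW0 : 0 ≤ W :=
    hasSum_le (fun n => htermU (1/2) (by norm_num) n) hasSum_zero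
      (hUsum (1/2) (by norm_num) (by norm_num))
  have hsmall : ∀ r : ℝ, 0 < r → r ≤ 1 / 2 → r - DD r ≤ 4 * r ^ 2 * W := by
    intro r h0 h12
    have h1 : r < 1 := by linarith
    have := hasSum_le (g := fun n : ℕ => (4 * r ^ 2) *
        (((γ + (1 - γ) * β) * (n : ℝ) + (γ * β) * ((n : ℝ) * ((n : ℝ) - 1)) +
          (1 - γ) * (1 - β)) * (b n * (1/2) ^ n)))
      (fun n => ?_) (hUsum r h0.le h1) ((hUsum (1/2) (by norm_num) (by norm_num)).mul_left (4 * r ^ 2))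
    · rw [hWdef]
      linarith [this]
    rcases lt_or_ge n 2 with hn | hn
    · interval_cases n <;> simp [hb01.1, hb01.2]
    · have hcoef : 0 ≤ (γ + (1 - γ) * β) * (n : ℝ) + (γ * β) * ((n : ℝ) * ((n : ℝ) - 1)) +
          (1 - γ) * (1 - β) := by
        have h1 := hnn1 n
        have h2 : (0 : ℝ) ≤ (n : ℝ) := Nat.cast_nonneg n
        nlinarith [mul_nonneg hγ0 h2, mul_nonneg (mul_nonneg (show (0:ℝ) ≤ 1 - γ by linarith) hβ0) h2,
          mul_nonneg (mul_nonneg hγ0 hβ0) h1,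
          mul_nonneg (show (0:ℝ) ≤ 1 - γ by linarith) (show (0:ℝ) ≤ 1 - β by linarith)]
      have hpow : r ^ n ≤ 4 * r ^ 2 * (1/2) ^ n := by
        have e : n = (n - 2) + 2 := by omega
        have e2 : (1/2 : ℝ) ^ n = (1/2) ^ (n - 2) * (1/4) := by
          rw [e, pow_add]; norm_num
        calc r ^ n = r ^ (n - 2) * r ^ 2 := by rw [← pow_add, show n - 2 + 2 = n from by omega]
          _ ≤ (1/2 : ℝ) ^ (n - 2) * r ^ 2 :=
              mul_le_mul_of_nonneg_right (pow_le_pow_left₀ h0.le h12 _) (by positivity)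
          _ = 4 * r ^ 2 * ((1/2) ^ (n - 2) * (1/4)) := by ring
          _ = 4 * r ^ 2 * (1/2) ^ n := by rw [e2]
      calc ((γ + (1 - γ) * β) * (n : ℝ) + (γ * β) * ((n : ℝ) * ((n : ℝ) - 1)) +
            (1 - γ) * (1 - β)) * (b n * r ^ n)
          ≤ ((γ + (1 - γ) * β) * (n : ℝ) + (γ * β) * ((n : ℝ) * ((n : ℝ) - 1)) +
            (1 - γ) * (1 - β)) * (b n * (4 * r ^ 2 * (1/2) ^ n)) := by
            exact mul_le_mul_of_nonneg_left (mul_le_mul_of_nonneg_left hpow (hb n)) hcoef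
        _ = (4 * r ^ 2) * (((γ + (1 - γ) * β) * (n : ℝ) + (γ * β) * ((n : ℝ) * ((n : ℝ) - 1)) +
            (1 - γ) * (1 - β)) * (b n * (1/2) ^ n)) := by ring
  have hDD_ne : ∀ r : ℝ, 0 < r → r < 1 → DD r ≠ 0 := by
    intro r h0 h1 hz
    have h := hfrac r h0 h1
    rw [hz, div_zero] at h
    linarith
  -- positivity of the denominator on (0,1)
  have hsum2 := Stmt4Aux.sum_db hb1 hsum1
  have hb2 := Stmt4Aux.db_nonneg hb1
  set r₁ : ℝ := min (1/2) (1/(8*W+8)) with hr₁def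
  have hr₁pos : 0 < r₁ := lt_min (by norm_num) (by positivity)
  have hr₁half : r₁ ≤ 1/2 := min_le_left _ _
  have hsmallpos : ∀ x : ℝ, 0 < x → x ≤ r₁ → 0 < DD x := by
    intro x hx0 hx1
    have h1 : x ≤ 1/2 := le_trans hx1 hr₁half
    have h2 : x ≤ 1/(8*W+8) := le_trans hx1 (min_le_right _ _)
    have h3 := hsmall x hx0 h1
    have h4 : x * (8*W+8) ≤ 1 := by
      rw [le_div_iff₀ (by positivity)] at h2
      linarith
    nlinarith [mul_le_mul_of_nonneg_left h4 hx0.le, sq_nonneg x, mul_nonneg hx0.le hW0]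
  have hDDpos : ∀ r : ℝ, 0 < r → r < 1 → 0 < DD r := by
    intro r h0 h1
    rcases le_or_gt r r₁ with hc | hc
    · exact hsmallpos r h0 hc
    · by_contra hneg
      push_neg at hneg
      have hlt : DD r < 0 := lt_of_le_of_ne hneg (hDD_ne r h0 h1)
      have hcont : ContinuousOn DD (Set.Icc r₁ r) := by
        intro x hx
        apply ContinuousAt.continuousWithinAt
        have hx0 : 0 < x := lt_of_lt_of_le hr₁pos hx.1
        have hx1 : x < 1 := lt_of_le_of_lt hx.2 h1
        have habs : |x| < 1 := by rw [_root_.abs_of_pos hx0]; exact hx1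
        have hc0 := continuousAt_F hb hsum habs
        have hc1 := continuousAt_F hb1 hsum1 habs
        have hc2 := continuousAt_F hb2 hsum2 habs
        rw [hDD, hF0, hF1, hF2]
        exact (((continuousAt_const.mul continuousAt_id).mul
          ((continuousAt_const.sub hc1).sub
            ((continuousAt_const.mul continuousAt_id).mul hc2))).add
          (continuousAt_const.mul
            (((continuousAt_const.mul continuousAt_id).mul (continuousAt_const.sub hc1)).add
              (continuousAt_const.mul (continuousAt_id.sub hc0)))))
      have hivt := intermediate_value_Icc' hc.le hcont
      have h0mem : (0:ℝ) ∈ Set.Icc (DD r) (DD r₁) :=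
        ⟨hlt.le, (hsmallpos r₁ hr₁pos le_rfl).le⟩
      obtain ⟨x, hxmem, hx0'⟩ := hivt h0mem
      exact hDD_ne x (lt_of_lt_of_le hr₁pos hxmem.1) (lt_of_le_of_lt hxmem.2 h1) hx0'
  -- the key inequality at each r in (0,1)
  have hm2 : (2:ℝ) ≤ (n₀ : ℝ) := by exact_mod_cast hn₀
  have hkey : ∀ r : ℝ, 0 < r → r < 1 →
      ((1 + ((n₀:ℝ) - 1) * γ) * ((n₀:ℝ) - α - ((n₀:ℝ) - 1) * α * β)) * (a n₀ * r ^ n₀) ≤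
        (1 - α) * r := by
    intro r h0 h1
    have hDpos := hDDpos r h0 h1
    have hlt : α * DD r < NN r := (lt_div_iff₀ hDpos).mp (hfrac r h0 h1)
    have hT := hasSum_comb hb hsum h0.le h1 (1 - α*(γ+(1-γ)*β)) (γ - α*(γ*β))
      (-(α*((1-γ)*(1-β))))
    have hid : (1 - α*(γ+(1-γ)*β)) * (r * F (db b) r) + (γ - α*(γ*β)) *
        (r ^ 2 * F (db (db b)) r) + (-(α*((1-γ)*(1-β)))) * (F b r) =
        (1-α)*r - (NN r - α * DD r) := by
      rw [hNN, hDD, hF0, hF1, hF2]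
      ring
    have htermT : ∀ m : ℕ, m ≠ n₀ → 0 ≤ ((1 - α*(γ+(1-γ)*β)) * (m:ℝ) + (γ - α*(γ*β)) *
        ((m:ℝ) * ((m:ℝ) - 1)) + (-(α*((1-γ)*(1-β))))) * (b m * r ^ m) := by
      intro m _
      rcases lt_or_ge m 2 with hm | hm
      · interval_cases m <;> simp [hb01.1, hb01.2]
      · have hmr : (2:ℝ) ≤ (m:ℝ) := by exact_mod_cast hm
        apply mul_nonneg _ (mul_nonneg (hb m) (pow_nonneg h0.le m))
        have hch : (1 - α*(γ+(1-γ)*β)) * (m:ℝ) + (γ - α*(γ*β)) * ((m:ℝ) * ((m:ℝ) - 1)) +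
            (-(α*((1-γ)*(1-β)))) =
            (1 + ((m:ℝ) - 1) * γ) * ((m:ℝ) - α - ((m:ℝ) - 1) * α * β) := by ring
        rw [hch]
        apply mul_nonneg
        · nlinarith
        · nlinarith [mul_nonneg (mul_nonneg (show (0:ℝ) ≤ (m:ℝ) - 1 by linarith) hα0)
            (show (0:ℝ) ≤ 1 - β by linarith),
            mul_nonneg (show (0:ℝ) ≤ (m:ℝ) by linarith) (show (0:ℝ) ≤ 1 - α by linarith)]
    have hle := le_hasSum hT n₀ htermT
    rw [hid] at hle
    have hba : b n₀ = a n₀ := by rw [hbdef]; exact if_pos hn₀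
    have hch₀ : (1 - α*(γ+(1-γ)*β)) * (n₀:ℝ) + (γ - α*(γ*β)) * ((n₀:ℝ) * ((n₀:ℝ) - 1)) +
        (-(α*((1-γ)*(1-β)))) =
        (1 + ((n₀:ℝ) - 1) * γ) * ((n₀:ℝ) - α - ((n₀:ℝ) - 1) * α * β) := by ring
    rw [hch₀, hba] at hle
    linarith
  -- positivity of the coefficient
  have hco_pos : 0 < (1 + ((n₀:ℝ) - 1) * γ) * ((n₀:ℝ) - α - ((n₀:ℝ) - 1) * α * β) := by
    apply mul_pos
    · nlinarith
    · nlinarith [mul_nonneg (mul_nonneg (show (0:ℝ) ≤ (n₀:ℝ) - 1 by linarith) hα0)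
        (show (0:ℝ) ≤ 1 - β by linarith)]
  -- take the limit r → 1⁻
  have hlim : (1 + ((n₀:ℝ) - 1) * γ) * ((n₀:ℝ) - α - ((n₀:ℝ) - 1) * α * β) * a n₀ ≤ 1 - α := by
    have t1 : Filter.Tendsto
        (fun r : ℝ => ((1 + ((n₀:ℝ) - 1) * γ) * ((n₀:ℝ) - α - ((n₀:ℝ) - 1) * α * β)) *
          (a n₀ * r ^ n₀))
        (nhdsWithin 1 (Set.Iio 1))
        (nhds (((1 + ((n₀:ℝ) - 1) * γ) * ((n₀:ℝ) - α - ((n₀:ℝ) - 1) * α * β)) *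
          (a n₀ * 1 ^ n₀))) :=
      ((continuous_const.mul (continuous_const.mul (continuous_pow n₀))).tendsto 1).mono_left
        nhdsWithin_le_nhds
    have t2 : Filter.Tendsto (fun r : ℝ => (1 - α) * r) (nhdsWithin 1 (Set.Iio 1))
        (nhds ((1 - α) * 1)) :=
      ((continuous_const.mul continuous_id).tendsto 1).mono_left nhdsWithin_le_nhds
    have hev : ∀ᶠ r in nhdsWithin 1 (Set.Iio 1),
        ((1 + ((n₀:ℝ) - 1) * γ) * ((n₀:ℝ) - α - ((n₀:ℝ) - 1) * α * β)) * (a n₀ * r ^ n₀) ≤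
          (1 - α) * r := by
      filter_upwards [Ioo_mem_nhdsLT_of_mem (show (1:ℝ) ∈ Set.Ioc (0:ℝ) 1 from
        ⟨zero_lt_one, le_rfl⟩)] with r hr
      exact hkey r hr.1 hr.2
    have := le_of_tendsto_of_tendsto t1 t2 hev
    rw [one_pow, mul_one] at this
    linarith
  rw [le_div_iff₀ hco_pos]
  calc a n₀ * ((1 + ((n₀:ℝ) - 1) * γ) * ((n₀:ℝ) - α - ((n₀:ℝ) - 1) * α * β))
      = (1 + ((n₀:ℝ) - 1) * γ) * ((n₀:ℝ) - α - ((n₀:ℝ) - 1) * α * β) * a n₀ := mul_comm _ _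
    _ ≤ 1 - α := hlim
end

section
/- If f(z) = z + Σ_{n≥2} a_n z^n is analytic on U and Σ_{n≥2} (n-α-(n-1)αβ)|a_n| ≤ 1-α, then Re[ z f'(z) / (β z f'(z) + (1-β) f(z)) ] > α for all z ∈ U. -/
open Complex

theorem stmt5 (α β : ℝ) (hα0 : 0 ≤ α) (hα1 : α < 1) (hβ0 : 0 ≤ β) (hβ1 : β < 1)
    (f : ℂ → ℂ) (a : ℕ → ℂ)
    (hf : ∀ z ∈ Metric.ball (0 : ℂ) 1,
      HasSum (fun n : ℕ => a (n + 2) * z ^ (n + 2)) (f z - z))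
    (hsum : Summable (fun n : ℕ =>
      (((n : ℝ) + 2) - α - ((n : ℝ) + 1) * α * β) * ‖a (n + 2)‖))
    (hle : ∑' n : ℕ, (((n : ℝ) + 2) - α - ((n : ℝ) + 1) * α * β) * ‖a (n + 2)‖ ≤ 1 - α) :
    ∀ z ∈ Metric.ball (0 : ℂ) 1, z ≠ 0 →
      α < ((z * deriv f z /
        ((β : ℂ) * z * deriv f z + (1 - (β : ℂ)) * f z)).re) := by
  intro z hz hz0
  have h1α : (0:ℝ) < 1 - α := by linarith
  set c : ℕ → ℝ := fun n => (((n : ℝ) + 2) - α - ((n : ℝ) + 1) * α * β) with hcdef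
  set A : ℕ → ℝ := fun n => ‖a (n + 2)‖ with hAdef
  have hA0 : ∀ n, 0 ≤ A n := fun n => norm_nonneg _
  have hc_ge : ∀ n : ℕ, ((n : ℝ) + 2) * (1 - α) ≤ c n := by
    intro n
    have hn : (0:ℝ) ≤ (n:ℝ) := Nat.cast_nonneg n
    simp only [hcdef]
    nlinarith [mul_nonneg (mul_nonneg hα0 (sub_nonneg.2 hβ1.le)) (by linarith : (0:ℝ) ≤ (n:ℝ)+1)]
  -- summable bound on (n+2) * A n
  have hu : Summable (fun n : ℕ => ((n : ℝ) + 2) * A n) := by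
    refine Summable.of_nonneg_of_le (fun n => by positivity) (fun n => ?_) (hsum.mul_left (1-α)⁻¹)
    rw [le_inv_mul_iff₀ h1α]
    have h1 := mul_le_mul_of_nonneg_right (hc_ge n) (hA0 n)
    have h2 : (((n : ℝ) + 2) - α - ((n : ℝ) + 1) * α * β) * ‖a (n + 2)‖ = c n * A n := rfl
    rw [h2]
    nlinarith [h1]
  -- the series and its termwise derivative
  set g : ℕ → ℂ → ℂ := fun n y => a (n + 2) * y ^ (n + 2) with hgdef
  set g' : ℕ → ℂ → ℂ := fun n y => ((n + 2 : ℕ) : ℂ) * (a (n + 2) * y ^ (n + 1)) with hg'def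
  have hgd : ∀ (n : ℕ) (y : ℂ), y ∈ Metric.ball (0:ℂ) 1 → HasDerivAt (g n) (g' n y) y := by
    intro n y _
    have h := (hasDerivAt_pow (n + 2) y).const_mul (a (n + 2))
    have h21 : n + 2 - 1 = n + 1 := rfl
    have he : g' n y = a (n + 2) * (((n + 2 : ℕ) : ℂ) * y ^ (n + 2 - 1)) := by
      rw [h21]; simp only [hg'def]; push_cast; ring
    rw [he]
    exact h
  have hgb : ∀ (n : ℕ) (y : ℂ), y ∈ Metric.ball (0:ℂ) 1 → ‖g' n y‖ ≤ ((n : ℝ) + 2) * A n := by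
    intro n y hy
    have hy1 : ‖y‖ < 1 := by simpa [Metric.mem_ball] using hy
    have hpow : ‖y‖ ^ (n + 1) ≤ 1 := pow_le_one₀ (norm_nonneg y) hy1.le
    have : ‖g' n y‖ = ((n : ℝ) + 2) * (A n * ‖y‖ ^ (n + 1)) := by
      simp only [hg'def, norm_mul, norm_pow, Complex.norm_natCast]
      push_cast
      ring
    rw [this]
    have := mul_le_mul_of_nonneg_left (mul_le_of_le_one_right (hA0 n) hpow)
      (by positivity : (0:ℝ) ≤ (n : ℝ) + 2)
    nlinarith [this]
  have hg0 : Summable (fun n => g n 0) := by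
    have : (fun n => g n 0) = fun _ => (0:ℂ) := by
      funext n; simp [hgdef]
    rw [this]; exact summable_zero
  have hD : HasDerivAt (fun y => ∑' n, g n y) (∑' n, g' n z) z :=
    hasDerivAt_tsum_of_isPreconnected hu Metric.isOpen_ball
      (convex_ball (0:ℂ) 1).isPreconnected hgd hgb (Metric.mem_ball_self one_pos) hg0 hz
  have hfe : Set.EqOn f (fun y => y + ∑' n, g n y) (Metric.ball (0:ℂ) 1) := by
    intro y hy
    have h := (hf y hy).tsum_eq
    simp only [hgdef]
    rw [h]; ring
  set D := deriv f z with hDdef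
  have hderiv : D = 1 + ∑' n, g' n z := by
    have h1 : HasDerivAt (fun y => y + ∑' n, g n y) (1 + ∑' n, g' n z) z :=
      (hasDerivAt_id z).add hD
    have h2 : HasDerivAt f (1 + ∑' n, g' n z) z :=
      h1.congr_of_eventuallyEq (Filter.eventuallyEq_of_mem (Metric.isOpen_ball.mem_nhds hz) hfe)
    rw [hDdef, h2.deriv]
  have hS'sum : Summable (fun n => g' n z) :=
    Summable.of_norm_bounded hu (fun n => hgb n z hz)
  have hS' : HasSum (fun n => g' n z) (D - 1) := by
    rw [hderiv]
    simpa using hS'sum.hasSum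
  -- HasSum for z * f'(z) - z and f z - z
  have hP : HasSum (fun n => ((n + 2 : ℕ) : ℂ) * (a (n + 2) * z ^ (n + 2))) (z * D - z) := by
    have h := hS'.mul_left z
    have heq : (fun n => z * g' n z) =
        fun n => ((n + 2 : ℕ) : ℂ) * (a (n + 2) * z ^ (n + 2)) := by
      funext n; simp only [hg'def]; ring
    rw [heq] at h
    rw [mul_sub, mul_one] at h
    exact h
  have hF : HasSum (fun n => a (n + 2) * z ^ (n + 2)) (f z - z) := hf z hz
  set Q : ℂ := (β : ℂ) * z * D + (1 - (β : ℂ)) * f z with hQdef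
  -- real coefficient sequences
  set q1 : ℕ → ℝ := fun n => (1 - β) * ((n : ℝ) + 1) with hq1def
  set q2 : ℕ → ℝ := fun n => (1 - (2*α - 1)*β) * ((n : ℝ) + 2) - (2*α - 1)*(1 - β) with hq2def
  have hq1 : ∀ n, 0 ≤ q1 n := by
    intro n; simp only [hq1def]
    have : (0:ℝ) ≤ (n:ℝ) := Nat.cast_nonneg n
    nlinarith
  have hq2 : ∀ n, 0 ≤ q2 n := by
    intro n; simp only [hq2def]
    have hn : (0:ℝ) ≤ (n:ℝ) := Nat.cast_nonneg n
    nlinarith [mul_nonneg (sub_nonneg.2 hα1.le) (sub_nonneg.2 hβ1.le),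
      mul_nonneg (mul_nonneg (sub_nonneg.2 hα1.le) hβ0) hn,
      mul_nonneg hα0 hβ0, mul_nonneg (sub_nonneg.2 hα1.le) hβ0]
  have hq12 : ∀ n, q1 n + q2 n = 2 * c n := by
    intro n; simp only [hq1def, hq2def, hcdef]; ring
  -- HasSum identities for the two key differences
  have hE1 : HasSum (fun n => ((q1 n : ℝ) : ℂ) * (a (n + 2) * z ^ (n + 2))) (z * D - Q) := by
    have h := (hP.sub hF).mul_left (1 - (β : ℂ))
    have heq : (fun n => (1 - (β:ℂ)) * (((n + 2 : ℕ) : ℂ) * (a (n + 2) * z ^ (n + 2)) -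
        a (n + 2) * z ^ (n + 2))) = fun n => ((q1 n : ℝ) : ℂ) * (a (n + 2) * z ^ (n + 2)) := by
      funext n; simp only [hq1def]; push_cast; ring
    rw [heq] at h
    have hs : (1 - (β:ℂ)) * ((z * D - z) - (f z - z)) = z * D - Q := by
      simp only [hQdef]; ring
    rwa [hs] at h
  have hE2 : HasSum (fun n => ((q2 n : ℝ) : ℂ) * (a (n + 2) * z ^ (n + 2)))
      (z * D - (2*(α:ℂ) - 1) * Q - (2*(1 - (α:ℂ))) * z) := by
    have h := (hP.mul_left (1 - (2*(α:ℂ) - 1) * (β:ℂ))).sub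
      (hF.mul_left ((2*(α:ℂ) - 1) * (1 - (β:ℂ))))
    have heq : (fun n => (1 - (2*(α:ℂ) - 1) * (β:ℂ)) * (((n + 2 : ℕ) : ℂ) *
        (a (n + 2) * z ^ (n + 2))) - (2*(α:ℂ) - 1) * (1 - (β:ℂ)) * (a (n + 2) * z ^ (n + 2)))
        = fun n => ((q2 n : ℝ) : ℂ) * (a (n + 2) * z ^ (n + 2)) := by
      funext n; simp only [hq2def]; push_cast; ring
    rw [heq] at h
    have hs : (1 - (2*(α:ℂ) - 1) * (β:ℂ)) * (z * D - z) -
        (2*(α:ℂ) - 1) * (1 - (β:ℂ)) * (f z - z)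
        = z * D - (2*(α:ℂ) - 1) * Q - (2*(1 - (α:ℂ))) * z := by
      simp only [hQdef]; ring
    rwa [hs] at h
  -- norms of the terms
  set r : ℝ := ‖z‖ with hrdef
  have hr0 : 0 < r := norm_pos_iff.2 hz0
  have hr1 : r < 1 := by simpa [Metric.mem_ball, hrdef] using hz
  have hn1 : ∀ n, ‖((q1 n : ℝ) : ℂ) * (a (n + 2) * z ^ (n + 2))‖
      = q1 n * (A n * r ^ (n + 2)) := by
    intro n
    rw [norm_mul, norm_mul, norm_pow, Complex.norm_real, Real.norm_eq_abs,
      _root_.abs_of_nonneg (hq1 n)]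
  have hn2 : ∀ n, ‖((q2 n : ℝ) : ℂ) * (a (n + 2) * z ^ (n + 2))‖
      = q2 n * (A n * r ^ (n + 2)) := by
    intro n
    rw [norm_mul, norm_mul, norm_pow, Complex.norm_real, Real.norm_eq_abs,
      _root_.abs_of_nonneg (hq2 n)]
  -- summability of the real term series
  have hdom : ∀ (q : ℕ → ℝ), (∀ n, 0 ≤ q n) → (∀ n, q n ≤ 2 * c n) →
      Summable (fun n => q n * (A n * r ^ (n + 2))) := by
    intro q hq0 hqle
    refine Summable.of_nonneg_of_le (fun n => mul_nonneg (hq0 n) (by positivity))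
      (fun n => ?_) (hsum.mul_left 2)
    have hpow : r ^ (n + 2) ≤ 1 := pow_le_one₀ hr0.le hr1.le
    have h1 : q n * (A n * r ^ (n + 2)) ≤ q n * A n :=
      mul_le_mul_of_nonneg_left (mul_le_of_le_one_right (hA0 n) hpow) (hq0 n)
    have h2 : q n * A n ≤ (2 * c n) * A n := mul_le_mul_of_nonneg_right (hqle n) (hA0 n)
    calc q n * (A n * r ^ (n + 2)) ≤ q n * A n := h1
      _ ≤ (2 * c n) * A n := h2
      _ = 2 * (c n * A n) := by ring
  have hq1le : ∀ n, q1 n ≤ 2 * c n := by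
    intro n; have := hq12 n; have := hq2 n; linarith
  have hq2le : ∀ n, q2 n ≤ 2 * c n := by
    intro n; have := hq12 n; have := hq1 n; linarith
  have hs1 : Summable (fun n => q1 n * (A n * r ^ (n + 2))) := hdom q1 hq1 hq1le
  have hs2 : Summable (fun n => q2 n * (A n * r ^ (n + 2))) := hdom q2 hq2 hq2le
  -- key bound on the sum of the two tsums
  have hT : (∑' n, q1 n * (A n * r ^ (n + 2))) + (∑' n, q2 n * (A n * r ^ (n + 2)))
      ≤ 2 * (1 - α) * r ^ 2 := by
    rw [← Summable.tsum_add hs1 hs2]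
    have hb : ∀ n, q1 n * (A n * r ^ (n + 2)) + q2 n * (A n * r ^ (n + 2))
        ≤ (2 * r ^ 2) * (c n * A n) := by
      intro n
      have hpow : r ^ (n + 2) ≤ r ^ 2 :=
        pow_le_pow_of_le_one hr0.le hr1.le (by omega)
      have h0 : q1 n * (A n * r ^ (n + 2)) + q2 n * (A n * r ^ (n + 2))
          = (2 * c n) * (A n * r ^ (n + 2)) := by rw [← hq12 n]; ring
      rw [h0]
      have hc0 : 0 ≤ c n := le_trans (by positivity) (hc_ge n)
      have := mul_le_mul_of_nonneg_left (mul_le_mul_of_nonneg_left hpow (hA0 n))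
        (by positivity : (0:ℝ) ≤ 2 * c n)
      nlinarith [this]
    calc (∑' n, (q1 n * (A n * r ^ (n + 2)) + q2 n * (A n * r ^ (n + 2))))
        ≤ ∑' n, (2 * r ^ 2) * (c n * A n) :=
          Summable.tsum_le_tsum hb (hs1.add hs2) (hsum.mul_left _)
      _ = (2 * r ^ 2) * ∑' n, c n * A n := tsum_mul_left
      _ ≤ (2 * r ^ 2) * (1 - α) := by
          have := mul_le_mul_of_nonneg_left hle (by positivity : (0:ℝ) ≤ 2 * r ^ 2)
          linarith
      _ = 2 * (1 - α) * r ^ 2 := by ring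
  -- norm bounds on the complex sums
  have hB1 : ‖z * D - Q‖ ≤ ∑' n, q1 n * (A n * r ^ (n + 2)) := by
    have hsn : Summable (fun n => ‖((q1 n : ℝ) : ℂ) * (a (n + 2) * z ^ (n + 2))‖) := by
      simp only [hn1]; exact hs1
    have h := norm_tsum_le_tsum_norm hsn
    rw [hE1.tsum_eq] at h
    simpa only [hn1] using h
  have hB2 : ‖z * D - (2*(α:ℂ) - 1) * Q - (2*(1 - (α:ℂ))) * z‖
      ≤ ∑' n, q2 n * (A n * r ^ (n + 2)) := by
    have hsn : Summable (fun n => ‖((q2 n : ℝ) : ℂ) * (a (n + 2) * z ^ (n + 2))‖) := by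
      simp only [hn2]; exact hs2
    have h := norm_tsum_le_tsum_norm hsn
    rw [hE2.tsum_eq] at h
    simpa only [hn2] using h
  -- key strict inequality
  have hnz : ‖(2*(1 - (α:ℂ))) * z‖ = 2 * (1 - α) * r := by
    rw [norm_mul]
    have : (2*(1 - (α:ℂ))) = ((2 * (1 - α) : ℝ) : ℂ) := by push_cast; ring
    rw [this, Complex.norm_real, Real.norm_eq_abs, _root_.abs_of_nonneg (by linarith)]
  have hrev : 2 * (1 - α) * r - ‖z * D - (2*(α:ℂ) - 1) * Q - (2*(1 - (α:ℂ))) * z‖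
      ≤ ‖z * D - (2*(α:ℂ) - 1) * Q‖ := by
    have h := norm_sub_norm_le ((2*(1 - (α:ℂ))) * z)
      (-(z * D - (2*(α:ℂ) - 1) * Q - (2*(1 - (α:ℂ))) * z))
    rw [norm_neg, sub_neg_eq_add] at h
    have he : (2*(1 - (α:ℂ))) * z + (z * D - (2*(α:ℂ) - 1) * Q - (2*(1 - (α:ℂ))) * z)
        = z * D - (2*(α:ℂ) - 1) * Q := by ring
    rw [he, hnz] at h
    exact h
  have hrr : 2 * (1 - α) * r ^ 2 < 2 * (1 - α) * r := by
    nlinarith [mul_pos (mul_pos h1α hr0) (sub_pos.2 hr1)]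
  have hkey : ‖z * D - Q‖ < ‖z * D - (2*(α:ℂ) - 1) * Q‖ := by
    calc ‖z * D - Q‖ ≤ ∑' n, q1 n * (A n * r ^ (n + 2)) := hB1
      _ < 2 * (1 - α) * r - ∑' n, q2 n * (A n * r ^ (n + 2)) := by linarith
      _ ≤ ‖z * D - (2*(α:ℂ) - 1) * Q‖ := by linarith [hrev, hB2]
  -- Q ≠ 0
  have hQ0 : Q ≠ 0 := by
    intro h
    rw [h] at hkey
    simp at hkey
  have hQpos : 0 < ‖Q‖ := norm_pos_iff.2 hQ0
  -- pass to w = z D / Q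
  set w : ℂ := z * D / Q with hwdef
  have hwQ : w * Q = z * D := div_mul_cancel₀ _ hQ0
  have hw : ‖w - 1‖ < ‖w - (2*(α:ℂ) - 1)‖ := by
    rw [← mul_lt_mul_iff_of_pos_right hQpos, ← norm_mul, ← norm_mul]
    have e1 : (w - 1) * Q = z * D - Q := by rw [sub_mul, hwQ]; ring
    have e2 : (w - (2*(α:ℂ) - 1)) * Q = z * D - (2*(α:ℂ) - 1) * Q := by
      rw [sub_mul, hwQ]
    rw [e1, e2]
    exact hkey
  -- conclude Re w > α
  have hsq : ‖w - 1‖ ^ 2 < ‖w - (2*(α:ℂ) - 1)‖ ^ 2 := by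
    exact pow_lt_pow_left₀ hw (norm_nonneg _) (by norm_num)
  have habs : ∀ u : ℂ, ‖u‖ ^ 2 = u.re ^ 2 + u.im ^ 2 := by
    intro u
    rw [Complex.sq_norm, Complex.normSq_apply]; ring
  have e1 := habs (w - 1)
  have e2 := habs (w - (2*(α:ℂ) - 1))
  simp only [Complex.sub_re, Complex.sub_im, Complex.one_re, Complex.one_im,
    Complex.mul_re, Complex.mul_im, Complex.ofReal_re, Complex.ofReal_im,
    Complex.re_ofNat, Complex.im_ofNat] at e1 e2
  rw [e1, e2] at hsq
  show α < w.re
  nlinarith [hsq, hα1]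
end

section
/- If f(z) = z + Σ_{n≥2} a_n z^n is analytic on U and Σ_{n≥2} n(n-α-(n-1)αβ)|a_n| ≤ 1-α, then Re[ (f'(z) + z f''(z)) / (f'(z) + β z f''(z)) ] > α for all z ∈ U. -/
open Complex

lemma aux_re (α : ℝ) (g h : ℂ) (hh : 0 < ‖h‖) (hlt : ‖g - h‖ < (1 - α) * ‖h‖) :
    α < (g / h).re := by
  have hne : h ≠ 0 := by intro h0; simp [h0] at hh
  have h1 : ‖g / h - 1‖ < 1 - α := by
    have : g / h - 1 = (g - h) / h := by field_simp
    rw [this, norm_div, div_lt_iff₀ hh]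
    exact hlt
  have h2 : |(g / h - 1).re| ≤ ‖g / h - 1‖ := Complex.abs_re_le_norm _
  have h3 := neg_abs_le ((g / h - 1).re)
  have h4 : (g / h - 1).re = (g / h).re - 1 := by simp
  linarith

theorem stmt6 (α β : ℝ) (hα0 : 0 ≤ α) (hα1 : α < 1) (hβ0 : 0 ≤ β) (hβ1 : β < 1)
    (f : ℂ → ℂ) (a : ℕ → ℂ)
    (hf : ∀ z ∈ Metric.ball (0 : ℂ) 1,
      HasSum (fun n : ℕ => a (n + 2) * z ^ (n + 2)) (f z - z))
    (hsum : Summable (fun n : ℕ =>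
      ((n : ℝ) + 2) * (((n : ℝ) + 2) - α - ((n : ℝ) + 1) * α * β) * ‖a (n + 2)‖))
    (hle : ∑' n : ℕ,
      ((n : ℝ) + 2) * (((n : ℝ) + 2) - α - ((n : ℝ) + 1) * α * β) * ‖a (n + 2)‖ ≤ 1 - α) :
    ∀ z ∈ Metric.ball (0 : ℂ) 1,
      α < (((deriv f z + z * deriv (deriv f) z) /
        (deriv f z + (β : ℂ) * z * deriv (deriv f) z)).re) := by
  set A : ℕ → ℝ := fun n => ‖a (n + 2)‖ with hA
  set c : ℕ → ℝ := fun n => ((n : ℝ) + 2) * (((n : ℝ) + 2) - α - ((n : ℝ) + 1) * α * β)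
    with hcdef
  have hA0 : ∀ n, 0 ≤ A n := fun n => norm_nonneg _
  -- coefficient lower bounds
  have hclow : ∀ n : ℕ, ((n : ℝ) + 2) * ((n : ℝ) + 1) * (1 - β) ≤ c n := by
    intro n
    have nn : (0 : ℝ) ≤ (n : ℝ) := Nat.cast_nonneg n
    have key : c n - ((n : ℝ) + 2) * ((n : ℝ) + 1) * (1 - β)
        = ((n : ℝ) + 2) * (1 - α) * (1 + ((n : ℝ) + 1) * β) := by
      simp only [hcdef]; ring
    nlinarith [mul_nonneg (mul_nonneg (by linarith : (0:ℝ) ≤ (n:ℝ)+2) (by linarith : (0:ℝ) ≤ 1-α))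
      (by nlinarith : (0:ℝ) ≤ 1 + ((n:ℝ)+1)*β)]
  have hc0 : ∀ n, 0 ≤ c n := by
    intro n
    have nn : (0 : ℝ) ≤ (n : ℝ) := Nat.cast_nonneg n
    have h1 : (0:ℝ) ≤ ((n : ℝ) + 2) * ((n : ℝ) + 1) * (1 - β) :=
      mul_nonneg (mul_nonneg (by linarith) (by linarith)) (by linarith)
    linarith [hclow n]
  -- summability of (n+2)(n+1) A n
  have hsum2 : Summable (fun n : ℕ => ((n : ℝ) + 2) * ((n : ℝ) + 1) * A n) := by
    apply Summable.of_nonneg_of_le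
      (fun n => by positivity)
      (fun n => ?_) (hsum.mul_left (1 / (1 - β)))
    have h1 : ((n : ℝ) + 2) * ((n : ℝ) + 1) * (1 - β) * A n ≤ c n * A n :=
      mul_le_mul_of_nonneg_right (hclow n) (hA0 n)
    rw [hA] at h1 ⊢
    have hb : (0:ℝ) < 1 - β := by linarith
    rw [div_mul_eq_mul_div, le_div_iff₀ hb, one_mul]
    calc ((n : ℝ) + 2) * ((n : ℝ) + 1) * ‖a (n+2)‖ * (1 - β)
        = ((n : ℝ) + 2) * ((n : ℝ) + 1) * (1 - β) * ‖a (n+2)‖ := by ring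
      _ ≤ c n * ‖a (n+2)‖ := h1
  have hsum1 : Summable (fun n : ℕ => ((n : ℝ) + 2) * A n) := by
    apply Summable.of_nonneg_of_le (fun n => by positivity) (fun n => ?_) hsum2
    have nn : (0 : ℝ) ≤ (n : ℝ) := Nat.cast_nonneg n
    have h1 : (0:ℝ) ≤ ((n : ℝ) + 2) * (n : ℝ) * A n :=
      mul_nonneg (mul_nonneg (by linarith) nn) (hA0 n)
    nlinarith
  -- term functions and their derivatives
  set F : ℕ → ℂ → ℂ := fun n w => a (n + 2) * w ^ (n + 2) with hF
  set F1 : ℕ → ℂ → ℂ := fun n w => a (n + 2) * (((n : ℂ) + 2) * w ^ (n + 1)) with hF1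
  set F2 : ℕ → ℂ → ℂ := fun n w => a (n + 2) * (((n : ℂ) + 2) * (((n : ℂ) + 1) * w ^ n))
    with hF2
  have hnc : ∀ n : ℕ, ‖((n : ℂ) + 2)‖ = (n : ℝ) + 2 := by
    intro n
    rw [show ((n : ℂ) + 2) = ((n + 2 : ℕ) : ℂ) by push_cast; ring, Complex.norm_natCast]
    push_cast; ring
  have hnc1 : ∀ n : ℕ, ‖((n : ℂ) + 1)‖ = (n : ℝ) + 1 := by
    intro n
    rw [show ((n : ℂ) + 1) = ((n + 1 : ℕ) : ℂ) by push_cast; ring, Complex.norm_natCast]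
    push_cast; ring
  have hdF : ∀ (n : ℕ) (y : ℂ), HasDerivAt (F n) (F1 n y) y := by
    intro n y
    have h := (hasDerivAt_pow (n + 2) y).const_mul (a (n + 2))
    refine h.congr_deriv ?_
    simp only [hF1]; push_cast; ring
  have hdF1 : ∀ (n : ℕ) (y : ℂ), HasDerivAt (F1 n) (F2 n y) y := by
    intro n y
    have h := (hasDerivAt_pow (n + 1) y).const_mul (a (n + 2) * ((n : ℂ) + 2))
    have hfun : (fun w : ℂ => a (n + 2) * ((n : ℂ) + 2) * w ^ (n + 1)) = F1 n := by
      funext w; simp [hF1]; ring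
    rw [hfun] at h
    refine h.congr_deriv ?_
    simp only [hF2]; push_cast; ring
  -- bounds on the ball
  have hbound1 : ∀ (n : ℕ) (y : ℂ), y ∈ Metric.ball (0:ℂ) 1 →
      ‖F1 n y‖ ≤ ((n : ℝ) + 2) * A n := by
    intro n y hy
    have hy1 : ‖y‖ < 1 := mem_ball_zero_iff.mp hy
    have e : ‖F1 n y‖ = A n * (((n : ℝ) + 2) * ‖y‖ ^ (n + 1)) := by
      simp [hF1, norm_mul, norm_pow, hnc n, hA]
    rw [e]
    have h1 : ‖y‖ ^ (n + 1) ≤ 1 := pow_le_one₀ (norm_nonneg y) hy1.le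
    calc A n * (((n:ℝ)+2) * ‖y‖^(n+1)) = (A n * ((n:ℝ)+2)) * ‖y‖^(n+1) := by ring
      _ ≤ (A n * ((n:ℝ)+2)) * 1 := mul_le_mul_of_nonneg_left h1
          (mul_nonneg (hA0 n) (by positivity))
      _ = ((n:ℝ)+2) * A n := by ring
  have hbound2 : ∀ (n : ℕ) (y : ℂ), y ∈ Metric.ball (0:ℂ) 1 →
      ‖F2 n y‖ ≤ ((n : ℝ) + 2) * ((n : ℝ) + 1) * A n := by
    intro n y hy
    have hy1 : ‖y‖ < 1 := mem_ball_zero_iff.mp hy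
    have e : ‖F2 n y‖ = A n * (((n : ℝ) + 2) * (((n : ℝ) + 1) * ‖y‖ ^ n)) := by
      simp [hF2, norm_mul, norm_pow, hnc n, hnc1 n, hA]
    rw [e]
    have h1 : ‖y‖ ^ n ≤ 1 := pow_le_one₀ (norm_nonneg y) hy1.le
    calc A n * (((n:ℝ)+2) * (((n:ℝ)+1) * ‖y‖^n))
        = (A n * (((n:ℝ)+2) * ((n:ℝ)+1))) * ‖y‖^n := by ring
      _ ≤ (A n * (((n:ℝ)+2) * ((n:ℝ)+1))) * 1 := mul_le_mul_of_nonneg_left h1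
          (mul_nonneg (hA0 n) (by positivity))
      _ = ((n:ℝ)+2) * ((n:ℝ)+1) * A n := by ring
  have h0mem : (0:ℂ) ∈ Metric.ball (0:ℂ) 1 := by simp
  have hsum0 : Summable (fun n => F n (0:ℂ)) := by
    have e : (fun n => F n (0:ℂ)) = fun _ => (0:ℂ) := by funext n; simp [hF]
    rw [e]; exact summable_zero
  have hsum0' : Summable (fun n => F1 n (0:ℂ)) := by
    have e : (fun n => F1 n (0:ℂ)) = fun _ => (0:ℂ) := by funext n; simp [hF1]
    rw [e]; exact summable_zero
  set D1 : ℂ → ℂ := fun w => ∑' n, F1 n w with hD1def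
  set D2 : ℂ → ℂ := fun w => ∑' n, F2 n w with hD2def
  have hDS : ∀ y ∈ Metric.ball (0:ℂ) 1, HasDerivAt (fun w => ∑' n, F n w) (D1 y) y :=
    fun y hy => hasDerivAt_tsum_of_isPreconnected hsum1 Metric.isOpen_ball
      (convex_ball _ _).isPreconnected (fun n x _ => hdF n x) hbound1 h0mem hsum0 hy
  have hDS2 : ∀ y ∈ Metric.ball (0:ℂ) 1, HasDerivAt D1 (D2 y) y :=
    fun y hy => hasDerivAt_tsum_of_isPreconnected hsum2 Metric.isOpen_ball
      (convex_ball _ _).isPreconnected (fun n x _ => hdF1 n x) hbound2 h0mem hsum0' hy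
  -- identify f and its derivatives on the ball
  have hfeq : ∀ w ∈ Metric.ball (0:ℂ) 1, f w = w + ∑' n, F n w := by
    intro w hw
    have h := (hf w hw).tsum_eq
    rw [show (∑' n, F n w) = f w - w from h]; ring
  have hfd : ∀ w ∈ Metric.ball (0:ℂ) 1, HasDerivAt f (1 + D1 w) w := by
    intro w hw
    have h1 : HasDerivAt (fun x : ℂ => x + ∑' n, F n x) (1 + D1 w) w :=
      (hasDerivAt_id w).add (hDS w hw)
    apply h1.congr_of_eventuallyEq
    filter_upwards [Metric.isOpen_ball.mem_nhds hw] with x hx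
    exact hfeq x hx
  intro z hz
  have hrz : ‖z‖ < 1 := mem_ball_zero_iff.mp hz
  have hdf1 : deriv f z = 1 + D1 z := (hfd z hz).deriv
  have hfd2 : HasDerivAt (deriv f) (D2 z) z := by
    have h1 : HasDerivAt (fun w => 1 + D1 w) (D2 z) z := (hDS2 z hz).const_add 1
    apply h1.congr_of_eventuallyEq
    filter_upwards [Metric.isOpen_ball.mem_nhds hz] with x hx
    exact (hfd x hx).deriv
  have hdf2 : deriv (deriv f) z = D2 z := hfd2.deriv
  -- numeric bounds
  set r := ‖z‖ with hrdef
  have hr0 : 0 ≤ r := norm_nonneg z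
  have hn1 : ∀ n : ℕ, ‖F1 n z‖ = ((n:ℝ)+2) * A n * r^(n+1) := by
    intro n; rw [hrdef]; simp [hF1, norm_mul, norm_pow, hnc n, hA]; ring
  have hn2 : ∀ n : ℕ, ‖F2 n z‖ = ((n:ℝ)+2) * ((n:ℝ)+1) * A n * r^n := by
    intro n; rw [hrdef]; simp [hF2, norm_mul, norm_pow, hnc n, hnc1 n, hA]; ring
  have hrpow : ∀ k : ℕ, r ^ (k+1) ≤ r := by
    intro k
    calc r^(k+1) = r * r^k := by ring
      _ ≤ r * 1 := mul_le_mul_of_nonneg_left (pow_le_one₀ hr0 hrz.le) hr0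
      _ = r := by ring
  have sn1 : Summable (fun n => ‖F1 n z‖) := by
    apply Summable.of_nonneg_of_le (fun n => norm_nonneg _) (fun n => ?_) hsum1
    rw [hn1 n]
    have h1 : r ^ (n+1) ≤ 1 := pow_le_one₀ hr0 hrz.le
    calc ((n:ℝ)+2) * A n * r^(n+1) ≤ ((n:ℝ)+2) * A n * 1 :=
          mul_le_mul_of_nonneg_left h1 (mul_nonneg (by positivity) (hA0 n))
      _ = ((n:ℝ)+2) * A n := by ring
  have sn2 : Summable (fun n => ‖F2 n z‖) := by
    apply Summable.of_nonneg_of_le (fun n => norm_nonneg _) (fun n => ?_) hsum2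
    rw [hn2 n]
    have h1 : r ^ n ≤ 1 := pow_le_one₀ hr0 hrz.le
    calc ((n:ℝ)+2) * ((n:ℝ)+1) * A n * r^n ≤ ((n:ℝ)+2) * ((n:ℝ)+1) * A n * 1 :=
          mul_le_mul_of_nonneg_left h1 (mul_nonneg (by positivity) (hA0 n))
      _ = ((n:ℝ)+2) * ((n:ℝ)+1) * A n := by ring
  set T1 : ℝ := ∑' n, ‖F1 n z‖ with hT1def
  set T2 : ℝ := ∑' n, ‖F2 n z‖ with hT2def
  have hT1 : 0 ≤ T1 := tsum_nonneg fun n => norm_nonneg _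
  have hT2 : 0 ≤ T2 := tsum_nonneg fun n => norm_nonneg _
  -- the key coefficient inequality
  have hsum' : Summable (fun n => c n * A n) := hsum
  have hle' : ∑' n, c n * A n ≤ 1 - α := hle
  have key : (1-α)*T1 + (1-α*β)*(r*T2) ≤ r*(1-α) := by
    have e1 : (1-α)*T1 = ∑' n, (1-α) * ‖F1 n z‖ := tsum_mul_left.symm
    have e2 : (1-α*β)*(r*T2) = ∑' n, (1-α*β)*(r*‖F2 n z‖) := by
      rw [← tsum_mul_left, ← tsum_mul_left]
    rw [e1, e2, ← Summable.tsum_add (sn1.mul_left _) ((sn2.mul_left r).mul_left _)]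
    have hterm : ∀ n, (1-α)*‖F1 n z‖ + (1-α*β)*(r*‖F2 n z‖) ≤ (c n * A n) * r := by
      intro n
      rw [hn1 n, hn2 n]
      have he : (1-α)*(((n:ℝ)+2)*A n*r^(n+1)) + (1-α*β)*(r*(((n:ℝ)+2)*((n:ℝ)+1)*A n*r^n))
          = c n * A n * r^(n+1) := by simp only [hcdef]; ring
      rw [he]
      exact mul_le_mul_of_nonneg_left (hrpow n) (mul_nonneg (hc0 n) (hA0 n))
    calc ∑' n, ((1-α)*‖F1 n z‖ + (1-α*β)*(r*‖F2 n z‖))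
        ≤ ∑' n, (c n * A n) * r :=
          Summable.tsum_le_tsum hterm ((sn1.mul_left _).add ((sn2.mul_left r).mul_left _))
            (hsum'.mul_right r)
      _ = (∑' n, c n * A n) * r := tsum_mul_right
      _ ≤ (1-α) * r := mul_le_mul_of_nonneg_right hle' hr0
      _ = r * (1-α) := by ring
  -- assemble
  set u : ℂ := D1 z with hudef
  set v : ℂ := z * D2 z with hvdef
  have hu : ‖u‖ ≤ T1 := norm_tsum_le_tsum_norm sn1
  have hv : ‖v‖ ≤ r * T2 := by
    rw [hvdef, _root_.norm_mul]
    exact mul_le_mul_of_nonneg_left (norm_tsum_le_tsum_norm sn2) hr0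
  have hrw2 : deriv f z + z * deriv (deriv f) z = 1 + u + v := by
    rw [hdf1, hdf2, hudef, hvdef]
  have hrw : deriv f z + (β:ℂ) * z * deriv (deriv f) z = 1 + u + (β:ℂ)*v := by
    rw [hdf1, hdf2, hudef, hvdef]; ring
  rw [hrw2, hrw]
  have hβv : ‖(β:ℂ)*v‖ = β * ‖v‖ := by
    rw [_root_.norm_mul, Complex.norm_real, Real.norm_of_nonneg hβ0]
  have hlow : 1 - T1 - β*(r*T2) ≤ ‖1 + u + (β:ℂ)*v‖ := by
    have h1 : ‖(1:ℂ)‖ ≤ ‖1 + u + (β:ℂ)*v‖ + ‖u‖ + ‖(β:ℂ)*v‖ := by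
      calc ‖(1:ℂ)‖ = ‖(1 + u + (β:ℂ)*v) - u - (β:ℂ)*v‖ := by
            rw [show (1 + u + (β:ℂ)*v) - u - (β:ℂ)*v = 1 by ring]
        _ ≤ ‖(1 + u + (β:ℂ)*v) - u‖ + ‖(β:ℂ)*v‖ := norm_sub_le _ _
        _ ≤ ‖1 + u + (β:ℂ)*v‖ + ‖u‖ + ‖(β:ℂ)*v‖ := by
            linarith [norm_sub_le (1 + u + (β:ℂ)*v) u]
    rw [norm_one, hβv] at h1
    have hβv' : β*‖v‖ ≤ β*(r*T2) := mul_le_mul_of_nonneg_left hv hβ0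
    linarith
  have hX : (1-α)*(T1 + β*(r*T2)) ≤ (1-α)*r := by nlinarith [mul_nonneg hr0 hT2]
  have hkey2 : T1 + β*(r*T2) ≤ r :=
    le_of_mul_le_mul_left (by linarith) (by linarith : (0:ℝ) < 1-α)
  have hpos : 0 < ‖1 + u + (β:ℂ)*v‖ := by linarith
  apply aux_re _ _ _ hpos
  have e : (1 + u + v) - (1 + u + (β:ℂ)*v) = (1-(β:ℂ))*v := by ring
  rw [e, _root_.norm_mul]
  have e2 : ‖(1-(β:ℂ))‖ = 1-β := by
    rw [show (1-(β:ℂ)) = ((1-β : ℝ) : ℂ) by push_cast; ring, Complex.norm_real,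
      Real.norm_of_nonneg (by linarith : (0:ℝ) ≤ 1-β)]
  rw [e2]
  have hstrict : (1-β)*(r*T2) < (1-α)*(1 - T1 - β*(r*T2)) := by
    nlinarith [key, mul_pos (by linarith : (0:ℝ) < 1-α) (by linarith : (0:ℝ) < 1-r),
      mul_nonneg hr0 hT2]
  have hmono : (1-α)*(1 - T1 - β*(r*T2)) ≤ (1-α)*‖1 + u + (β:ℂ)*v‖ :=
    mul_le_mul_of_nonneg_left hlow (by linarith)
  have hvb : (1-β)*‖v‖ ≤ (1-β)*(r*T2) := mul_le_mul_of_nonneg_left hv (by linarith)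
  linarith
end
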